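/- arXiv:2603.29371 — 10 statements merged into one kernel-verified Lean document; each statement's English description precedes it below -/
import Mathlib

section
/- Let f : (a,b) → ℝ, with (a,b) ⊂ (0,∞), be a C³ solution of f''/(1+(f')²) = (r − (n−1)/r)·f' − f − λ·√(1+(f')²) which is not constant. If f''(c) = 0 at some c ∈ (a,b), then f'(c)·f'''(c) > 0. -/
lemma vanish_of_selfbound (u : ℝ → ℝ) (K A B c : ℝ) (hA : A ≤ c) (hB : c ≤ B)
    (hcont : ContinuousOn u (Set.Icc A B))
    (hnn : ∀ x ∈ Set.Icc A B, 0 ≤ u x)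
    (hd : ∀ x ∈ Set.Ioo A B, ∃ d, HasDerivAt u d x ∧ |d| ≤ K * u x)
    (hc0 : u c = 0) : ∀ x ∈ Set.Icc A B, u x = 0 := by
  have hexpcont : ∀ s : ℝ, Continuous fun t : ℝ => Real.exp (s * t) := fun s =>
    Real.continuous_exp.comp (continuous_const.mul continuous_id)
  have hexpD : ∀ (s x : ℝ), HasDerivAt (fun t : ℝ => Real.exp (s * t)) (Real.exp (s * x) * (s * 1)) x :=
    fun s x => ((hasDerivAt_id x).const_mul s).exp
  have hforward : ∀ x ∈ Set.Icc A B, c ≤ x → u x = 0 := by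
    have hwanti : AntitoneOn (fun t => Real.exp (-K * t) * u t) (Set.Icc A B) := by
      apply antitoneOn_of_deriv_nonpos (convex_Icc A B)
      · exact ((hexpcont (-K)).continuousOn).mul hcont
      · intro x hx
        rw [interior_Icc] at hx
        obtain ⟨d, hdd, _⟩ := hd x hx
        exact ((hexpD (-K) x).mul hdd).differentiableAt.differentiableWithinAt
      · intro x hx
        rw [interior_Icc] at hx
        obtain ⟨d, hdd, hdle⟩ := hd x hx
        rw [HasDerivAt.deriv (f := fun t => Real.exp (-K * t) * u t) ((hexpD (-K) x).mul hdd)]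
        have h1 := Real.exp_pos (-K * x)
        have h2 := hnn x (Set.Ioo_subset_Icc_self hx)
        have h3 := (abs_le.mp hdle).2
        nlinarith [mul_le_mul_of_nonneg_left h3 h1.le]
    intro x hx hcx
    have h1 : Real.exp (-K * x) * u x ≤ Real.exp (-K * c) * u c :=
      hwanti ⟨hA, hB⟩ hx hcx
    have h4 := Real.exp_pos (-K * x)
    have h5 := hnn x hx
    rw [hc0, mul_zero] at h1
    nlinarith
  have hbackward : ∀ x ∈ Set.Icc A B, x ≤ c → u x = 0 := by
    have hwmono : MonotoneOn (fun t => Real.exp (K * t) * u t) (Set.Icc A B) := by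
      apply monotoneOn_of_deriv_nonneg (convex_Icc A B)
      · exact ((hexpcont K).continuousOn).mul hcont
      · intro x hx
        rw [interior_Icc] at hx
        obtain ⟨d, hdd, _⟩ := hd x hx
        exact ((hexpD K x).mul hdd).differentiableAt.differentiableWithinAt
      · intro x hx
        rw [interior_Icc] at hx
        obtain ⟨d, hdd, hdle⟩ := hd x hx
        rw [HasDerivAt.deriv (f := fun t => Real.exp (K * t) * u t) ((hexpD K x).mul hdd)]
        have h1 := Real.exp_pos (K * x)
        have h2 := hnn x (Set.Ioo_subset_Icc_self hx)
        have h3 := (abs_le.mp hdle).1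
        nlinarith [mul_le_mul_of_nonneg_left h3 h1.le]
    intro x hx hxc
    have h1 : Real.exp (K * x) * u x ≤ Real.exp (K * c) * u c :=
      hwmono hx ⟨hA, hB⟩ hxc
    have h4 := Real.exp_pos (K * x)
    have h5 := hnn x hx
    rw [hc0, mul_zero] at h1
    nlinarith
  intro x hx
  rcases le_total c x with h | h
  · exact hforward x hx h
  · exact hbackward x hx h

lemma aux_sq1 (y : ℝ) : (1:ℝ) ≤ Real.sqrt (1 + y ^ 2) := by
  nlinarith [Real.sq_sqrt (show (0:ℝ) ≤ 1 + y ^ 2 by positivity),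
    Real.sqrt_nonneg (1 + y ^ 2), sq_nonneg y]

lemma aux_sq2 (y : ℝ) : Real.sqrt (1 + y ^ 2) ≤ 1 + y ^ 2 / 2 := by
  rw [show (1 + y^2/2 : ℝ) = Real.sqrt ((1 + y^2/2)^2) from (Real.sqrt_sq (by positivity)).symm]
  exact Real.sqrt_le_sqrt (by nlinarith [sq_nonneg y, sq_nonneg (y^2)])

lemma aux_absH (q G F S lam M Cc : ℝ) (hq : |q| ≤ Cc) (hG : |G| ≤ M)
    (hM1 : 1 ≤ M) (hCc0 : 0 ≤ Cc) (hS1 : 1 ≤ S) (hS2 : S ≤ 1 + G ^ 2 / 2) :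
    |(1 + G ^ 2) * (q * G - F - lam * (S - 1))| ≤
      (1 + M ^ 2) * (Cc + 1 + |lam| * (M / 2)) * (|F| + |G|) := by
  have hqG : |q * G| ≤ Cc * |G| := by
    rw [abs_mul]; exact mul_le_mul_of_nonneg_right hq (abs_nonneg _)
  have e2 : S - 1 ≤ M / 2 * |G| := by
    have : G ^ 2 ≤ M * |G| := by nlinarith [sq_abs G, abs_nonneg G]
    linarith
  have e3 : |lam * (S - 1)| ≤ |lam| * (M / 2 * |G|) := by
    rw [abs_mul]
    apply mul_le_mul_of_nonneg_left _ (abs_nonneg lam)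
    rw [abs_of_nonneg (by linarith : (0:ℝ) ≤ S - 1)]
    exact e2
  have habsE : |q * G - F - lam * (S - 1)| ≤ Cc * |G| + |F| + |lam| * (M / 2 * |G|) := by
    calc |q * G - F - lam * (S - 1)| ≤ |q * G - F| + |lam * (S - 1)| := abs_sub _ _
      _ ≤ |q * G| + |F| + |lam * (S - 1)| := by linarith [abs_sub (q * G) F]
      _ ≤ Cc * |G| + |F| + |lam| * (M / 2 * |G|) := by linarith
  have hG2M : 1 + G ^ 2 ≤ 1 + M ^ 2 := by nlinarith [sq_abs G, abs_nonneg G]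
  calc |(1 + G ^ 2) * (q * G - F - lam * (S - 1))|
      = (1 + G ^ 2) * |q * G - F - lam * (S - 1)| := by
        rw [abs_mul, abs_of_pos (show (0:ℝ) < 1 + G ^ 2 by positivity)]
    _ ≤ (1 + M ^ 2) * |q * G - F - lam * (S - 1)| :=
        mul_le_mul_of_nonneg_right hG2M (abs_nonneg _)
    _ ≤ (1 + M ^ 2) * ((Cc + 1 + |lam| * (M / 2)) * (|F| + |G|)) := by
        apply mul_le_mul_of_nonneg_left _ (by positivity)
        refine habsE.trans ?_
        nlinarith [mul_nonneg hCc0 (abs_nonneg F), abs_nonneg G, abs_nonneg F,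
          mul_nonneg (mul_nonneg (abs_nonneg lam) (show (0:ℝ) ≤ M/2 by linarith)) (abs_nonneg F)]
    _ = (1 + M ^ 2) * (Cc + 1 + |lam| * (M / 2)) * (|F| + |G|) := by ring

lemma aux_absd (F G H K₁ : ℝ) (hK₁0 : 0 ≤ K₁) (habsH : |H| ≤ K₁ * (|F| + |G|)) :
    |2 * F * G + 2 * G * H| ≤ (1 + 3 * K₁) * (F ^ 2 + G ^ 2) := by
  have hGH : |G * H| ≤ |G| * (K₁ * (|F| + |G|)) := by
    rw [abs_mul]; exact mul_le_mul_of_nonneg_left habsH (abs_nonneg _)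
  have hFG : |F * G| = |F| * |G| := abs_mul _ _
  have h1 := le_abs_self (F * G); have h2 := neg_abs_le (F * G)
  have h3 := le_abs_self (G * H); have h4 := neg_abs_le (G * H)
  rw [abs_le]
  constructor <;>
    nlinarith [sq_nonneg (|F| - |G|), sq_abs F, sq_abs G,
      mul_nonneg hK₁0 (sq_nonneg (|F| - |G|)), mul_nonneg hK₁0 (sq_nonneg (|F| + |G|)),
      abs_nonneg F, abs_nonneg G]

/-- For a non-constant C³ solution of
`f''/(1+(f')²) = (r − (n−1)/r)f' − f − λ√(1+(f')²)` on `(a,b) ⊂ (0,∞)`,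
if `f''(c) = 0` then `f'(c)·f'''(c) > 0`. -/
theorem stmt_4 (n : ℕ) (hn : 2 ≤ n) (lam a b c : ℝ)
    (ha : 0 < a) (hab : a < b) (hc : c ∈ Set.Ioo a b)
    (f : ℝ → ℝ)
    (hreg : ∀ r ∈ Set.Ioo a b, DifferentiableAt ℝ f r ∧ DifferentiableAt ℝ (deriv f) r ∧
      DifferentiableAt ℝ (deriv (deriv f)) r)
    (hode : ∀ r ∈ Set.Ioo a b,
      deriv (deriv f) r / (1 + (deriv f r) ^ 2) =
        (r - ((n : ℝ) - 1) / r) * deriv f r - f r - lam * Real.sqrt (1 + (deriv f r) ^ 2))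
    (hnc : ¬ ∃ k : ℝ, ∀ r ∈ Set.Ioo a b, f r = k)
    (h2 : deriv (deriv f) c = 0) :
    0 < deriv f c * deriv (deriv (deriv f)) c := by
  have hcpos : 0 < c := ha.trans hc.1
  have hn1 : (1:ℝ) ≤ (n:ℝ) - 1 := by
    have : (2:ℝ) ≤ (n:ℝ) := by exact_mod_cast hn
    linarith
  have hodem : ∀ r ∈ Set.Ioo a b, deriv (deriv f) r =
      (1 + (deriv f r) ^ 2) * ((r - ((n : ℝ) - 1) / r) * deriv f r - f r
        - lam * Real.sqrt (1 + (deriv f r) ^ 2)) := by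
    intro r hr
    have hpos : (0:ℝ) < 1 + (deriv f r) ^ 2 := by positivity
    have h := hode r hr
    rw [div_eq_iff hpos.ne'] at h
    rw [h]; ring
  -- Step 1: deriv f c ≠ 0
  have hp : deriv f c ≠ 0 := by
    intro hp0
    apply hnc
    refine ⟨-lam, fun r₀ hr₀ => ?_⟩
    have hfc : f c = -lam := by
      have h := hode c hc
      rw [h2, hp0] at h
      norm_num [Real.sqrt_one] at h
      linarith
    obtain ⟨A, hAa, hAc, hAr⟩ : ∃ A, a < A ∧ A ≤ c ∧ A ≤ r₀ := by
      have h1 := lt_min hc.1 hr₀.1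
      refine ⟨(a + min c r₀) / 2, by linarith, ?_, ?_⟩
      · exact le_trans (by linarith) (min_le_left c r₀)
      · exact le_trans (by linarith) (min_le_right c r₀)
    obtain ⟨B, hBb, hcB, hrB⟩ : ∃ B, B < b ∧ c ≤ B ∧ r₀ ≤ B := by
      have h1 := max_lt hc.2 hr₀.2
      refine ⟨(max c r₀ + b) / 2, by linarith, ?_, ?_⟩
      · exact le_trans (le_max_left c r₀) (by linarith)
      · exact le_trans (le_max_right c r₀) (by linarith)
    have hApos : 0 < A := ha.trans hAa
    have hsub : Set.Icc A B ⊆ Set.Ioo a b := fun x hx => ⟨hAa.trans_le hx.1, hx.2.trans_lt hBb⟩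
    have hsubo : Set.Ioo A B ⊆ Set.Ioo a b := fun x hx => ⟨hAa.trans hx.1, hx.2.trans hBb⟩
    have hcf : ContinuousOn f (Set.Icc A B) := fun x hx =>
      ((hreg x (hsub hx)).1).continuousAt.continuousWithinAt
    have hcg : ContinuousOn (deriv f) (Set.Icc A B) := fun x hx =>
      ((hreg x (hsub hx)).2.1).continuousAt.continuousWithinAt
    obtain ⟨M, hM1, hFM, hGM⟩ : ∃ M, 1 ≤ M ∧ (∀ x ∈ Set.Icc A B, |f x + lam| ≤ M) ∧
        (∀ x ∈ Set.Icc A B, |deriv f x| ≤ M) := by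
      obtain ⟨M₀, hM₀⟩ := isCompact_Icc.exists_bound_of_continuousOn
        (hcf.add continuousOn_const : ContinuousOn (fun x => f x + lam) (Set.Icc A B))
      obtain ⟨M₁, hM₁⟩ := isCompact_Icc.exists_bound_of_continuousOn hcg
      have n0 := abs_nonneg M₀; have n1 := abs_nonneg M₁
      have l0 := le_abs_self M₀; have l1 := le_abs_self M₁
      refine ⟨|M₀| + |M₁| + 1, by linarith, fun x hx => ?_, fun x hx => ?_⟩
      · have h := hM₀ x hx
        simp only [Real.norm_eq_abs, Pi.add_apply] at h
        linarith
      · have h := hM₁ x hx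
        rw [Real.norm_eq_abs] at h
        linarith
    obtain ⟨Cc, hCc0, hcoef⟩ : ∃ Cc, 0 ≤ Cc ∧
        ∀ x ∈ Set.Icc A B, |x - ((n:ℝ) - 1) / x| ≤ Cc := by
      have hBpos : (0:ℝ) < B := hApos.trans_le (hAc.trans hcB)
      have hq0 : 0 ≤ ((n:ℝ) - 1) / A := div_nonneg (by linarith) hApos.le
      refine ⟨B + ((n:ℝ) - 1) / A, by linarith, fun x hx => ?_⟩
      have hx0 : 0 < x := hApos.trans_le hx.1
      have hq1 : 0 ≤ ((n:ℝ) - 1) / x := div_nonneg (by linarith) hx0.le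
      have hq2 : ((n:ℝ) - 1) / x ≤ ((n:ℝ) - 1) / A :=
        div_le_div_of_nonneg_left (by linarith) hApos hx.1
      rw [abs_le]
      have := hx.1; have := hx.2
      constructor <;> linarith
    obtain ⟨K₁, hK₁0, hK₁eq⟩ : ∃ K₁, 0 ≤ K₁ ∧
        K₁ = (1 + M ^ 2) * (Cc + 1 + |lam| * (M / 2)) := by
      refine ⟨_, ?_, rfl⟩
      have h4 : 0 ≤ |lam| * (M / 2) := mul_nonneg (abs_nonneg lam) (by linarith)
      have h5 : (0:ℝ) ≤ 1 + M ^ 2 := by positivity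
      nlinarith
    -- derivative bound for u
    have hderbd : ∀ x ∈ Set.Ioo A B, ∃ d,
        HasDerivAt (fun r => (f r + lam) ^ 2 + (deriv f r) ^ 2) d x ∧
        |d| ≤ (1 + 3 * K₁) * ((f x + lam) ^ 2 + (deriv f x) ^ 2) := by
      intro x hx
      have hxab := hsubo hx
      have hxIcc := Set.Ioo_subset_Icc_self hx
      obtain ⟨hdf, hdg, _⟩ := hreg x hxab
      have Hf : HasDerivAt f (deriv f x) x := hdf.hasDerivAt
      have Hg : HasDerivAt (deriv f) (deriv (deriv f) x) x := hdg.hasDerivAt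
      have Hu : HasDerivAt (fun r => (f r + lam) ^ 2 + (deriv f r) ^ 2)
          (2 * (f x + lam) ^ 1 * deriv f x + 2 * deriv f x ^ 1 * deriv (deriv f) x) x :=
        ((Hf.add_const lam).pow 2).add (Hg.pow 2)
      refine ⟨_, Hu, ?_⟩
      have hSe : deriv (deriv f) x = (1 + (deriv f x) ^ 2) *
          ((x - ((n:ℝ) - 1) / x) * deriv f x - (f x + lam)
            - lam * (Real.sqrt (1 + (deriv f x) ^ 2) - 1)) := by
        rw [hodem x hxab]; ring
      have habsH : |deriv (deriv f) x| ≤ K₁ * (|f x + lam| + |deriv f x|) := by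
        rw [hSe, hK₁eq]
        exact aux_absH _ _ _ _ _ _ _ (hcoef x hxIcc) (hGM x hxIcc) hM1 hCc0
          (aux_sq1 _) (aux_sq2 _)
      have := aux_absd (f x + lam) (deriv f x) (deriv (deriv f) x) K₁ hK₁0 habsH
      simpa [pow_one] using this.trans_eq' (by ring_nf)
    have hvan := vanish_of_selfbound (fun r => (f r + lam) ^ 2 + (deriv f r) ^ 2)
      (1 + 3 * K₁) A B c hAc hcB
      (((hcf.add continuousOn_const).pow 2).add (hcg.pow 2))
      (fun x _ => by positivity) hderbd
      (by simp only [hfc, hp0]; ring)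
    have hu0 := hvan r₀ ⟨hAr, hrB⟩
    have h1 : (f r₀ + lam) ^ 2 = 0 := by nlinarith [sq_nonneg (deriv f r₀), sq_nonneg (f r₀ + lam)]
    have := pow_eq_zero_iff (n := 2) (by norm_num) |>.mp h1
    linarith
  -- Step 2: compute the third derivative
  obtain ⟨hfc, hgc, hhc⟩ := hreg c hc
  have h1p : (0:ℝ) < 1 + (deriv f c) ^ 2 := by positivity
  have Hg : HasDerivAt (deriv f) 0 c := by
    have := hgc.hasDerivAt; rwa [h2] at this
  have Hf : HasDerivAt f (deriv f c) c := hfc.hasDerivAt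
  have Hone : HasDerivAt (fun r => 1 + (deriv f r) ^ 2) (2 * deriv f c ^ 1 * 0) c :=
    (Hg.pow 2).const_add 1
  have Hsqrt : HasDerivAt (fun r => Real.sqrt (1 + (deriv f r) ^ 2))
      ((2 * deriv f c ^ 1 * 0) / (2 * Real.sqrt (1 + (deriv f c) ^ 2))) c :=
    Hone.sqrt h1p.ne'
  have Hinv : HasDerivAt (fun r : ℝ => ((n:ℝ) - 1) / r) (((n:ℝ) - 1) * (-(c ^ 2)⁻¹)) c := by
    simpa [div_eq_mul_inv] using (hasDerivAt_inv hcpos.ne').const_mul ((n:ℝ) - 1)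
  have Hcoef : HasDerivAt (fun r : ℝ => r - ((n:ℝ) - 1) / r)
      (1 - ((n:ℝ) - 1) * (-(c ^ 2)⁻¹)) c := (hasDerivAt_id c).sub Hinv
  have HΦ : HasDerivAt
      (fun r => (r - ((n:ℝ) - 1) / r) * deriv f r - f r - lam * Real.sqrt (1 + (deriv f r) ^ 2))
      (((1 - ((n:ℝ) - 1) * (-(c ^ 2)⁻¹)) * deriv f c + (c - ((n:ℝ) - 1) / c) * 0)
        - deriv f c - lam * ((2 * deriv f c ^ 1 * 0) / (2 * Real.sqrt (1 + (deriv f c) ^ 2)))) c :=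
    ((Hcoef.mul Hg).sub Hf).sub (Hsqrt.const_mul lam)
  have HRHS := Hone.mul HΦ
  have hev : (deriv (deriv f)) =ᶠ[nhds c]
      (fun r => (1 + (deriv f r) ^ 2) * ((r - ((n : ℝ) - 1) / r) * deriv f r - f r
        - lam * Real.sqrt (1 + (deriv f r) ^ 2))) := by
    filter_upwards [Ioo_mem_nhds hc.1 hc.2] with r hr
    exact hodem r hr
  have h3 : deriv (deriv (deriv f)) c =
      (2 * deriv f c ^ 1 * 0) * ((c - ((n:ℝ) - 1) / c) * deriv f c - f c
        - lam * Real.sqrt (1 + (deriv f c) ^ 2))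
      + (1 + (deriv f c) ^ 2) *
        (((1 - ((n:ℝ) - 1) * (-(c ^ 2)⁻¹)) * deriv f c + (c - ((n:ℝ) - 1) / c) * 0)
          - deriv f c - lam * ((2 * deriv f c ^ 1 * 0) / (2 * Real.sqrt (1 + (deriv f c) ^ 2)))) := by
    rw [Filter.EventuallyEq.deriv_eq hev]
    exact HRHS.deriv
  have key : deriv f c * deriv (deriv (deriv f)) c =
      (deriv f c) ^ 2 * (1 + (deriv f c) ^ 2) * (((n:ℝ) - 1) * (c ^ 2)⁻¹) := by
    rw [h3]; ring
  rw [key]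
  have hpp : 0 < (deriv f c) ^ 2 := by positivity
  have hc2i : (0:ℝ) < (c ^ 2)⁻¹ := by positivity
  have : (0:ℝ) < ((n:ℝ) - 1) * (c ^ 2)⁻¹ := by nlinarith
  positivity
end

section
/- Let f : (a,b) → ℝ, with (a,b) ⊂ (0,∞), be a C³ solution of f''/(1+(f')²) = (r − (n−1)/r)·f' − f − λ·√(1+(f')²). If f'(c)·f''(c) < 0 at some point c ∈ (a,b), then f'(r)·f''(r) < 0 for all r ∈ (a, c]. -/
open Set Filter

lemma key_third (n : ℕ) (lam a b : ℝ) (ha : 0 < a) (f : ℝ → ℝ)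
    (hreg : ∀ r ∈ Set.Ioo a b, DifferentiableAt ℝ f r ∧ DifferentiableAt ℝ (deriv f) r ∧
      DifferentiableAt ℝ (deriv (deriv f)) r)
    (hode : ∀ r ∈ Set.Ioo a b,
      deriv (deriv f) r / (1 + (deriv f r) ^ 2) =
        (r - ((n : ℝ) - 1) / r) * deriv f r - f r - lam * Real.sqrt (1 + (deriv f r) ^ 2))
    (t : ℝ) (ht : t ∈ Set.Ioo a b) (h2 : deriv (deriv f) t = 0) :
    HasDerivAt (deriv (deriv f))
      ((1 + (deriv f t) ^ 2) * ((((n : ℝ) - 1) / t ^ 2) * deriv f t)) t := by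
  have ht0 : t ≠ 0 := ne_of_gt (lt_trans ha ht.1)
  have hd1 : HasDerivAt f (deriv f t) t := (hreg t ht).1.hasDerivAt
  have hd2 : HasDerivAt (deriv f) 0 t := by
    have h := (hreg t ht).2.1.hasDerivAt
    rwa [h2] at h
  have hSpos : (0:ℝ) < 1 + (deriv f t) ^ 2 := by positivity
  have hQ : HasDerivAt (fun r => 1 + (deriv f r) ^ 2) (((2:ℕ):ℝ) * deriv f t ^ (2-1) * 0) t :=
    (hd2.pow 2).const_add 1
  have hsq : HasDerivAt (fun r => Real.sqrt (1 + (deriv f r) ^ 2))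
      (1 / (2 * Real.sqrt (1 + (deriv f t) ^ 2)) * (((2:ℕ):ℝ) * deriv f t ^ (2-1) * 0)) t :=
    (Real.hasDerivAt_sqrt (ne_of_gt hSpos)).comp t hQ
  have hA : HasDerivAt (fun r : ℝ => r - ((n:ℝ)-1)/r)
      (1 - ((0 * t - ((n:ℝ)-1) * 1) / t ^ 2)) t :=
    (hasDerivAt_id t).sub (((hasDerivAt_const t ((n:ℝ)-1)).div (hasDerivAt_id t) ht0))
  have hN : HasDerivAt (fun r => (r - ((n:ℝ)-1)/r) * deriv f r - f r
        - lam * Real.sqrt (1 + (deriv f r) ^ 2))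
      (((1 - ((0 * t - ((n:ℝ)-1) * 1) / t ^ 2)) * deriv f t + (t - ((n:ℝ)-1)/t) * 0
        - deriv f t) - lam * (1 / (2 * Real.sqrt (1 + (deriv f t) ^ 2)) * (((2:ℕ):ℝ) * deriv f t ^ (2-1) * 0))) t :=
    ((hA.mul hd2).sub hd1).sub (hsq.const_mul lam)
  have hG := hQ.mul hN
  have heq : deriv (deriv f) =ᶠ[nhds t] fun r => (1 + (deriv f r) ^ 2) *
      ((r - ((n:ℝ)-1)/r) * deriv f r - f r - lam * Real.sqrt (1 + (deriv f r) ^ 2)) := by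
    filter_upwards [isOpen_Ioo.mem_nhds ht] with r hr
    have hp : (0:ℝ) < 1 + (deriv f r) ^ 2 := by positivity
    have h := hode r hr
    rw [div_eq_iff (ne_of_gt hp)] at h
    linear_combination h
  have hfinal := hG.congr_of_eventuallyEq heq
  refine hfinal.congr_deriv ?_
  push_cast
  ring

lemma aux_main (n : ℕ) (hn : 2 ≤ n) (lam a b c : ℝ)
    (ha : 0 < a) (hab : a < b) (hc : c ∈ Set.Ioo a b)
    (f : ℝ → ℝ)
    (hreg : ∀ r ∈ Set.Ioo a b, DifferentiableAt ℝ f r ∧ DifferentiableAt ℝ (deriv f) r ∧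
      DifferentiableAt ℝ (deriv (deriv f)) r)
    (hode : ∀ r ∈ Set.Ioo a b,
      deriv (deriv f) r / (1 + (deriv f r) ^ 2) =
        (r - ((n : ℝ) - 1) / r) * deriv f r - f r - lam * Real.sqrt (1 + (deriv f r) ^ 2))
    (h1 : 0 < deriv f c) (h2 : deriv (deriv f) c < 0) :
    ∀ r ∈ Set.Ioc a c, 0 < deriv f r ∧ deriv (deriv f) r < 0 := by
  by_contra hcon
  push_neg at hcon
  obtain ⟨r0, hr0, hbad⟩ := hcon
  set S : Set ℝ := {r | r ∈ Set.Ioc a c ∧ ¬(0 < deriv f r ∧ deriv (deriv f) r < 0)} with hSdef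
  have hr0S : r0 ∈ S := ⟨hr0, fun h => absurd h.2 (not_lt.mpr (hbad h.1))⟩
  have hSne : S.Nonempty := ⟨r0, hr0S⟩
  have hbdd : BddAbove S := ⟨c, fun x hx => hx.1.2⟩
  set t := sSup S with htdef
  have htc : t ≤ c := csSup_le hSne fun x hx => hx.1.2
  have hat : a < t := lt_of_lt_of_le hr0.1 (le_csSup hbdd hr0S)
  have hevc : ∀ᶠ s in nhds c, 0 < deriv f s ∧ deriv (deriv f) s < 0 :=
    ((hreg c hc).2.1.continuousAt.eventually (eventually_gt_nhds h1)).and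
      ((hreg c hc).2.2.continuousAt.eventually (eventually_lt_nhds h2))
  obtain ⟨ε, hε, hball⟩ := Metric.eventually_nhds_iff.mp hevc
  have htltc : t < c := by
    have hub : ∀ x ∈ S, x ≤ c - ε := by
      intro x hx
      by_contra hx'
      push_neg at hx'
      have hd : dist x c < ε := by
        rw [Real.dist_eq, abs_lt]
        exact ⟨by linarith, by linarith [hx.1.2]⟩
      exact hx.2 (hball hd)
    have := csSup_le hSne hub
    linarith
  have htIoo : t ∈ Set.Ioo a b := ⟨hat, lt_of_le_of_lt htc hc.2⟩
  have hgood : ∀ s ∈ Set.Ioc t c, 0 < deriv f s ∧ deriv (deriv f) s < 0 := by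
    intro s hs
    by_contra h
    exact absurd (le_csSup hbdd ⟨⟨lt_trans hat hs.1, hs.2⟩, h⟩) (not_le.mpr hs.1)
  have htcond : ¬(0 < deriv f t ∧ deriv (deriv f) t < 0) := by
    intro hgt
    have hevt : ∀ᶠ s in nhds t, 0 < deriv f s ∧ deriv (deriv f) s < 0 :=
      ((hreg t htIoo).2.1.continuousAt.eventually (eventually_gt_nhds hgt.1)).and
        ((hreg t htIoo).2.2.continuousAt.eventually (eventually_lt_nhds hgt.2))
    obtain ⟨δ, hδ, hball'⟩ := Metric.eventually_nhds_iff.mp hevt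
    obtain ⟨s, hsS, hst⟩ := exists_lt_of_lt_csSup hSne (show t - δ < t by linarith)
    have hsle : s ≤ t := le_csSup hbdd hsS
    exact hsS.2 (hball' (by rw [Real.dist_eq, abs_lt]; exact ⟨by linarith, by linarith⟩))
  have hf''le : deriv (deriv f) t ≤ 0 := by
    by_contra h
    push_neg at h
    have hevt : ∀ᶠ s in nhds t, 0 < deriv (deriv f) s :=
      (hreg t htIoo).2.2.continuousAt.eventually (eventually_gt_nhds h)
    obtain ⟨δ, hδ, hball'⟩ := Metric.eventually_nhds_iff.mp hevt
    set s := min (t + δ/2) ((t + c)/2) with hsdef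
    have hts : t < s := lt_min (by linarith) (by linarith)
    have hsc : s ≤ c := le_trans (min_le_right _ _) (by linarith)
    have hds : dist s t < δ := by
      rw [Real.dist_eq, abs_lt]
      constructor
      · linarith
      · linarith [min_le_left (t + δ/2) ((t + c)/2)]
    exact absurd (hball' hds) (not_lt.mpr (le_of_lt (hgood s ⟨hts, hsc⟩).2))
  have hf't : 0 < deriv f t := by
    have hanti : StrictAntiOn (deriv f) (Set.Icc t c) := by
      apply strictAntiOn_of_deriv_neg (convex_Icc t c)
      · intro x hx
        exact ((hreg x ⟨lt_of_lt_of_le hat hx.1, lt_of_le_of_lt hx.2 hc.2⟩).2.1.continuousAt).continuousWithinAt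
      · intro x hx
        rw [interior_Icc] at hx
        exact (hgood x ⟨hx.1, le_of_lt hx.2⟩).2
    have := hanti (Set.left_mem_Icc.mpr (le_of_lt htltc)) (Set.right_mem_Icc.mpr (le_of_lt htltc)) htltc
    linarith
  have hf''t : deriv (deriv f) t = 0 :=
    le_antisymm hf''le (not_lt.mp fun h => htcond ⟨hf't, h⟩)
  have hkey := key_third n lam a b ha f hreg hode t htIoo hf''t
  have hDpos : 0 < (1 + (deriv f t) ^ 2) * ((((n : ℝ) - 1) / t ^ 2) * deriv f t) := by
    have hn' : (0:ℝ) < (n:ℝ) - 1 := by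
      have h2n : (2:ℝ) ≤ (n:ℝ) := by exact_mod_cast hn
      linarith
    have ht0 : (0:ℝ) < t := lt_trans ha hat
    exact mul_pos (by positivity) (mul_pos (div_pos hn' (by positivity)) hf't)
  have hslope := hasDerivAt_iff_tendsto_slope.mp hkey
  have hev : ∀ᶠ s in nhdsWithin t (Set.Ioi t), 0 < slope (deriv (deriv f)) t s :=
    (hslope.mono_left (nhdsWithin_mono t fun x hx =>
      Set.mem_compl_singleton_iff.mpr (ne_of_gt hx))).eventually (eventually_gt_nhds hDpos)
  have hmem : Set.Ioc t c ∈ nhdsWithin t (Set.Ioi t) :=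
    Ioc_mem_nhdsGT_of_mem ⟨le_refl t, htltc⟩
  obtain ⟨s, hs1, hs2⟩ := (hev.and (eventually_of_mem hmem fun x hx => hx)).exists
  have hts : t < s := hs2.1
  have hpos : 0 < (deriv (deriv f) s - deriv (deriv f) t) / (s - t) := by
    rw [slope_def_field] at hs1
    exact hs1
  rw [hf''t, sub_zero] at hpos
  have hfs : 0 < deriv (deriv f) s := by
    rcases div_pos_iff.mp hpos with ⟨h, _⟩ | ⟨_, h⟩
    · exact h
    · linarith
  linarith [(hgood s hs2).2]

/-- For a C³ solution of `f''/(1+(f')²) = (r − (n−1)/r)f' − f − λ√(1+(f')²)` on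
`(a,b) ⊂ (0,∞)`: if `f'(c)·f''(c) < 0` at some `c ∈ (a,b)`, then `f'·f'' < 0` on `(a,c]`. -/
theorem stmt_5 (n : ℕ) (hn : 2 ≤ n) (lam a b c : ℝ)
    (ha : 0 < a) (hab : a < b) (hc : c ∈ Set.Ioo a b)
    (f : ℝ → ℝ)
    (hreg : ∀ r ∈ Set.Ioo a b, DifferentiableAt ℝ f r ∧ DifferentiableAt ℝ (deriv f) r ∧
      DifferentiableAt ℝ (deriv (deriv f)) r)
    (hode : ∀ r ∈ Set.Ioo a b,
      deriv (deriv f) r / (1 + (deriv f r) ^ 2) =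
        (r - ((n : ℝ) - 1) / r) * deriv f r - f r - lam * Real.sqrt (1 + (deriv f r) ^ 2))
    (hneg : deriv f c * deriv (deriv f) c < 0) :
    ∀ r ∈ Set.Ioc a c, deriv f r * deriv (deriv f) r < 0 := by
  rcases mul_neg_iff.mp hneg with ⟨hp, hq⟩ | ⟨hp, hq⟩
  · intro r hr
    obtain ⟨hh1, hh2⟩ := aux_main n hn lam a b c ha hab hc f hreg hode hp hq r hr
    exact mul_neg_of_pos_of_neg hh1 hh2
  · have hg1 : deriv (fun x => -f x) = fun x => -deriv f x := funext fun x => deriv.neg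
    have hg2 : deriv (deriv (fun x => -f x)) = fun x => -deriv (deriv f) x := by
      rw [hg1]; exact funext fun x => deriv.neg
    have hreg' : ∀ r ∈ Set.Ioo a b, DifferentiableAt ℝ (fun x => -f x) r ∧
        DifferentiableAt ℝ (deriv (fun x => -f x)) r ∧
        DifferentiableAt ℝ (deriv (deriv (fun x => -f x))) r := by
      intro r hr
      refine ⟨(hreg r hr).1.neg, ?_, ?_⟩
      · rw [hg1]; exact (hreg r hr).2.1.neg
      · rw [hg2]; exact (hreg r hr).2.2.neg
    have hode' : ∀ r ∈ Set.Ioo a b,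
        deriv (deriv (fun x => -f x)) r / (1 + (deriv (fun x => -f x) r) ^ 2) =
        (r - ((n : ℝ) - 1) / r) * deriv (fun x => -f x) r - (fun x => -f x) r
          - (-lam) * Real.sqrt (1 + (deriv (fun x => -f x) r) ^ 2) := by
      intro r hr
      rw [hg2, hg1]
      simp only [neg_sq]
      rw [neg_div, hode r hr]
      ring
    have h1' : 0 < deriv (fun x => -f x) c := by
      rw [hg1]; simpa using hp
    have h2' : deriv (deriv (fun x => -f x)) c < 0 := by
      rw [hg2]; simpa using hq
    intro r hr
    obtain ⟨hh1, hh2⟩ := aux_main n hn (-lam) a b c ha hab hc (fun x => -f x) hreg' hode' h1' h2' r hr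
    rw [hg1] at hh1
    rw [hg2] at hh2
    simp only at hh1 hh2
    have hf1 : deriv f r < 0 := by linarith [neg_pos.mp hh1]
    have hf2 : 0 < deriv (deriv f) r := by
      have := neg_neg_iff_pos.mp hh2
      linarith
    exact mul_neg_of_neg_of_pos hf1 hf2
end

section
/- Let f : (a,b) → ℝ, with (a,b) ⊂ (0,∞), be a C³ solution of f''/(1+(f')²) = (r − (n−1)/r)·f' − f − λ·√(1+(f')²). If f'(c)·f''(c) > 0 at some point c ∈ (a,b), then f'(r)·f''(r) > 0 for all r ∈ [c, b). -/
open Set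

lemma thirdDeriv (n : ℕ) (lam a b : ℝ) (f : ℝ → ℝ)
    (hreg : ∀ r ∈ Set.Ioo a b, DifferentiableAt ℝ f r ∧ DifferentiableAt ℝ (deriv f) r ∧
      DifferentiableAt ℝ (deriv (deriv f)) r)
    (hode : ∀ r ∈ Set.Ioo a b,
      deriv (deriv f) r / (1 + (deriv f r) ^ 2) =
        (r - ((n : ℝ) - 1) / r) * deriv f r - f r - lam * Real.sqrt (1 + (deriv f r) ^ 2))
    (r₀ : ℝ) (hr₀ : r₀ ∈ Set.Ioo a b) (hr0 : r₀ ≠ 0)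
    (hv0 : deriv (deriv f) r₀ = 0) :
    deriv (deriv (deriv f)) r₀
      = (1 + (deriv f r₀)^2) * ((((n : ℝ) - 1)/r₀^2) * deriv f r₀) := by
  set u : ℝ → ℝ := deriv f with hu_def
  set v : ℝ → ℝ := deriv u with hv_def
  set F : ℝ → ℝ := fun r => (1 + (u r)^2) *
      ((r - ((n : ℝ) - 1) / r) * u r - f r - lam * Real.sqrt (1 + (u r)^2)) with hF_def
  have hvF : ∀ r ∈ Set.Ioo a b, v r = F r := by
    intro r hr
    have h := hode r hr
    have hpos : (0:ℝ) < 1 + (u r)^2 := by positivity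
    simp only [hF_def]
    rw [← h]
    field_simp
  -- setup HasDerivAt at r₀
  obtain ⟨hf, hu, hv⟩ := hreg r₀ hr₀
  set u₀ := u r₀ with hu0
  have hP0 : (0:ℝ) < 1 + u₀^2 := by positivity
  have hsq : Real.sqrt (1 + u₀^2) ≠ 0 := by positivity
  have hfd : HasDerivAt f u₀ r₀ := hf.hasDerivAt
  have hud : HasDerivAt u (v r₀) r₀ := hu.hasDerivAt
  rw [hv0] at hud
  -- derivative of P := 1 + u^2
  have hP : HasDerivAt (fun r => 1 + (u r)^2) 0 r₀ := by
    have := (hasDerivAt_const r₀ (1:ℝ)).add ((hud.pow 2))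
    refine this.congr_deriv ?_
    simp
  -- derivative of sqrt(1+u^2)
  have hS : HasDerivAt (fun r => Real.sqrt (1 + (u r)^2)) 0 r₀ := by
    have := (Real.hasDerivAt_sqrt (ne_of_gt hP0)).comp r₀ hP
    refine this.congr_deriv ?_
    simp
  -- derivative of (r - (n-1)/r)
  have hR : HasDerivAt (fun r : ℝ => r - ((n : ℝ) - 1) / r)
      (1 + ((n : ℝ) - 1) / r₀^2) r₀ := by
    have h1 : HasDerivAt (fun r : ℝ => ((n : ℝ) - 1) / r)
        ((0 * r₀ - ((n:ℝ)-1) * 1) / r₀^2) r₀ :=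
      (hasDerivAt_const r₀ ((n:ℝ)-1)).div (hasDerivAt_id r₀) hr0
    have := (hasDerivAt_id r₀).sub h1
    refine this.congr_deriv ?_
    ring
  -- derivative of Q
  have hQ : HasDerivAt (fun r => (r - ((n : ℝ) - 1) / r) * u r - f r
      - lam * Real.sqrt (1 + (u r)^2))
      ((1 + ((n : ℝ) - 1) / r₀^2) * u₀ + (r₀ - ((n:ℝ)-1)/r₀) * 0 - u₀ - (0 * Real.sqrt (1 + u₀^2) + lam * 0)) r₀ :=
    ((hR.mul hud).sub hfd).sub ((hasDerivAt_const r₀ lam).mul hS)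
  have hF' : HasDerivAt F
      ((0 * ((r₀ - ((n : ℝ) - 1) / r₀) * u₀ - f r₀ - lam * Real.sqrt (1 + u₀^2)))
        + (1 + u₀^2) * ((1 + ((n : ℝ) - 1) / r₀^2) * u₀ + (r₀ - ((n:ℝ)-1)/r₀) * 0 - u₀ - (0 * Real.sqrt (1 + u₀^2) + lam * 0))) r₀ :=
    hP.mul hQ
  -- v = F near r₀ so deriv v r₀ = F' value
  have hmem : Set.Ioo a b ∈ nhds r₀ := (isOpen_Ioo).mem_nhds hr₀
  have hvFev : v =ᶠ[nhds r₀] F := by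
    filter_upwards [hmem] with r hr using hvF r hr
  have hvd : HasDerivAt v
      ((0 * ((r₀ - ((n : ℝ) - 1) / r₀) * u₀ - f r₀ - lam * Real.sqrt (1 + u₀^2)))
        + (1 + u₀^2) * ((1 + ((n : ℝ) - 1) / r₀^2) * u₀ + (r₀ - ((n:ℝ)-1)/r₀) * 0 - u₀ - (0 * Real.sqrt (1 + u₀^2) + lam * 0))) r₀ :=
    hF'.congr_of_eventuallyEq hvFev
  have := hvd.deriv
  rw [this]
  ring

open Set Filter

lemma auxpos (n : ℕ) (hn : 2 ≤ n) (lam a b c : ℝ)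
    (ha : 0 < a) (hab : a < b) (hc : c ∈ Set.Ioo a b)
    (f : ℝ → ℝ)
    (hreg : ∀ r ∈ Set.Ioo a b, DifferentiableAt ℝ f r ∧ DifferentiableAt ℝ (deriv f) r ∧
      DifferentiableAt ℝ (deriv (deriv f)) r)
    (hode : ∀ r ∈ Set.Ioo a b,
      deriv (deriv f) r / (1 + (deriv f r) ^ 2) =
        (r - ((n : ℝ) - 1) / r) * deriv f r - f r - lam * Real.sqrt (1 + (deriv f r) ^ 2))
    (huc : 0 < deriv f c)
    (hpos : 0 < deriv f c * deriv (deriv f) c) :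
    ∀ r ∈ Set.Ico c b, 0 < deriv f r * deriv (deriv f) r := by
  set u : ℝ → ℝ := deriv f with hu_def
  set v : ℝ → ℝ := deriv u with hv_def
  set g : ℝ → ℝ := fun r => u r * v r with hg_def
  have hcontu : ∀ r ∈ Set.Ioo a b, ContinuousAt u r := fun r hr => (hreg r hr).2.1.continuousAt
  have hcontv : ∀ r ∈ Set.Ioo a b, ContinuousAt v r := fun r hr => (hreg r hr).2.2.continuousAt
  have hcontg : ∀ r ∈ Set.Ioo a b, ContinuousAt g r := fun r hr =>
    (hcontu r hr).mul (hcontv r hr)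
  by_contra hcon
  push_neg at hcon
  obtain ⟨t, ht, hgt⟩ := hcon
  set T : Set ℝ := {r | r ∈ Set.Ico c b ∧ g r ≤ 0} with hT_def
  have hTne : T.Nonempty := ⟨t, ht, hgt⟩
  have hTbdd : BddBelow T := ⟨c, fun x hx => hx.1.1⟩
  set r₀ := sInf T with hr0_def
  have hcr : c ≤ r₀ := le_csInf hTne (fun x hx => hx.1.1)
  have hrb : r₀ < b := lt_of_le_of_lt (csInf_le hTbdd hTne.choose_spec |>.trans_eq rfl) (by
    exact hTne.choose_spec.1.2)
  have hr₀mem : r₀ ∈ Set.Ioo a b := ⟨lt_of_lt_of_le hc.1 hcr, hrb⟩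
  have hr₀pos : 0 < r₀ := lt_of_lt_of_le ha (le_of_lt hr₀mem.1)
  -- g > 0 on [c, r₀)
  have hgpos : ∀ s ∈ Set.Ico c r₀, 0 < g s := by
    intro s hs
    by_contra hgs
    push_neg at hgs
    have : s ∈ T := ⟨⟨hs.1, lt_trans hs.2 hrb⟩, hgs⟩
    exact absurd (csInf_le hTbdd this) (not_le.mpr hs.2)
  -- g r₀ ≤ 0
  have hgr0le : g r₀ ≤ 0 := by
    by_contra hgr0
    push_neg at hgr0
    have hev : ∀ᶠ s in nhds r₀, 0 < g s :=
      (hcontg r₀ hr₀mem).eventually_const_lt hgr0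
    obtain ⟨ε, hε, hball⟩ := Metric.eventually_nhds_iff.mp hev
    obtain ⟨x, hxT, hxlt⟩ := Real.lt_sInf_add_pos hTne hε
    have hxge : r₀ ≤ x := csInf_le hTbdd hxT
    have : dist x r₀ < ε := by
      rw [Real.dist_eq, abs_of_nonneg (by linarith)]
      linarith
    exact absurd (hball this) (not_lt.mpr hxT.2)
  have hcltr : c < r₀ := by
    rcases lt_or_eq_of_le hcr with h | h
    · exact h
    · exfalso; rw [← h] at hgr0le; exact absurd hpos (not_lt.mpr hgr0le)
  -- [c, r₀] ⊆ Ioo a b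
  have hsub : Set.Icc c r₀ ⊆ Set.Ioo a b := fun x hx =>
    ⟨lt_of_lt_of_le hc.1 hx.1, lt_of_le_of_lt hx.2 hrb⟩
  -- u > 0 on [c, r₀)
  have hupos : ∀ s ∈ Set.Ico c r₀, 0 < u s := by
    intro s hs
    by_contra hus
    push_neg at hus
    have husne : u s ≠ 0 := by
      intro h0
      have := hgpos s hs
      rw [hg_def] at this; simp only at this
      rw [h0, zero_mul] at this; exact lt_irrefl 0 this
    have husneg : u s < 0 := lt_of_le_of_ne hus husne
    have hcs : c ≤ s := hs.1
    have hcontu' : ContinuousOn u (Set.Icc c s) := fun x hx =>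
      (hcontu x (hsub ⟨hx.1, le_trans hx.2 (le_of_lt hs.2)⟩)).continuousWithinAt
    have : (0:ℝ) ∈ Set.Icc (u s) (u c) := ⟨le_of_lt husneg, le_of_lt huc⟩
    obtain ⟨x, hx, hux⟩ := intermediate_value_Icc' hcs hcontu' this
    have hxmem : x ∈ Set.Ico c r₀ := ⟨hx.1, lt_of_le_of_lt hx.2 hs.2⟩
    have := hgpos x hxmem
    rw [hg_def] at this; simp only at this
    rw [hux, zero_mul] at this; exact lt_irrefl 0 this
  -- v > 0 on [c, r₀)
  have hvpos : ∀ s ∈ Set.Ico c r₀, 0 < v s := by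
    intro s hs
    have h1 := hgpos s hs
    have h2 := hupos s hs
    rw [hg_def] at h1; simp only at h1
    nlinarith
  -- u strictly mono on [c, r₀]
  have humono : StrictMonoOn u (Set.Icc c r₀) := by
    apply strictMonoOn_of_deriv_pos (convex_Icc c r₀)
    · exact fun x hx => (hcontu x (hsub hx)).continuousWithinAt
    · intro x hx
      rw [interior_Icc] at hx
      exact hvpos x ⟨le_of_lt hx.1, hx.2⟩
  have hur0 : 0 < u r₀ :=
    lt_trans (hupos c ⟨le_refl c, hcltr⟩)
      (humono ⟨le_refl c, le_of_lt hcltr⟩ ⟨le_of_lt hcltr, le_refl r₀⟩ hcltr)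
  -- v r₀ = 0
  have hvr0ge : 0 ≤ v r₀ := by
    have htd : Filter.Tendsto v (nhdsWithin r₀ (Set.Iio r₀)) (nhds (v r₀)) :=
      ((hcontv r₀ hr₀mem).continuousWithinAt).tendsto
    refine ge_of_tendsto htd ?_
    filter_upwards [Ioo_mem_nhdsLT_of_mem (⟨hcltr, le_refl r₀⟩ : r₀ ∈ Set.Ioc c r₀)] with s hs
    exact le_of_lt (hvpos s ⟨le_of_lt hs.1, hs.2⟩)
  have hvr0le : v r₀ ≤ 0 := by
    rw [hg_def] at hgr0le; simp only at hgr0le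
    nlinarith
  have hvr0 : v r₀ = 0 := le_antisymm hvr0le hvr0ge
  -- third derivative positive at r₀
  have hw := thirdDeriv n lam a b f hreg hode r₀ hr₀mem (ne_of_gt hr₀pos) hvr0
  have hwpos : 0 < deriv v r₀ := by
    rw [hv_def, hu_def, hw]
    have h1 : (0:ℝ) < 1 + (deriv f r₀)^2 := by positivity
    have h2 : (0:ℝ) < ((n:ℝ) - 1) / r₀^2 := by
      apply div_pos
      · have : (2:ℝ) ≤ (n:ℝ) := by exact_mod_cast hn
        linarith
      · positivity
    exact mul_pos h1 (mul_pos h2 hur0)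
  -- slope contradiction
  have hvd : HasDerivAt v (deriv v r₀) r₀ := (hreg r₀ hr₀mem).2.2.hasDerivAt
  have hslope := hasDerivAt_iff_tendsto_slope.mp hvd
  have hslope' : Filter.Tendsto (slope v r₀) (nhdsWithin r₀ (Set.Iio r₀)) (nhds (deriv v r₀)) :=
    hslope.mono_left (nhdsWithin_mono r₀ (fun x hx => ne_of_lt hx))
  have hev : ∀ᶠ s in nhdsWithin r₀ (Set.Iio r₀), 0 < slope v r₀ s :=
    hslope'.eventually_const_lt hwpos
  have hev2 : Set.Ioo c r₀ ∈ nhdsWithin r₀ (Set.Iio r₀) :=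
    Ioo_mem_nhdsLT_of_mem ⟨hcltr, le_refl r₀⟩
  obtain ⟨s, hs1, hs2⟩ := (hev.and (eventually_mem_set.mpr hev2)).exists
  have hvs : 0 < v s := hvpos s ⟨le_of_lt hs2.1, hs2.2⟩
  rw [slope_def_field, hvr0] at hs1
  have : (v s - 0) / (s - r₀) < 0 := by
    apply div_neg_of_pos_of_neg
    · linarith
    · linarith [hs2.2]
  exact absurd hs1 (not_lt.mpr this.le)

/-- For a C³ solution of `f''/(1+(f')²) = (r − (n−1)/r)f' − f − λ√(1+(f')²)` on
`(a,b) ⊂ (0,∞)`: if `f'(c)·f''(c) > 0` at some `c ∈ (a,b)`, then `f'·f'' > 0` on `[c,b)`. -/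
theorem stmt_6 (n : ℕ) (hn : 2 ≤ n) (lam a b c : ℝ)
    (ha : 0 < a) (hab : a < b) (hc : c ∈ Set.Ioo a b)
    (f : ℝ → ℝ)
    (hreg : ∀ r ∈ Set.Ioo a b, DifferentiableAt ℝ f r ∧ DifferentiableAt ℝ (deriv f) r ∧
      DifferentiableAt ℝ (deriv (deriv f)) r)
    (hode : ∀ r ∈ Set.Ioo a b,
      deriv (deriv f) r / (1 + (deriv f r) ^ 2) =
        (r - ((n : ℝ) - 1) / r) * deriv f r - f r - lam * Real.sqrt (1 + (deriv f r) ^ 2))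
    (hpos : 0 < deriv f c * deriv (deriv f) c) :
    ∀ r ∈ Set.Ico c b, 0 < deriv f r * deriv (deriv f) r := by
  have hu1 : deriv (fun r => -f r) = fun r => -deriv f r := funext (fun x => deriv.neg)
  have hu2 : deriv (deriv (fun r => -f r)) = fun r => -(deriv (deriv f) r) := by
    rw [hu1]; exact funext (fun x => deriv.neg)
  rcases lt_trichotomy (deriv f c) 0 with hneg | hzero | hposc
  · have key := auxpos n hn (-lam) a b c ha hab hc (fun r => -f r)
      (by
        intro r hr
        obtain ⟨h1, h2, h3⟩ := hreg r hr
        refine ⟨h1.neg, ?_, ?_⟩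
        · rw [hu1]; exact h2.neg
        · rw [hu2]; exact h3.neg)
      (by
        intro r hr
        have h := hode r hr
        rw [hu2, hu1]
        simp only [neg_sq, neg_div, neg_mul, mul_neg]
        linarith [h])
      (by rw [hu1]; simpa using hneg.le.lt_of_ne (by simpa using ne_of_lt hneg))
      (by rw [hu2, hu1]; simp only; nlinarith [hpos])
    intro r hr
    have := key r hr
    rw [hu2, hu1] at this
    simp only at this
    nlinarith [this]
  · rw [hzero, zero_mul] at hpos; exact absurd hpos (lt_irrefl 0)
  · exact auxpos n hn lam a b c ha hab hc f hreg hode hposc hpos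
end

section
/- Let f : (a,b) → ℝ be a non-constant C³ solution of f''/(1+(f')²) = (r − (n−1)/r)·f' − f − λ·√(1+(f')²) on (a,b) ⊂ (0,∞), and suppose f'(c) = 0 for some c ∈ (a,b). Then either f''(r) < 0 for all r ∈ (a,b), or f''(r) > 0 for all r ∈ (a,b). Moreover, in the first case f' > 0 on (a,c) and f' < 0 on (c,b), while in the second case f' < 0 on (a,c) and f' > 0 on (c,b). -/
open Set Filter Topology

private lemma right_pos' (a b c : ℝ) (g h A B : ℝ → ℝ) (hc : c ∈ Set.Ioo a b)
    (hg : ∀ r ∈ Set.Ioo a b, HasDerivAt g (h r) r)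
    (hh : ∀ r ∈ Set.Ioo a b, HasDerivAt h (A r * h r + B r * g r) r)
    (hB : ∀ r ∈ Set.Ioo a b, 0 < B r)
    (hgc : g c = 0) (hhc : 0 < h c) :
    (∀ r ∈ Set.Ico c b, 0 < h r) ∧ (∀ r ∈ Set.Ioo c b, 0 < g r) := by
  have hIco : Set.Ico c b ⊆ Set.Ioo a b := fun t ht => ⟨lt_of_lt_of_le hc.1 ht.1, ht.2⟩
  have hH : ∀ r ∈ Set.Ico c b, 0 < h r := by
    by_contra hcon
    push_neg at hcon
    obtain ⟨t₀, ht₀, ht₀'⟩ := hcon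
    set T : Set ℝ := {r | r ∈ Set.Ico c b ∧ h r ≤ 0} with hTdef
    have hTne : T.Nonempty := ⟨t₀, ht₀, ht₀'⟩
    have hTbdd : BddBelow T := ⟨c, fun t ht => ht.1.1⟩
    set d := sInf T with hd
    have hcd : c ≤ d := le_csInf hTne (fun t ht => ht.1.1)
    have hdb : d < b := lt_of_le_of_lt (csInf_le hTbdd ⟨ht₀, ht₀'⟩) ht₀.2
    have hdI : d ∈ Set.Ioo a b := ⟨lt_of_lt_of_le hc.1 hcd, hdb⟩
    have hhd : h d ≤ 0 := by
      by_contra hpos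
      push_neg at hpos
      have hev : ∀ᶠ t in 𝓝 d, 0 < h t :=
        ((hh d hdI).differentiableAt.continuousAt).eventually (lt_mem_nhds hpos)
      obtain ⟨ε, hε, hball⟩ := Metric.eventually_nhds_iff.mp hev
      obtain ⟨t, htT, htlt⟩ := Real.lt_sInf_add_pos hTne hε
      have hdt : d ≤ t := csInf_le hTbdd htT
      have : 0 < h t := hball (by rw [Real.dist_eq, abs_lt]; constructor <;> linarith)
      linarith [htT.2]
    have hcdlt : c < d := hcd.lt_of_ne (fun e => by rw [← e] at hhd; linarith)
    have hpos : ∀ t ∈ Set.Ico c d, 0 < h t := by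
      intro t ht
      by_contra hle
      push_neg at hle
      have : t ∈ T := ⟨⟨ht.1, lt_trans ht.2 hdb⟩, hle⟩
      have := csInf_le hTbdd this
      linarith [ht.2]
    have hge : 0 ≤ h d := by
      have htd : Tendsto h (𝓝[<] d) (𝓝 (h d)) :=
        ((hh d hdI).differentiableAt.continuousAt).mono_left nhdsWithin_le_nhds
      refine ge_of_tendsto htd ?_
      filter_upwards [self_mem_nhdsWithin,
        mem_nhdsWithin_of_mem_nhds (Ioi_mem_nhds hcdlt)] with t h1 h2
      exact (hpos t ⟨le_of_lt h2, h1⟩).le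
    have hd0 : h d = 0 := le_antisymm hhd hge
    have hmono : StrictMonoOn g (Set.Icc c d) := by
      apply strictMonoOn_of_deriv_pos (convex_Icc c d)
      · intro t ht
        exact (hg t ⟨lt_of_lt_of_le hc.1 ht.1, lt_of_le_of_lt ht.2 hdb⟩)
          |>.differentiableAt.continuousAt.continuousWithinAt
      · intro t ht
        rw [interior_Icc] at ht
        rw [(hg t ⟨lt_of_lt_of_le hc.1 ht.1.le, lt_trans ht.2 hdb⟩).deriv]
        exact hpos t ⟨ht.1.le, ht.2⟩
    have hgd : 0 < g d := by
      have := hmono ⟨le_refl c, hcd⟩ ⟨hcd, le_refl d⟩ hcdlt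
      rwa [hgc] at this
    have hder : HasDerivAt h (B d * g d) d := by
      have := hh d hdI
      rwa [hd0, mul_zero, zero_add] at this
    have hBg : 0 < B d * g d := mul_pos (hB d hdI) hgd
    have hslope := hasDerivAt_iff_tendsto_slope.mp hder
    have hev : ∀ᶠ t in 𝓝[<] d, 0 < slope h d t := by
      have h2 := hslope.eventually (lt_mem_nhds hBg)
      exact h2.filter_mono (nhdsWithin_mono d (fun t ht => ne_of_lt ht))
    have hev2 : ∀ᶠ t in 𝓝[<] d, t ∈ Set.Ioi c :=
      mem_nhdsWithin_of_mem_nhds (Ioi_mem_nhds hcdlt)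
    obtain ⟨t, ⟨hts, htc⟩, htd⟩ := ((hev.and hev2).and self_mem_nhdsWithin).exists
    rw [slope_def_field, hd0, sub_zero] at hts
    have h1 : 0 < h t := hpos t ⟨le_of_lt htc, htd⟩
    have h2 : h t / (t - d) < 0 := div_neg_of_pos_of_neg h1 (sub_neg.mpr htd)
    linarith
  refine ⟨hH, fun r hr => ?_⟩
  have hmono : StrictMonoOn g (Set.Icc c r) := by
    apply strictMonoOn_of_deriv_pos (convex_Icc c r)
    · intro t ht
      exact (hg t ⟨lt_of_lt_of_le hc.1 ht.1, lt_of_le_of_lt ht.2 hr.2⟩)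
        |>.differentiableAt.continuousAt.continuousWithinAt
    · intro t ht
      rw [interior_Icc] at ht
      rw [(hg t ⟨lt_of_lt_of_le hc.1 ht.1.le, lt_trans ht.2 hr.2⟩).deriv]
      exact hH t ⟨ht.1.le, lt_trans ht.2 hr.2⟩
  have := hmono ⟨le_refl c, hr.1.le⟩ ⟨hr.1.le, le_refl r⟩ hr.1
  rwa [hgc] at this

private lemma left_pos' (a b c : ℝ) (g h A B : ℝ → ℝ) (hc : c ∈ Set.Ioo a b)
    (hg : ∀ r ∈ Set.Ioo a b, HasDerivAt g (h r) r)
    (hh : ∀ r ∈ Set.Ioo a b, HasDerivAt h (A r * h r + B r * g r) r)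
    (hB : ∀ r ∈ Set.Ioo a b, 0 < B r)
    (hgc : g c = 0) (hhc : 0 < h c) :
    (∀ r ∈ Set.Ioc a c, 0 < h r) ∧ (∀ r ∈ Set.Ioo a c, g r < 0) := by
  have hrefl : ∀ r : ℝ, r ∈ Set.Ioo (-b) (-a) → -r ∈ Set.Ioo a b := by
    intro r hr
    exact ⟨by linarith [hr.2], by linarith [hr.1]⟩
  have key := right_pos' (-b) (-a) (-c) (fun t => -g (-t)) (fun t => h (-t))
    (fun t => -A (-t)) (fun t => B (-t)) ⟨by linarith [hc.2], by linarith [hc.1]⟩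
    (fun r hr => by
      have h1 := (hg (-r) (hrefl r hr)).comp r (hasDerivAt_neg r)
      have h2 := h1.neg
      exact h2.congr_deriv (by simp))
    (fun r hr => by
      have h1 := (hh (-r) (hrefl r hr)).comp r (hasDerivAt_neg r)
      refine h1.congr_deriv ?_
      simp [Function.comp]
      ring)
    (fun r hr => hB (-r) (hrefl r hr))
    (by simp [hgc]) (by simpa using hhc)
  constructor
  · intro r hr
    have : -r ∈ Set.Ico (-c) (-a) := ⟨by linarith [hr.2], by linarith [hr.1]⟩
    have := key.1 (-r) this
    simpa using this
  · intro r hr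
    have : -r ∈ Set.Ioo (-c) (-a) := ⟨by linarith [hr.2], by linarith [hr.1]⟩
    have := key.2 (-r) this
    simp at this
    linarith

private lemma gron_right' (a b c : ℝ) (g h A B : ℝ → ℝ) (hc : c ∈ Set.Ioo a b)
    (hg : ∀ r ∈ Set.Ioo a b, HasDerivAt g (h r) r)
    (hh : ∀ r ∈ Set.Ioo a b, HasDerivAt h (A r * h r + B r * g r) r)
    (hA : ∀ r ∈ Set.Ioo a b, ContinuousAt A r)
    (hBc : ∀ r ∈ Set.Ioo a b, ContinuousAt B r)
    (hgc : g c = 0) (hhc : h c = 0) :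
    ∀ r ∈ Set.Ico c b, g r = 0 ∧ h r = 0 := by
  intro x hx
  rcases eq_or_lt_of_le hx.1 with heq | hcx
  · exact heq ▸ ⟨hgc, hhc⟩
  have hK : Set.Icc c x ⊆ Set.Ioo a b :=
    fun t ht => ⟨lt_of_lt_of_le hc.1 ht.1, lt_of_le_of_lt ht.2 hx.2⟩
  obtain ⟨C, hC⟩ := (isCompact_Icc (a := c) (b := x)).exists_bound_of_continuousOn
    (f := fun t => |A t| + |B t|)
    (fun t ht => ((hA t (hK ht)).abs.add (hBc t (hK ht)).abs).continuousWithinAt)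
  have hC0 : 0 ≤ C := le_trans (by positivity) (le_trans (le_abs_self _) (hC c ⟨le_refl c, hcx.le⟩))
  have hCA : ∀ t ∈ Set.Icc c x, |A t| ≤ C := fun t ht => by
    have := hC t ht
    rw [Real.norm_eq_abs] at this
    have h2 := le_abs_self (|A t| + |B t|)
    have := abs_nonneg (B t)
    linarith
  have hCB : ∀ t ∈ Set.Icc c x, |B t| ≤ C := fun t ht => by
    have := hC t ht
    rw [Real.norm_eq_abs] at this
    have h2 := le_abs_self (|A t| + |B t|)
    have := abs_nonneg (A t)
    linarith
  set M : ℝ := 1 + 4 * C with hM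
  set u : ℝ → ℝ := fun t => g t ^ 2 + h t ^ 2 with hu
  have hud : ∀ t ∈ Set.Icc c x,
      HasDerivAt u (2 * g t * h t + 2 * h t * (A t * h t + B t * g t)) t := by
    intro t ht
    have h1 := ((hg t (hK ht)).pow 2).add ((hh t (hK ht)).pow 2)
    refine h1.congr_deriv ?_
    push_cast
    ring
  have hub : ∀ t ∈ Set.Icc c x,
      2 * g t * h t + 2 * h t * (A t * h t + B t * g t) ≤ M * u t := by
    intro t ht
    have hA1 := (abs_le.mp (hCA t ht)).1
    have hA2 := (abs_le.mp (hCA t ht)).2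
    have hB1 := (abs_le.mp (hCB t ht)).1
    have hB2 := (abs_le.mp (hCB t ht)).2
    have e1 : 2 * g t * h t ≤ g t ^ 2 + h t ^ 2 := by nlinarith [sq_nonneg (g t - h t)]
    have e2 : A t * h t ^ 2 ≤ C * h t ^ 2 := by nlinarith [sq_nonneg (h t)]
    have e3 : B t * (g t * h t) ≤ C * (g t ^ 2 + h t ^ 2) := by
      have habs : |B t * (g t * h t)| ≤ C * (g t ^2 + h t ^2) := by
        rw [abs_mul]
        have h1 : |g t * h t| ≤ g t ^ 2 + h t ^ 2 := by
          rw [abs_mul]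
          nlinarith [sq_nonneg (|g t| - |h t|), sq_abs (g t), sq_abs (h t),
            abs_nonneg (g t), abs_nonneg (h t)]
        exact mul_le_mul (hCB t ht) h1 (abs_nonneg _) hC0
      linarith [le_abs_self (B t * (g t * h t))]
    simp only [hu, hM]
    nlinarith [e1, e2, e3, mul_nonneg hC0 (sq_nonneg (g t)), mul_nonneg hC0 (sq_nonneg (h t))]
  set w : ℝ → ℝ := fun t => u t * Real.exp (-M * t) with hw
  have hwd : ∀ t ∈ Set.Icc c x,
      HasDerivAt w ((2 * g t * h t + 2 * h t * (A t * h t + B t * g t) - M * u t)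
        * Real.exp (-M * t)) t := by
    intro t ht
    have he : HasDerivAt (fun s => Real.exp (-M * s)) (Real.exp (-M * t) * (-M)) t := by
      have h0 : HasDerivAt (fun s : ℝ => -M * s) (-M) t := by
        simpa using (hasDerivAt_id t).const_mul (-M)
      exact (Real.hasDerivAt_exp (-M * t)).comp t h0
    have h1 := (hud t ht).mul he
    refine h1.congr_deriv ?_
    simp only [hu]
    ring
  have hanti : AntitoneOn w (Set.Icc c x) := by
    apply antitoneOn_of_deriv_nonpos (convex_Icc c x)
    · exact fun t ht => (hwd t ht).differentiableAt.continuousAt.continuousWithinAt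
    · intro t ht
      rw [interior_Icc] at ht
      exact (hwd t (Set.Ioo_subset_Icc_self ht)).differentiableAt.differentiableWithinAt
    · intro t ht
      rw [interior_Icc] at ht
      rw [(hwd t (Set.Ioo_subset_Icc_self ht)).deriv]
      apply mul_nonpos_iff.mpr
      refine Or.inr ⟨?_, (Real.exp_pos _).le⟩
      have := hub t (Set.Ioo_subset_Icc_self ht)
      linarith
  have hwc : w c = 0 := by simp [hw, hu, hgc, hhc]
  have hwx : w x ≤ 0 := by
    have := hanti ⟨le_refl c, hcx.le⟩ ⟨hcx.le, le_refl x⟩ hcx.le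
    rwa [hwc] at this
  have hux : u x ≤ 0 := by
    have hexp := Real.exp_pos (-M * x)
    simp only [hw] at hwx
    by_contra hp
    push_neg at hp
    nlinarith [mul_pos hp hexp]
  simp only [hu] at hux
  constructor
  · nlinarith [sq_nonneg (g x), sq_nonneg (h x)]
  · nlinarith [sq_nonneg (g x), sq_nonneg (h x)]

private lemma gron_left' (a b c : ℝ) (g h A B : ℝ → ℝ) (hc : c ∈ Set.Ioo a b)
    (hg : ∀ r ∈ Set.Ioo a b, HasDerivAt g (h r) r)
    (hh : ∀ r ∈ Set.Ioo a b, HasDerivAt h (A r * h r + B r * g r) r)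
    (hA : ∀ r ∈ Set.Ioo a b, ContinuousAt A r)
    (hBc : ∀ r ∈ Set.Ioo a b, ContinuousAt B r)
    (hgc : g c = 0) (hhc : h c = 0) :
    ∀ r ∈ Set.Ioc a c, g r = 0 ∧ h r = 0 := by
  have hrefl : ∀ r : ℝ, r ∈ Set.Ioo (-b) (-a) → -r ∈ Set.Ioo a b := by
    intro r hr
    exact ⟨by linarith [hr.2], by linarith [hr.1]⟩
  have key := gron_right' (-b) (-a) (-c) (fun t => g (-t)) (fun t => -h (-t))
    (fun t => -A (-t)) (fun t => B (-t)) ⟨by linarith [hc.2], by linarith [hc.1]⟩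
    (fun r hr => by
      have h1 := (hg (-r) (hrefl r hr)).comp r (hasDerivAt_neg r)
      simpa [Function.comp_def] using h1)
    (fun r hr => by
      have h1 := ((hh (-r) (hrefl r hr)).comp r (hasDerivAt_neg r)).neg
      refine h1.congr_deriv ?_
      simp [Function.comp])
    (fun r hr => by
      have h1 := (hA (-r) (hrefl r hr)).comp (continuous_neg.continuousAt (x := r))
      exact h1.neg)
    (fun r hr => (hBc (-r) (hrefl r hr)).comp (continuous_neg.continuousAt (x := r)))
    (by simpa using hgc) (by simp [hhc])
  intro r hr
  have : -r ∈ Set.Ico (-c) (-a) := ⟨by linarith [hr.2], by linarith [hr.1]⟩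
  have := key (-r) this
  constructor
  · simpa using this.1
  · have := this.2
    simp at this
    exact this

private lemma key_deriv' (n : ℕ) (lam a b : ℝ) (ha : 0 < a) (f : ℝ → ℝ)
    (hreg : ∀ r ∈ Set.Ioo a b, DifferentiableAt ℝ f r ∧ DifferentiableAt ℝ (deriv f) r ∧
      DifferentiableAt ℝ (deriv (deriv f)) r)
    (hode : ∀ r ∈ Set.Ioo a b,
      deriv (deriv f) r / (1 + (deriv f r) ^ 2) =
        (r - ((n : ℝ) - 1) / r) * deriv f r - f r - lam * Real.sqrt (1 + (deriv f r) ^ 2)) :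
    ∀ r ∈ Set.Ioo a b, HasDerivAt (deriv (deriv f))
      ((2 * deriv f r * ((r - ((n:ℝ)-1)/r) * deriv f r - f r - lam * Real.sqrt (1 + (deriv f r)^2))
        + (1 + (deriv f r)^2) * (r - ((n:ℝ)-1)/r)
        - lam * deriv f r * Real.sqrt (1 + (deriv f r)^2)) * deriv (deriv f) r
       + (((n:ℝ)-1) * (1 + (deriv f r)^2) / r^2) * deriv f r) r := by
  set g := deriv f with hgdef
  set h := deriv (deriv f) with hhdef
  have hgd : ∀ r ∈ Set.Ioo a b, HasDerivAt g (h r) r := fun r hr => ((hreg r hr).2.1).hasDerivAt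
  have hfd : ∀ r ∈ Set.Ioo a b, HasDerivAt f (g r) r := fun r hr => ((hreg r hr).1).hasDerivAt
  have hode' : ∀ r ∈ Set.Ioo a b, h r =
      (1 + g r ^ 2) * ((r - ((n:ℝ)-1)/r) * g r - f r - lam * Real.sqrt (1 + g r ^ 2)) := by
    intro r hr
    have h0 : (0:ℝ) < 1 + g r ^ 2 := by positivity
    have := hode r hr
    rw [div_eq_iff h0.ne'] at this
    rw [this]; ring
  intro r hr
  have hrne : r ≠ 0 := (lt_trans ha hr.1).ne'
  have hgpos : (0:ℝ) < 1 + g r ^ 2 := by positivity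
  have hs : Real.sqrt (1 + g r ^ 2) ^ 2 = 1 + g r ^ 2 := Real.sq_sqrt hgpos.le
  have hs0 : 0 < Real.sqrt (1 + g r ^ 2) := Real.sqrt_pos.mpr hgpos
  have hinner : HasDerivAt (fun s => 1 + g s ^ 2) ((2:ℝ) * g r ^ 1 * h r) r :=
    ((hgd r hr).pow 2).const_add 1
  have hsq : HasDerivAt (fun s => Real.sqrt (1 + g s ^ 2))
      (1 / (2 * Real.sqrt (1 + g r ^ 2)) * ((2:ℝ) * g r ^ 1 * h r)) r := by
    have := (Real.hasDerivAt_sqrt hgpos.ne').comp r hinner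
    simpa [Function.comp_def] using this
  have hq : HasDerivAt (fun s => s - ((n:ℝ)-1)/s)
      (1 - (0 * r - ((n:ℝ)-1) * 1) / r ^ 2) r :=
    (hasDerivAt_id r).sub ((hasDerivAt_const r ((n:ℝ)-1)).div (hasDerivAt_id r) hrne)
  have hP := ((hq.mul (hgd r hr)).sub (hfd r hr)).sub (hsq.const_mul lam)
  have hF := hinner.mul hP
  have heq : h =ᶠ[𝓝 r] (fun s =>
      (1 + g s ^ 2) * ((s - ((n:ℝ)-1)/s) * g s - f s - lam * Real.sqrt (1 + g s ^ 2))) :=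
    Filter.eventuallyEq_of_mem (isOpen_Ioo.mem_nhds hr) hode'
  have hmain := hF.congr_of_eventuallyEq heq
  refine hmain.congr_deriv ?_
  simp only [Pi.mul_apply, Pi.sub_apply]
  rw [← hs]
  set s := Real.sqrt (1 + g r ^ 2) with hsdef
  simp only [Real.sqrt_sq hs0.le]
  field_simp
  ring

/-- For a non-constant C³ solution of
`f''/(1+(f')²) = (r − (n−1)/r)f' − f − λ√(1+(f')²)` on `(a,b) ⊂ (0,∞)` with `f'(c) = 0`:
either `f'' < 0` on `(a,b)`, with `f' > 0` on `(a,c)` and `f' < 0` on `(c,b)`, or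
`f'' > 0` on `(a,b)`, with `f' < 0` on `(a,c)` and `f' > 0` on `(c,b)`. -/
theorem stmt_7 (n : ℕ) (hn : 2 ≤ n) (lam a b c : ℝ)
    (ha : 0 < a) (hab : a < b) (hc : c ∈ Set.Ioo a b)
    (f : ℝ → ℝ)
    (hreg : ∀ r ∈ Set.Ioo a b, DifferentiableAt ℝ f r ∧ DifferentiableAt ℝ (deriv f) r ∧
      DifferentiableAt ℝ (deriv (deriv f)) r)
    (hode : ∀ r ∈ Set.Ioo a b,
      deriv (deriv f) r / (1 + (deriv f r) ^ 2) =
        (r - ((n : ℝ) - 1) / r) * deriv f r - f r - lam * Real.sqrt (1 + (deriv f r) ^ 2))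
    (hnc : ¬ ∃ k : ℝ, ∀ r ∈ Set.Ioo a b, f r = k)
    (h1 : deriv f c = 0) :
    ((∀ r ∈ Set.Ioo a b, deriv (deriv f) r < 0) ∧
      (∀ r ∈ Set.Ioo a c, 0 < deriv f r) ∧ (∀ r ∈ Set.Ioo c b, deriv f r < 0)) ∨
    ((∀ r ∈ Set.Ioo a b, 0 < deriv (deriv f) r) ∧
      (∀ r ∈ Set.Ioo a c, deriv f r < 0) ∧ (∀ r ∈ Set.Ioo c b, 0 < deriv f r)) := by
  set g := deriv f with hgdef
  set h := deriv (deriv f) with hhdef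
  set A : ℝ → ℝ := fun r =>
    2 * g r * ((r - ((n:ℝ)-1)/r) * g r - f r - lam * Real.sqrt (1 + g r ^ 2))
      + (1 + g r ^ 2) * (r - ((n:ℝ)-1)/r)
      - lam * g r * Real.sqrt (1 + g r ^ 2) with hAdef
  set B : ℝ → ℝ := fun r => ((n:ℝ)-1) * (1 + g r ^ 2) / r ^ 2 with hBdef
  have hgd : ∀ r ∈ Set.Ioo a b, HasDerivAt g (h r) r := fun r hr => ((hreg r hr).2.1).hasDerivAt
  have hkey : ∀ r ∈ Set.Ioo a b, HasDerivAt h (A r * h r + B r * g r) r :=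
    fun r hr => key_deriv' n lam a b ha f hreg hode r hr
  have hn' : (1:ℝ) ≤ (n:ℝ) - 1 := by
    have : (2:ℝ) ≤ (n:ℝ) := by exact_mod_cast hn
    linarith
  have hBpos : ∀ r ∈ Set.Ioo a b, 0 < B r := by
    intro r hr
    have hr0 : 0 < r := lt_trans ha hr.1
    have : (0:ℝ) < 1 + g r ^ 2 := by positivity
    apply div_pos (mul_pos (by linarith) this) (by positivity)
  rcases lt_trichotomy (h c) 0 with hneg | hzero | hpos
  · -- f'' < 0 everywhere
    left
    have hgd' : ∀ r ∈ Set.Ioo a b, HasDerivAt (fun s => -g s) (-h r) r :=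
      fun r hr => (hgd r hr).neg
    have hkey' : ∀ r ∈ Set.Ioo a b,
        HasDerivAt (fun s => -h s) (A r * (-h r) + B r * (-g r)) r := by
      intro r hr
      have := (hkey r hr).neg
      refine this.congr_deriv ?_
      ring
    have hR := right_pos' a b c (fun s => -g s) (fun s => -h s) A B hc hgd' hkey' hBpos
      (by simp [h1]) (by simpa using hneg)
    have hL := left_pos' a b c (fun s => -g s) (fun s => -h s) A B hc hgd' hkey' hBpos
      (by simp [h1]) (by simpa using hneg)
    refine ⟨?_, ?_, ?_⟩
    · intro r hr
      rcases le_or_gt r c with hle | hlt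
      · have := hL.1 r ⟨hr.1, hle⟩; simp only [neg_pos] at this; exact this
      · have := hR.1 r ⟨hlt.le, hr.2⟩; simp only [neg_pos] at this; exact this
    · intro r hr
      have := hL.2 r hr; simp only [neg_lt_zero] at this; exact this
    · intro r hr
      have := hR.2 r ⟨hr.1, hr.2⟩; simp only [neg_pos] at this; exact this
  · -- f'' c = 0 : f is constant, contradiction
    exfalso
    have hfc : ∀ r ∈ Set.Ioo a b, ContinuousAt f r := fun r hr => ((hreg r hr).1).continuousAt
    have hgc : ∀ r ∈ Set.Ioo a b, ContinuousAt g r := fun r hr => ((hreg r hr).2.1).continuousAt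
    have hAc : ∀ r ∈ Set.Ioo a b, ContinuousAt A r := by
      intro r hr
      have hrne : r ≠ 0 := (lt_trans ha hr.1).ne'
      have hsq : ContinuousAt (fun s => Real.sqrt (1 + g s ^ 2)) r :=
        Real.continuous_sqrt.continuousAt.comp (continuousAt_const.add ((hgc r hr).pow 2))
      have hq : ContinuousAt (fun s => s - ((n:ℝ)-1)/s) r :=
        continuousAt_id.sub (continuousAt_const.div continuousAt_id hrne)
      exact (((continuousAt_const.mul (hgc r hr)).mul
          (((hq.mul (hgc r hr)).sub (hfc r hr)).sub (continuousAt_const.mul hsq))).add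
        ((continuousAt_const.add ((hgc r hr).pow 2)).mul hq)).sub
        ((continuousAt_const.mul (hgc r hr)).mul hsq)
    have hBc : ∀ r ∈ Set.Ioo a b, ContinuousAt B r := by
      intro r hr
      have hrne : r ^ 2 ≠ 0 := pow_ne_zero 2 (lt_trans ha hr.1).ne'
      exact (continuousAt_const.mul (continuousAt_const.add ((hgc r hr).pow 2))).div
        (continuousAt_id.pow 2) hrne
    have hg0 : ∀ r ∈ Set.Ioo a b, g r = 0 := by
      intro r hr
      rcases le_or_gt r c with hle | hlt
      · rcases eq_or_lt_of_le hle with heq | hlt'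
        · rw [heq]; exact h1
        · exact (gron_left' a b c g h A B hc hgd hkey hAc hBc h1 hzero r ⟨hr.1, hle⟩).1
      · exact (gron_right' a b c g h A B hc hgd hkey hAc hBc h1 hzero r ⟨hlt.le, hr.2⟩).1
    have hcont : ContinuousOn f (Set.Ioo a b) := fun x hx => (hfc x hx).continuousWithinAt
    have hdiff : DifferentiableOn ℝ f (interior (Set.Ioo a b)) := by
      rw [interior_Ioo]
      exact fun x hx => ((hreg x hx).1).differentiableWithinAt
    have hmono : MonotoneOn f (Set.Ioo a b) := by
      apply monotoneOn_of_deriv_nonneg (convex_Ioo a b) hcont hdiff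
      intro x hx
      rw [interior_Ioo] at hx
      rw [show deriv f x = g x from rfl, hg0 x hx]
    have hanti : AntitoneOn f (Set.Ioo a b) := by
      apply antitoneOn_of_deriv_nonpos (convex_Ioo a b) hcont hdiff
      intro x hx
      rw [interior_Ioo] at hx
      rw [show deriv f x = g x from rfl, hg0 x hx]
    apply hnc
    refine ⟨f c, fun r hr => ?_⟩
    rcases le_total r c with hle | hle
    · exact le_antisymm (hmono hr hc hle) (hanti hr hc hle)
    · exact le_antisymm (hanti hc hr hle) (hmono hc hr hle)
  · -- f'' > 0 everywhere
    right
    have hR := right_pos' a b c g h A B hc hgd hkey hBpos h1 hpos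
    have hL := left_pos' a b c g h A B hc hgd hkey hBpos h1 hpos
    refine ⟨?_, ?_, ?_⟩
    · intro r hr
      rcases le_or_gt r c with hle | hlt
      · exact hL.1 r ⟨hr.1, hle⟩
      · exact hR.1 r ⟨hlt.le, hr.2⟩
    · exact hL.2
    · exact hR.2
end

section
/- Let f : (a,b) → ℝ, with (a,b) ⊂ (0,∞), be a left maximally extended C² solution of f''/(1+(f')²) = (r − (n−1)/r)·f' − f − λ·√(1+(f')²) satisfying f'(r)·f''(r) > 0 for all r ∈ (a,b). Then a = 0 and lim_{r→0⁺} f'(r) = 0. -/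
open Set Filter Real Topology NNReal

/-- `g` is a C² solution of `f''/(1+(f')²) = (r − (n−1)/r)f' − f − λ√(1+(f')²)` on `(a,b)`. -/
def IsProfileSol (n : ℕ) (lam a b : ℝ) (g : ℝ → ℝ) : Prop :=
  (∀ r ∈ Set.Ioo a b, DifferentiableAt ℝ g r ∧ DifferentiableAt ℝ (deriv g) r) ∧
  ∀ r ∈ Set.Ioo a b,
    deriv (deriv g) r / (1 + (deriv g r) ^ 2) =
      (r - ((n : ℝ) - 1) / r) * deriv g r - g r - lam * Real.sqrt (1 + (deriv g r) ^ 2)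

namespace Stmt8Aux


/-- The second derivative as a function of `(r, y, p)`. -/
noncomputable def Phi (n : ℕ) (lam r y p : ℝ) : ℝ :=
  (1 + p ^ 2) * ((r - ((n : ℝ) - 1) / r) * p - y - lam * Real.sqrt (1 + p ^ 2))

/-- The autonomous vector field for the augmented system `(r, y, p)`. -/
noncomputable def V (n : ℕ) (lam : ℝ) (x : ℝ × ℝ × ℝ) : ℝ × ℝ × ℝ :=
  (1, x.2.2, Phi n lam x.1 x.2.1 x.2.2)

lemma one_add_sq_pos (p : ℝ) : 0 < 1 + p ^ 2 := by positivity

lemma deriv2_eq {n : ℕ} {lam a b : ℝ} {f : ℝ → ℝ} (hsol : IsProfileSol n lam a b f)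
    {r : ℝ} (hr : r ∈ Set.Ioo a b) :
    deriv (deriv f) r = Phi n lam r (f r) (deriv f r) := by
  have h := hsol.2 r hr
  rw [div_eq_iff (one_add_sq_pos (deriv f r)).ne'] at h
  rw [h, Phi]; ring

lemma hasDerivAt_fst3 {E F : Type*} [NormedAddCommGroup E] [NormedSpace ℝ E]
    [NormedAddCommGroup F] [NormedSpace ℝ F]
    {α : ℝ → E × F} {y : E × F} {t : ℝ} (h : HasDerivAt α y t) :
    HasDerivAt (fun s => (α s).1) y.1 t := by
  have := ((hasFDerivAt_fst (𝕜 := ℝ) (p := α t)).comp t h.hasFDerivAt).hasDerivAt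
  simpa [Function.comp_def] using this

lemma hasDerivAt_snd3 {E F : Type*} [NormedAddCommGroup E] [NormedSpace ℝ E]
    [NormedAddCommGroup F] [NormedSpace ℝ F]
    {α : ℝ → E × F} {y : E × F} {t : ℝ} (h : HasDerivAt α y t) :
    HasDerivAt (fun s => (α s).2) y.2 t := by
  have := ((hasFDerivAt_snd (𝕜 := ℝ) (p := α t)).comp t h.hasFDerivAt).hasDerivAt
  simpa [Function.comp_def] using this

lemma hasDerivAt_F {n : ℕ} {lam a b : ℝ} {f : ℝ → ℝ} (hsol : IsProfileSol n lam a b f)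
    {r : ℝ} (hr : r ∈ Set.Ioo a b) :
    HasDerivAt (fun t => ((t : ℝ), f t, deriv f t)) (V n lam (r, f r, deriv f r)) r := by
  have h1 : HasDerivAt f (deriv f r) r := (hsol.1 r hr).1.hasDerivAt
  have h2 : HasDerivAt (deriv f) (deriv (deriv f) r) r := (hsol.1 r hr).2.hasDerivAt
  have h3 := deriv2_eq hsol hr
  exact (hasDerivAt_id r).prodMk (h1.prodMk (h3 ▸ h2))

lemma contDiffAt_V {n : ℕ} {lam : ℝ} {x₀ : ℝ × ℝ × ℝ} (hx : x₀.1 ≠ 0) :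
    ContDiffAt ℝ 1 (V n lam) x₀ := by
  have hr : ContDiffAt ℝ 1 (fun x : ℝ × ℝ × ℝ => x.1) x₀ := contDiff_fst.contDiffAt
  have hy : ContDiffAt ℝ 1 (fun x : ℝ × ℝ × ℝ => x.2.1) x₀ :=
    (contDiff_fst.comp contDiff_snd).contDiffAt
  have hp : ContDiffAt ℝ 1 (fun x : ℝ × ℝ × ℝ => x.2.2) x₀ :=
    (contDiff_snd.comp contDiff_snd).contDiffAt
  have hsq : ContDiffAt ℝ 1 (fun x : ℝ × ℝ × ℝ => Real.sqrt (1 + x.2.2 ^ 2)) x₀ :=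
    (contDiffAt_const.add (hp.pow 2)).sqrt (by positivity)
  refine contDiffAt_const.prodMk (hp.prodMk ?_)
  exact (contDiffAt_const.add (hp.pow 2)).mul
    ((((hr.sub ((contDiffAt_const (c := (n : ℝ) - 1)).div hr hx)).mul hp).sub hy).sub
      (contDiffAt_const.mul hsq))

lemma neg_sol {n : ℕ} {lam a b : ℝ} {f : ℝ → ℝ} (h : IsProfileSol n lam a b f) :
    IsProfileSol n (-lam) a b (fun x => -f x) := by
  have hd1 : (deriv fun x => -f x) = fun x => -deriv f x := funext fun x => deriv.neg
  constructor
  · intro r hr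
    refine ⟨(h.1 r hr).1.neg, ?_⟩
    rw [hd1]
    exact (h.1 r hr).2.neg
  · intro r hr
    have h2 := h.2 r hr
    rw [hd1]
    simp only
    rw [show (deriv fun x => -deriv f x) r = -deriv (deriv f) r from deriv.neg]
    rw [neg_sq]
    rw [neg_div]
    rw [h2]
    ring


/-- Two solutions of an autonomous ODE on `(a, a+δ]` whose distance tends to `0` at `a⁺`
coincide there. -/
lemma match_of_tendsto {E : Type*} [NormedAddCommGroup E] [NormedSpace ℝ E]
    {v : E → E} {K : ℝ≥0} {U : Set E} (hlip : LipschitzOnWith K v U)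
    {F G : ℝ → E} {a u : ℝ} (hau : a < u)
    (hF : ∀ t ∈ Ioc a u, HasDerivAt F (v (F t)) t ∧ F t ∈ U)
    (hG : ∀ t ∈ Ioc a u, HasDerivAt G (v (G t)) t ∧ G t ∈ U)
    (hFG : Tendsto (fun s => dist (F s) (G s)) (𝓝[>] a) (𝓝 0)) :
    ∀ c ∈ Ioc a u, F c = G c := by
  intro c hc
  have key : ∀ s ∈ Ioo a c, dist (F c) (G c) ≤ dist (F s) (G s) * Real.exp (K * (c - s)) := by
    intro s hs
    have hsub : Icc s c ⊆ Ioc a u := fun x hx => ⟨lt_of_lt_of_le hs.1 hx.1, le_trans hx.2 hc.2⟩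
    have hsub' : Ico s c ⊆ Ioc a u := fun x hx => hsub ⟨hx.1, hx.2.le⟩
    have h := dist_le_of_trajectories_ODE_of_mem (v := fun _ => v) (s := fun _ => U)
      (K := K) (fun _ _ => hlip)
      (fun x hx => ((hF x (hsub hx)).1.continuousAt).continuousWithinAt)
      (fun x hx => ((hF x (hsub' hx)).1).hasDerivWithinAt)
      (fun x hx => (hF x (hsub' hx)).2)
      (fun x hx => ((hG x (hsub hx)).1.continuousAt).continuousWithinAt)
      (fun x hx => ((hG x (hsub' hx)).1).hasDerivWithinAt)
      (fun x hx => (hG x (hsub' hx)).2)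
      (le_refl (dist (F s) (G s))) c ⟨hs.2.le, le_refl c⟩
    exact h
  have hexp : Tendsto (fun s : ℝ => Real.exp (K * (c - s))) (𝓝[>] a) (𝓝 (Real.exp (K * (c - a)))) := by
    have : Continuous fun s : ℝ => Real.exp (K * (c - s)) := by continuity
    exact (this.tendsto a).mono_left nhdsWithin_le_nhds
  have hφ : Tendsto (fun s => dist (F s) (G s) * Real.exp (K * (c - s))) (𝓝[>] a)
      (𝓝 (0 * Real.exp (K * (c - a)))) := hFG.mul hexp
  rw [zero_mul] at hφ
  have hle : dist (F c) (G c) ≤ 0 := by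
    refine ge_of_tendsto hφ ?_
    filter_upwards [Ioo_mem_nhdsGT_of_mem ⟨le_refl a, hc.1⟩] with s hs
    exact key s hs
  exact dist_le_zero.mp hle


lemma extend_pos (n : ℕ) (lam a b : ℝ) (ha : 0 < a) (hab : a < b) (f : ℝ → ℝ)
    (hsol : IsProfileSol n lam a b f)
    (hpos : ∀ r ∈ Ioo a b, 0 < deriv f r)
    (hpos2 : ∀ r ∈ Ioo a b, 0 < deriv (deriv f) r) :
    ∃ a' < a, ∃ g : ℝ → ℝ, IsProfileSol n lam a' b g ∧ EqOn g f (Ioo a b) := by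
  have hc : (a + b) / 2 ∈ Ioo a b := ⟨by linarith, by linarith⟩
  set c := (a + b) / 2 with hc_def
  have hfd : ∀ r ∈ Ioo a b, HasDerivAt f (deriv f r) r := fun r hr => (hsol.1 r hr).1.hasDerivAt
  have hfc : ContinuousOn f (Ioo a b) :=
    fun r hr => ((hsol.1 r hr).1.continuousAt).continuousWithinAt
  have hdc : ContinuousOn (deriv f) (Ioo a b) :=
    fun r hr => ((hsol.1 r hr).2.continuousAt).continuousWithinAt
  have hmono' : StrictMonoOn (deriv f) (Ioo a b) :=
    strictMonoOn_of_deriv_pos (convex_Ioo a b) hdc (by rwa [interior_Ioo])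
  have hIoo_sub : Ioo a c ⊆ Ioo a b := Ioo_subset_Ioo_right hc.2.le
  set P := deriv f c with hP_def
  have hPle : ∀ r ∈ Ioo a c, deriv f r ≤ P := fun r hr => (hmono' (hIoo_sub hr) hc hr.2).le
  -- lower bound for f near a
  have hflow : ∀ r ∈ Ioo a c, f c - P * (c - a) ≤ f r := by
    intro r hr
    obtain ⟨ξ, hξ, hs⟩ := exists_hasDerivAt_eq_slope f (deriv f) hr.2
      (hfc.mono (fun x hx => ⟨lt_of_lt_of_le hr.1 hx.1, lt_of_le_of_lt hx.2 hc.2⟩))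
      (fun x hx => hfd x ⟨lt_trans hr.1 hx.1, lt_trans hx.2 hc.2⟩)
    have hξ' : ξ ∈ Ioo a c := ⟨lt_trans hr.1 hξ.1, hξ.2⟩
    have h1 : deriv f ξ ≤ P := hPle ξ hξ'
    have h0 : 0 < deriv f ξ := hpos ξ (hIoo_sub hξ')
    rw [eq_div_iff (by linarith [hr.2] : c - r ≠ 0)] at hs
    nlinarith [hr.1, hr.2]
  -- limits at a from the right
  have hne : (Ioo a c).Nonempty := nonempty_Ioo.mpr hc.1
  have hbd1 : BddBelow (deriv f '' Ioo a c) := by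
    refine ⟨0, fun y hy => ?_⟩
    obtain ⟨r, hr, rfl⟩ := hy
    exact (hpos r (hIoo_sub hr)).le
  have hbd0 : BddBelow (f '' Ioo a c) := by
    refine ⟨f c - P * (c - a), fun y hy => ?_⟩
    obtain ⟨r, hr, rfl⟩ := hy
    exact hflow r hr
  have hmonof : StrictMonoOn f (Ioo a b) :=
    strictMonoOn_of_deriv_pos (convex_Ioo a b) hfc (by rwa [interior_Ioo])
  set A₁ := sInf (deriv f '' Ioo a c) with hA₁
  set A₀ := sInf (f '' Ioo a c) with hA₀
  have ht1 : Tendsto (deriv f) (𝓝[>] a) (𝓝 A₁) :=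
    MonotoneOn.tendsto_nhdsWithin_Ioo_right hne ((hmono'.mono hIoo_sub).monotoneOn) hbd1
  have ht0 : Tendsto f (𝓝[>] a) (𝓝 A₀) :=
    MonotoneOn.tendsto_nhdsWithin_Ioo_right hne ((hmonof.mono hIoo_sub).monotoneOn) hbd0
  set x₀ : ℝ × ℝ × ℝ := (a, A₀, A₁) with hx₀
  have hFt : Tendsto (fun t => ((t : ℝ), f t, deriv f t)) (𝓝[>] a) (𝓝 x₀) := by
    exact (tendsto_id.mono_right nhdsWithin_le_nhds).prodMk_nhds (ht0.prodMk_nhds ht1)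
  have hV : ContDiffAt ℝ 1 (V n lam) x₀ := contDiffAt_V (show x₀.1 ≠ 0 from ha.ne')
  obtain ⟨K, U, hU, hlip⟩ := hV.exists_lipschitzOnWith
  obtain ⟨α, hα0, ε, hε, hαode⟩ := hV.exists_forall_mem_closedBall_exists_eq_forall_mem_Ioo_hasDerivAt₀ a
  have haε : a ∈ Ioo (a - ε) (a + ε) := ⟨by linarith, by linarith⟩
  have hαt : Tendsto α (𝓝[>] a) (𝓝 x₀) := by
    have := ((hαode a haε).continuousAt).tendsto
    rw [hα0] at this
    exact this.mono_left nhdsWithin_le_nhds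
  -- find a good interval (a, u]
  have hgood : ∀ᶠ t in 𝓝[>] a,
      (((t : ℝ), f t, deriv f t) ∈ U ∧ α t ∈ U) ∧ t ∈ Ioo a (min b (a + ε)) := by
    have hminb : a < min b (a + ε) := lt_min hab (by linarith)
    filter_upwards [hFt hU, hαt hU,
      Ioo_mem_nhdsGT_of_mem ⟨le_refl a, hminb⟩] with t h1 h2 h3
    exact ⟨⟨h1, h2⟩, h3⟩
  obtain ⟨u, hu, hsub⟩ := mem_nhdsGT_iff_exists_Ioc_subset.mp hgood
  have hu' : a < u := hu
  have huu := hsub ⟨hu', le_refl u⟩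
  have hub : u < b := lt_of_lt_of_le huu.2.2 (min_le_left _ _)
  have huε : u < a + ε := lt_of_lt_of_le huu.2.2 (min_le_right _ _)
  -- matching
  have hmatch : ∀ t ∈ Ioc a u, ((t : ℝ), f t, deriv f t) = α t := by
    refine match_of_tendsto hlip hu' ?_ ?_ ?_
    · intro t ht
      have ht' : t ∈ Ioo a b := ⟨ht.1, lt_of_le_of_lt ht.2 hub⟩
      exact ⟨hasDerivAt_F hsol ht', (hsub ht).1.1⟩
    · intro t ht
      have ht' : t ∈ Ioo (a - ε) (a + ε) := ⟨by linarith [ht.1], lt_of_le_of_lt ht.2 huε⟩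
      exact ⟨hαode t ht', (hsub ht).1.2⟩
    · have := hFt.dist hαt
      simpa [dist_self] using this
  -- first component of α is the identity
  have hα₁ : ∀ t ∈ Ioo (a - ε) (a + ε), (α t).1 = t := by
    have huniq := ODE_solution_unique_of_mem_Ioo (v := fun _ _ => (1 : ℝ))
      (s := fun _ => (univ : Set ℝ)) (K := 0)
      (fun _ _ => (LipschitzWith.const 1).lipschitzOnWith) (t₀ := a) haε
      (f := fun t => (α t).1) (g := id)
      (fun t ht => ⟨hasDerivAt_fst3 (hαode t ht), mem_univ _⟩)
      (fun t ht => ⟨hasDerivAt_id t, mem_univ _⟩)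
      (by show (α a).1 = a; rw [hα0])
    exact fun t ht => huniq ht
  -- derivative facts for α components
  have hα₂ : ∀ t ∈ Ioo (a - ε) (a + ε), HasDerivAt (fun s => (α s).2.1) ((α t).2.2) t := by
    intro t ht
    have h1 := hasDerivAt_snd3 (hαode t ht)
    exact hasDerivAt_fst3 h1
  have hα₃ : ∀ t ∈ Ioo (a - ε) (a + ε),
      HasDerivAt (fun s => (α s).2.2) (Phi n lam t ((α t).2.1) ((α t).2.2)) t := by
    intro t ht
    have h1 := hasDerivAt_snd3 (hαode t ht)
    have h := hasDerivAt_snd3 h1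
    simp only [V] at h
    rwa [hα₁ t ht] at h
  -- glue
  set η := min (u - a) ε / 2 with hη_def
  have hη : 0 < η := by
    rw [hη_def]
    have h1 : 0 < u - a := by linarith
    have h2 := lt_min h1 hε
    linarith
  have hη1 : η ≤ (u - a) / 2 := by
    have := min_le_left (u - a) ε
    rw [hη_def]; linarith
  have hη2 : η ≤ ε / 2 := by
    have := min_le_right (u - a) ε
    rw [hη_def]; linarith
  set m := a + η with hm_def
  set a' := a - η with ha'_def
  have hm_le_u : m ≤ u := by rw [hm_def]; linarith
  have hmb : m < b := lt_of_le_of_lt hm_le_u hub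
  have hma : a < m := by rw [hm_def]; linarith
  set g : ℝ → ℝ := fun r => if r < m then (α r).2.1 else f r with hg_def
  have hgα : EqOn g (fun s => (α s).2.1) (Iio m) := fun r hr => if_pos hr
  have hgf : EqOn g f (Ioo a b) := by
    intro r hr
    by_cases h : r < m
    · have h2 := hmatch r ⟨hr.1, le_trans h.le hm_le_u⟩
      have : g r = (α r).2.1 := if_pos h
      rw [this, ← h2]
    · simp only [hg_def]
      rw [if_neg h]
  have hO₁ : Ioo a' m ⊆ Ioo (a - ε) (a + ε) := by
    intro x hx
    constructor
    · have := hx.1; rw [ha'_def] at this; linarith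
    · have := hx.2; rw [hm_def] at this; linarith
  -- the solution property for g on (a', m)
  have hderiv_g₁ : ∀ r ∈ Ioo a' m, deriv g r = (α r).2.2 := by
    intro r hr
    have he : g =ᶠ[𝓝 r] fun s => (α s).2.1 := eventuallyEq_of_mem (Iio_mem_nhds hr.2) hgα
    rw [he.deriv_eq]
    exact (hα₂ r (hO₁ hr)).deriv
  have hsol_g₁ : ∀ r ∈ Ioo a' m, (DifferentiableAt ℝ g r ∧ DifferentiableAt ℝ (deriv g) r) ∧
      deriv (deriv g) r / (1 + (deriv g r) ^ 2) =
        (r - ((n : ℝ) - 1) / r) * deriv g r - g r - lam * Real.sqrt (1 + (deriv g r) ^ 2) := by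
    intro r hr
    have he : g =ᶠ[𝓝 r] fun s => (α s).2.1 := eventuallyEq_of_mem (Iio_mem_nhds hr.2) hgα
    have hd1 : DifferentiableAt ℝ g r :=
      he.differentiableAt_iff.mpr (hα₂ r (hO₁ hr)).differentiableAt
    have he2 : deriv g =ᶠ[𝓝 r] fun s => (α s).2.2 :=
      eventuallyEq_of_mem (Ioo_mem_nhds hr.1 hr.2) (fun x hx => hderiv_g₁ x hx)
    have hd2 : DifferentiableAt ℝ (deriv g) r :=
      he2.differentiableAt_iff.mpr (hα₃ r (hO₁ hr)).differentiableAt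
    have hdd : deriv (deriv g) r = Phi n lam r ((α r).2.1) ((α r).2.2) := by
      rw [he2.deriv_eq]
      exact (hα₃ r (hO₁ hr)).deriv
    refine ⟨⟨hd1, hd2⟩, ?_⟩
    rw [hdd, hderiv_g₁ r hr, hgα hr.2, Phi]
    exact mul_div_cancel_left₀ _ (one_add_sq_pos ((α r).2.2)).ne'
  -- the solution property for g on (a, b)
  have hgf' : ∀ r ∈ Ioo a b, deriv g r = deriv f r := fun r hr =>
    (eventuallyEq_of_mem (Ioo_mem_nhds hr.1 hr.2) hgf).deriv_eq
  have hsol_g₂ : ∀ r ∈ Ioo a b, (DifferentiableAt ℝ g r ∧ DifferentiableAt ℝ (deriv g) r) ∧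
      deriv (deriv g) r / (1 + (deriv g r) ^ 2) =
        (r - ((n : ℝ) - 1) / r) * deriv g r - g r - lam * Real.sqrt (1 + (deriv g r) ^ 2) := by
    intro r hr
    have he : g =ᶠ[𝓝 r] f := eventuallyEq_of_mem (Ioo_mem_nhds hr.1 hr.2) hgf
    have hd1 : DifferentiableAt ℝ g r := he.differentiableAt_iff.mpr (hsol.1 r hr).1
    have he2 : deriv g =ᶠ[𝓝 r] deriv f :=
      eventuallyEq_of_mem (Ioo_mem_nhds hr.1 hr.2) (fun x hx => hgf' x hx)
    have hd2 : DifferentiableAt ℝ (deriv g) r := he2.differentiableAt_iff.mpr (hsol.1 r hr).2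
    refine ⟨⟨hd1, hd2⟩, ?_⟩
    rw [he2.deriv_eq, hgf' r hr, hgf hr]
    exact hsol.2 r hr
  refine ⟨a', by rw [ha'_def]; linarith, g, ⟨?_, ?_⟩, hgf⟩
  · intro r hr
    by_cases hcase : a < r
    · exact (hsol_g₂ r ⟨hcase, hr.2⟩).1
    · exact (hsol_g₁ r ⟨hr.1, lt_of_le_of_lt (not_lt.mp hcase) hma⟩).1
  · intro r hr
    by_cases hcase : a < r
    · exact (hsol_g₂ r ⟨hcase, hr.2⟩).2
    · exact (hsol_g₁ r ⟨hr.1, lt_of_le_of_lt (not_lt.mp hcase) hma⟩).2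


set_option maxHeartbeats 1000000 in
lemma tendsto_pos (n : ℕ) (hn : 2 ≤ n) (lam b : ℝ) (hb : 0 < b) (f : ℝ → ℝ)
    (hsol : IsProfileSol n lam 0 b f)
    (hpos : ∀ r ∈ Ioo (0:ℝ) b, 0 < deriv f r)
    (hpos2 : ∀ r ∈ Ioo (0:ℝ) b, 0 < deriv (deriv f) r) :
    Tendsto (deriv f) (𝓝[>] (0:ℝ)) (𝓝 0) := by
  have hn' : (2:ℝ) ≤ (n:ℝ) := by exact_mod_cast hn
  have hc : (b / 2) ∈ Ioo (0:ℝ) b := ⟨by linarith, by linarith⟩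
  set c := b / 2 with hc_def
  have hfd : ∀ r ∈ Ioo (0:ℝ) b, HasDerivAt f (deriv f r) r := fun r hr => (hsol.1 r hr).1.hasDerivAt
  have hfc : ContinuousOn f (Ioo (0:ℝ) b) :=
    fun r hr => ((hsol.1 r hr).1.continuousAt).continuousWithinAt
  have hdc : ContinuousOn (deriv f) (Ioo (0:ℝ) b) :=
    fun r hr => ((hsol.1 r hr).2.continuousAt).continuousWithinAt
  have hmono' : StrictMonoOn (deriv f) (Ioo (0:ℝ) b) :=
    strictMonoOn_of_deriv_pos (convex_Ioo 0 b) hdc (by rwa [interior_Ioo])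
  have hIoo_sub : Ioo (0:ℝ) c ⊆ Ioo (0:ℝ) b := Ioo_subset_Ioo_right hc.2.le
  set P := deriv f c with hP_def
  have hP : 0 < P := hpos c hc
  have hPle : ∀ r ∈ Ioo (0:ℝ) c, deriv f r ≤ P := fun r hr => (hmono' (hIoo_sub hr) hc hr.2).le
  have hflow : ∀ r ∈ Ioo (0:ℝ) c, f c - P * c ≤ f r := by
    intro r hr
    obtain ⟨ξ, hξ, hs⟩ := exists_hasDerivAt_eq_slope f (deriv f) hr.2
      (hfc.mono (fun x hx => ⟨lt_of_lt_of_le hr.1 hx.1, lt_of_le_of_lt hx.2 hc.2⟩))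
      (fun x hx => hfd x ⟨lt_trans hr.1 hx.1, lt_trans hx.2 hc.2⟩)
    have hξ' : ξ ∈ Ioo (0:ℝ) c := ⟨lt_trans hr.1 hξ.1, hξ.2⟩
    have h1 : deriv f ξ ≤ P := hPle ξ hξ'
    have h0 : 0 < deriv f ξ := hpos ξ (hIoo_sub hξ')
    rw [eq_div_iff (by linarith [hr.2] : c - r ≠ 0)] at hs
    nlinarith [hr.1, hr.2]
  have hfup : ∀ r ∈ Ioo (0:ℝ) c, f r ≤ f c := by
    intro r hr
    have hmonof : StrictMonoOn f (Ioo (0:ℝ) b) :=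
      strictMonoOn_of_deriv_pos (convex_Ioo 0 b) hfc (by rwa [interior_Ioo])
    exact (hmonof (hIoo_sub hr) hc hr.2).le
  -- the limit of deriv f at 0⁺
  have hne : (Ioo (0:ℝ) b).Nonempty := nonempty_Ioo.mpr hb
  have hbd1 : BddBelow (deriv f '' Ioo (0:ℝ) b) := by
    refine ⟨0, fun y hy => ?_⟩
    obtain ⟨r, hr, rfl⟩ := hy
    exact (hpos r hr).le
  set L := sInf (deriv f '' Ioo (0:ℝ) b) with hL_def
  have htL : Tendsto (deriv f) (𝓝[>] (0:ℝ)) (𝓝 L) :=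
    MonotoneOn.tendsto_nhdsWithin_Ioo_right hne hmono'.monotoneOn hbd1
  have hL0 : 0 ≤ L := by
    refine le_csInf (hne.image _) ?_
    rintro y ⟨r, hr, rfl⟩
    exact (hpos r hr).le
  -- show L = 0
  rcases eq_or_lt_of_le hL0 with h0 | hL
  · rwa [← h0] at htL
  · exfalso
    have hLle : ∀ r ∈ Ioo (0:ℝ) b, L ≤ deriv f r := fun r hr =>
      csInf_le hbd1 (mem_image_of_mem _ hr)
    set M := |f c| + P * c with hM_def
    have hM0 : 0 ≤ M := by
      rw [hM_def]
      have := abs_nonneg (f c)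
      nlinarith [hP, hc.1]
    set Q := c * P + M + |lam| * Real.sqrt (1 + P ^ 2) + 1 with hQ_def
    have hsqnn : (0:ℝ) ≤ |lam| * Real.sqrt (1 + P ^ 2) :=
      mul_nonneg (abs_nonneg _) (Real.sqrt_nonneg _)
    have hQ : 0 < Q := by
      rw [hQ_def]
      nlinarith [hP, hc.1, hM0]
    set r₁ := min c (L / Q) / 2 with hr₁_def
    have hr₁pos : 0 < r₁ := by
      rw [hr₁_def]
      have := lt_min hc.1 (div_pos hL hQ)
      linarith
    have hr₁c : r₁ ∈ Ioo (0:ℝ) c := by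
      refine ⟨hr₁pos, ?_⟩
      rw [hr₁_def]
      have := min_le_left c (L / Q)
      linarith [hc.1]
    have hr₁b : r₁ ∈ Ioo (0:ℝ) b := hIoo_sub hr₁c
    have hr₁Q : r₁ < L / Q := by
      rw [hr₁_def]
      have h1 := min_le_right c (L / Q)
      have h2 := div_pos hL hQ
      linarith
    -- at r₁ the second derivative is negative
    set p := deriv f r₁ with hp_def
    have hp0 : 0 < p := hpos r₁ hr₁b
    have hpP : p ≤ P := hPle r₁ hr₁c
    have hpL : L ≤ p := hLle r₁ hr₁b
    have hsqle : Real.sqrt (1 + p ^ 2) ≤ Real.sqrt (1 + P ^ 2) := by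
      apply Real.sqrt_le_sqrt
      nlinarith
    have hW : (r₁ - ((n:ℝ) - 1) / r₁) * p - f r₁ - lam * Real.sqrt (1 + p ^ 2) < 0 := by
      have h1 : r₁ * p ≤ c * P := by nlinarith [hr₁c.2]
      have h2 : L / r₁ ≤ ((n:ℝ) - 1) / r₁ * p := by
        rw [div_mul_eq_mul_div]
        rw [div_le_div_iff₀ hr₁pos hr₁pos]
        have e1 : L * r₁ ≤ p * r₁ := mul_le_mul_of_nonneg_right hpL hr₁pos.le
        have e2 : p * r₁ ≤ ((n:ℝ) - 1) * p * r₁ := by nlinarith [mul_pos hp0 hr₁pos]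
        linarith
      have h3 : Q < L / r₁ := by
        rw [lt_div_iff₀ hr₁pos]
        rw [lt_div_iff₀ hQ] at hr₁Q
        nlinarith
      have h4 : -f r₁ ≤ M := by
        have := hflow r₁ hr₁c
        rw [hM_def]
        have habs : -(|f c|) ≤ f c := neg_abs_le (f c)
        linarith
      have h5 : -(lam * Real.sqrt (1 + p ^ 2)) ≤ |lam| * Real.sqrt (1 + P ^ 2) := by
        have h6 : -(lam * Real.sqrt (1 + p ^ 2)) ≤ |lam| * Real.sqrt (1 + p ^ 2) := by
          rw [neg_mul_eq_neg_mul]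
          exact mul_le_mul_of_nonneg_right (neg_le_abs lam) (Real.sqrt_nonneg _)
        have h7 : |lam| * Real.sqrt (1 + p ^ 2) ≤ |lam| * Real.sqrt (1 + P ^ 2) :=
          mul_le_mul_of_nonneg_left hsqle (abs_nonneg lam)
        linarith
      have hexp : (r₁ - ((n:ℝ) - 1) / r₁) * p = r₁ * p - ((n:ℝ) - 1) / r₁ * p := by ring
      rw [hexp]
      linarith [h1, h2, h3, h4, h5]
    have hD : deriv (deriv f) r₁ < 0 := by
      rw [deriv2_eq hsol hr₁b, Phi]
      exact mul_neg_of_pos_of_neg (one_add_sq_pos _) hW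
    exact absurd (hpos2 r₁ hr₁b) (not_lt.mpr hD.le)


/-- Combined result for a solution with positive `f'` and `f''`. -/
lemma main_pos (n : ℕ) (hn : 2 ≤ n) (lam a b : ℝ) (ha : 0 ≤ a) (hab : a < b) (f : ℝ → ℝ)
    (hsol : IsProfileSol n lam a b f)
    (hmax : ∀ a' : ℝ, a' < a →
      ¬ ∃ g : ℝ → ℝ, IsProfileSol n lam a' b g ∧ Set.EqOn g f (Set.Ioo a b))
    (hpos : ∀ r ∈ Ioo a b, 0 < deriv f r)
    (hpos2 : ∀ r ∈ Ioo a b, 0 < deriv (deriv f) r) :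
    a = 0 ∧ Tendsto (deriv f) (𝓝[>] (0:ℝ)) (𝓝 0) := by
  have ha0 : a = 0 := by
    rcases eq_or_lt_of_le ha with h | h
    · exact h.symm
    · exfalso
      obtain ⟨a', ha', g, hg, hgf⟩ := extend_pos n lam a b h hab f hsol hpos hpos2
      exact hmax a' ha' ⟨g, hg, hgf⟩
  subst ha0
  exact ⟨rfl, tendsto_pos n hn lam b hab f hsol hpos hpos2⟩


end Stmt8Aux

open Stmt8Aux in
/-- A left maximally extended C² solution on `(a,b) ⊂ (0,∞)` with `f'·f'' > 0` throughout
satisfies `a = 0` and `f'(r) → 0` as `r → 0⁺`. -/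
theorem stmt_8 (n : ℕ) (hn : 2 ≤ n) (lam a b : ℝ)
    (ha : 0 ≤ a) (hab : a < b)
    (f : ℝ → ℝ)
    (hsol : IsProfileSol n lam a b f)
    (hmax : ∀ a' : ℝ, a' < a →
      ¬ ∃ g : ℝ → ℝ, IsProfileSol n lam a' b g ∧ Set.EqOn g f (Set.Ioo a b))
    (hsign : ∀ r ∈ Set.Ioo a b, 0 < deriv f r * deriv (deriv f) r) :
    a = 0 ∧ Filter.Tendsto (deriv f) (nhdsWithin 0 (Set.Ioi 0)) (nhds 0) := by
  have hne0 : ∀ r ∈ Ioo a b, deriv f r ≠ 0 := by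
    intro r hr h0
    have := hsign r hr
    rw [h0, zero_mul] at this
    exact lt_irrefl 0 this
  have hdc : ContinuousOn (deriv f) (Ioo a b) :=
    fun r hr => ((hsol.1 r hr).2.continuousAt).continuousWithinAt
  have hdichot : (∀ r ∈ Ioo a b, 0 < deriv f r) ∨ (∀ r ∈ Ioo a b, deriv f r < 0) := by
    by_contra h
    push_neg at h
    obtain ⟨⟨x, hx, hx0⟩, ⟨y, hy, hy0⟩⟩ := h
    have hx0' : deriv f x < 0 := lt_of_le_of_ne hx0 (hne0 x hx)
    have hy0' : 0 < deriv f y := lt_of_le_of_ne' hy0 (hne0 y hy)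
    rcases lt_trichotomy x y with hxy | hxy | hxy
    · have hIcc : Icc x y ⊆ Ioo a b := fun z hz => ⟨lt_of_lt_of_le hx.1 hz.1, lt_of_le_of_lt hz.2 hy.2⟩
      have := intermediate_value_Icc hxy.le (hdc.mono hIcc)
      obtain ⟨z, hz, hz0⟩ := this ⟨hx0'.le, hy0'.le⟩
      exact hne0 z (hIcc hz) hz0
    · rw [hxy] at hx0'; linarith
    · have hIcc : Icc y x ⊆ Ioo a b := fun z hz => ⟨lt_of_lt_of_le hy.1 hz.1, lt_of_le_of_lt hz.2 hx.2⟩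
      have := intermediate_value_Icc' hxy.le (hdc.mono hIcc)
      obtain ⟨z, hz, hz0⟩ := this ⟨hx0'.le, hy0'.le⟩
      exact hne0 z (hIcc hz) hz0
  rcases hdichot with hpos | hneg
  · have hpos2 : ∀ r ∈ Ioo a b, 0 < deriv (deriv f) r := by
      intro r hr
      have h := hsign r hr
      nlinarith [hpos r hr]
    exact main_pos n hn lam a b ha hab f hsol hmax hpos hpos2
  · -- apply the positive case to -f
    set F : ℝ → ℝ := fun x => -f x with hF_def
    have hsolF : IsProfileSol n (-lam) a b F := neg_sol hsol
    have hdF : ∀ x, deriv F x = -deriv f x := by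
      intro x
      rw [hF_def]
      exact deriv.neg
    have hdF' : deriv F = fun x => -deriv f x := funext hdF
    have hddF : ∀ x, deriv (deriv F) x = -deriv (deriv f) x := by
      intro x
      rw [hdF']
      exact deriv.neg
    have hposF : ∀ r ∈ Ioo a b, 0 < deriv F r := by
      intro r hr
      rw [hdF]
      linarith [hneg r hr]
    have hpos2F : ∀ r ∈ Ioo a b, 0 < deriv (deriv F) r := by
      intro r hr
      rw [hddF]
      have h := hsign r hr
      nlinarith [hneg r hr]
    have hmaxF : ∀ a' : ℝ, a' < a →
        ¬ ∃ g : ℝ → ℝ, IsProfileSol n (-lam) a' b g ∧ Set.EqOn g F (Set.Ioo a b) := by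
      intro a' ha' ⟨g, hg, hgF⟩
      refine hmax a' ha' ⟨fun x => -g x, ?_, ?_⟩
      · have := neg_sol hg
        rwa [neg_neg] at this
      · intro r hr
        have := hgF hr
        simp only [hF_def] at this ⊢
        rw [this]
        ring
    obtain ⟨ha0, htend⟩ := main_pos n hn (-lam) a b ha hab F hsolF hmaxF hposF hpos2F
    refine ⟨ha0, ?_⟩
    have : Tendsto (fun r => -deriv F r) (𝓝[>] (0:ℝ)) (𝓝 (-0)) := htend.neg
    rw [neg_zero] at this
    have heq : (fun r => -deriv F r) = deriv f := by
      funext x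
      rw [hdF x, neg_neg]
    rwa [heq] at this
end

section
/- Let f : (a,b) → ℝ, with (a,b) ⊂ (0,∞), be a right maximally extended C² solution of f''/(1+(f')²) = (r − (n−1)/r)·f' − f − λ·√(1+(f')²) with f'·f'' < 0 on (a,b). Then b = ∞. -/
open Set Filter Topology

noncomputable def Vf (n : ℕ) (lam : ℝ) : ℝ × ℝ × ℝ → ℝ × ℝ × ℝ :=
  fun X => (1, X.2.2,
    (1 + X.2.2 ^ 2) * ((X.1 - ((n : ℝ) - 1) / X.1) * X.2.2 - X.2.1
      - lam * Real.sqrt (1 + X.2.2 ^ 2)))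

lemma vf_contDiffAt (n : ℕ) (lam : ℝ) (X : ℝ × ℝ × ℝ) (hX : X.1 ≠ 0) :
    ContDiffAt ℝ 1 (Vf n lam) X := by
  have hp : ContDiffAt ℝ 1 (fun Y : ℝ × ℝ × ℝ => Y.2.2) X :=
    (contDiff_snd.comp contDiff_snd).contDiffAt
  have hy : ContDiffAt ℝ 1 (fun Y : ℝ × ℝ × ℝ => Y.2.1) X :=
    (contDiff_fst.comp contDiff_snd).contDiffAt
  have hs : ContDiffAt ℝ 1 (fun Y : ℝ × ℝ × ℝ => Y.1) X := contDiff_fst.contDiffAt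
  have hq : ContDiffAt ℝ 1 (fun Y : ℝ × ℝ × ℝ => 1 + Y.2.2 ^ 2) X :=
    contDiffAt_const.add (hp.pow 2)
  have hqpos : (0:ℝ) < 1 + X.2.2 ^ 2 := by positivity
  have hsqrt : ContDiffAt ℝ 1 (fun Y : ℝ × ℝ × ℝ => Real.sqrt (1 + Y.2.2 ^ 2)) X :=
    (Real.contDiffAt_sqrt hqpos.ne').comp X hq
  have hdiv : ContDiffAt ℝ 1 (fun Y : ℝ × ℝ × ℝ => ((n:ℝ)-1) / Y.1) X :=
    contDiffAt_const.div hs hX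
  exact ContDiffAt.prodMk contDiffAt_const (hp.prodMk (hq.mul
    ((((hs.sub hdiv).mul hp).sub hy).sub (contDiffAt_const.mul hsqrt))))

lemma hasDerivAt_fst3 {c : ℝ → ℝ × ℝ × ℝ} {v : ℝ × ℝ × ℝ} {t : ℝ}
    (h : HasDerivAt c v t) : HasDerivAt (fun t => (c t).1) v.1 t := by
  exact (ContinuousLinearMap.fst ℝ ℝ (ℝ × ℝ)).hasFDerivAt.comp_hasDerivAt t h

lemma hasDerivAt_snd3 {c : ℝ → ℝ × ℝ × ℝ} {v : ℝ × ℝ × ℝ} {t : ℝ}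
    (h : HasDerivAt c v t) : HasDerivAt (fun t => (c t).2.1) v.2.1 t := by
  exact (ContinuousLinearMap.fst ℝ ℝ ℝ).hasFDerivAt.comp_hasDerivAt t
    ((ContinuousLinearMap.snd ℝ ℝ (ℝ × ℝ)).hasFDerivAt.comp_hasDerivAt t h)

lemma hasDerivAt_thd3 {c : ℝ → ℝ × ℝ × ℝ} {v : ℝ × ℝ × ℝ} {t : ℝ}
    (h : HasDerivAt c v t) : HasDerivAt (fun t => (c t).2.2) v.2.2 t := by
  exact (ContinuousLinearMap.snd ℝ ℝ ℝ).hasFDerivAt.comp_hasDerivAt t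
    ((ContinuousLinearMap.snd ℝ ℝ (ℝ × ℝ)).hasFDerivAt.comp_hasDerivAt t h)

lemma exists_limits_pos (a b : ℝ) (hab : a < b) (f : ℝ → ℝ)
    (hd : ∀ r ∈ Set.Ioo a b, DifferentiableAt ℝ f r)
    (hd' : ∀ r ∈ Set.Ioo a b, DifferentiableAt ℝ (deriv f) r)
    (hpos : ∀ r ∈ Set.Ioo a b, 0 < deriv f r)
    (hneg : ∀ r ∈ Set.Ioo a b, deriv (deriv f) r < 0) :
    ∃ L M : ℝ, Tendsto f (𝓝[<] b) (𝓝 L) ∧ Tendsto (deriv f) (𝓝[<] b) (𝓝 M) := by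
  have hfc : ContinuousOn f (Ioo a b) := fun r hr => ((hd r hr).continuousAt).continuousWithinAt
  have hf'c : ContinuousOn (deriv f) (Ioo a b) := fun r hr =>
    ((hd' r hr).continuousAt).continuousWithinAt
  have hanti : StrictAntiOn (deriv f) (Ioo a b) :=
    strictAntiOn_of_deriv_neg (convex_Ioo a b) hf'c (by rwa [interior_Ioo])
  have hmono : StrictMonoOn f (Ioo a b) :=
    strictMonoOn_of_deriv_pos (convex_Ioo a b) hfc (by rwa [interior_Ioo])
  set c : ℝ := (a + b) / 2 with hc
  have hcmem : c ∈ Ioo a b := ⟨by simp only [hc]; linarith, by simp only [hc]; linarith⟩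
  set c' : ℝ := (c + b) / 2 with hc'
  have hcc' : c < c' := by simp only [hc']; linarith [hcmem.2]
  have hc'b : c' < b := by simp only [hc']; linarith [hcmem.2]
  have hc'mem : c' ∈ Ioo a b := ⟨hcmem.1.trans hcc', hc'b⟩
  have hsub : Ioo c b ⊆ Ioo a b := Ioo_subset_Ioo hcmem.1.le le_rfl
  have hne : (Ioo c b).Nonempty := ⟨c', hcc', hc'b⟩
  have hMlim := AntitoneOn.tendsto_nhdsWithin_Ioo_left hne
    ((hanti.antitoneOn).mono hsub)
    ⟨0, by rintro y ⟨x, hx, rfl⟩; exact (hpos x (hsub hx)).le⟩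
  set φ : ℝ → ℝ := fun r => deriv f c * r - f r with hφ
  have hφmono : StrictMonoOn φ (Ioo c b) := by
    apply strictMonoOn_of_deriv_pos (convex_Ioo c b)
    · exact (continuous_const.mul continuous_id).continuousOn.sub (hfc.mono hsub)
    · intro x hx
      rw [interior_Ioo] at hx
      have hx' : x ∈ Ioo a b := hsub hx
      have hdx : HasDerivAt φ (deriv f c * 1 - deriv f x) x :=
        ((hasDerivAt_id x).const_mul (deriv f c)).sub ((hd x hx').hasDerivAt)
      rw [hdx.deriv]
      have := hanti hcmem hx' hx.1
      linarith
  have hbdd : ∀ r ∈ Ioo c b, f r ≤ max (f c') (deriv f c * b - φ c') := by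
    intro r hr
    rcases le_or_gt r c' with h | h
    · exact le_max_of_le_left ((hmono.monotoneOn) (hsub hr) hc'mem h)
    · refine le_max_of_le_right ?_
      have h1 : φ c' ≤ φ r := (hφmono.monotoneOn) ⟨hcc', hc'b⟩ hr h.le
      have h2 : deriv f c * r ≤ deriv f c * b :=
        mul_le_mul_of_nonneg_left hr.2.le (hpos c hcmem).le
      simp only [hφ] at h1 ⊢
      linarith
  have hLlim := MonotoneOn.tendsto_nhdsWithin_Ioo_left hne
    ((hmono.monotoneOn).mono hsub)
    ⟨max (f c') (deriv f c * b - φ c'), by rintro y ⟨x, hx, rfl⟩; exact hbdd x hx⟩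
  exact ⟨_, _, hLlim, hMlim⟩

/-- A right maximally extended solution with `f'·f'' < 0` on `(a,b) ⊂ (0,∞)` must have
`b = ∞`; i.e. there is no such solution with a finite right endpoint `b`. -/
theorem stmt_10 (n : ℕ) (hn : 2 ≤ n) (lam a b : ℝ)
    (ha : 0 ≤ a) (hab : a < b)
    (f : ℝ → ℝ)
    (hsol : IsProfileSol n lam a b f)
    (hmax : ∀ b' : ℝ, b < b' →
      ¬ ∃ g : ℝ → ℝ, IsProfileSol n lam a b' g ∧ Set.EqOn g f (Set.Ioo a b))
    (hsign : ∀ r ∈ Set.Ioo a b, deriv f r * deriv (deriv f) r < 0) :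
    False := by
  obtain ⟨hreg, heq⟩ := hsol
  have hd : ∀ r ∈ Ioo a b, DifferentiableAt ℝ f r := fun r hr => (hreg r hr).1
  have hd' : ∀ r ∈ Ioo a b, DifferentiableAt ℝ (deriv f) r := fun r hr => (hreg r hr).2
  have hb0 : 0 < b := lt_of_le_of_lt ha hab
  have hqpos : ∀ p : ℝ, (0:ℝ) < 1 + p ^ 2 := fun p => by positivity
  have hne0 : ∀ r ∈ Ioo a b, deriv f r ≠ 0 := by
    intro r hr h0
    have := hsign r hr
    rw [h0, zero_mul] at this
    exact lt_irrefl 0 this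
  -- limits of f and f' at b from the left
  obtain ⟨L, M, hL, hM⟩ : ∃ L M, Tendsto f (𝓝[<] b) (𝓝 L) ∧
      Tendsto (deriv f) (𝓝[<] b) (𝓝 M) := by
    have hdich : (∀ r ∈ Ioo a b, 0 < deriv f r) ∨ (∀ r ∈ Ioo a b, deriv f r < 0) := by
      by_contra hcon
      push_neg at hcon
      obtain ⟨⟨r₁, hr₁, hr₁'⟩, ⟨r₂, hr₂, hr₂'⟩⟩ := hcon
      have hsub : uIcc r₁ r₂ ⊆ Ioo a b := (Set.ordConnected_Ioo).uIcc_subset hr₁ hr₂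
      have hcont : ContinuousOn (deriv f) (uIcc r₁ r₂) := fun x hx =>
        ((hd' x (hsub hx)).continuousAt).continuousWithinAt
      have h0 : (0:ℝ) ∈ uIcc (deriv f r₁) (deriv f r₂) := by
        rw [Set.mem_uIcc]; left; exact ⟨hr₁', hr₂'⟩
      obtain ⟨x, hx, hx0⟩ := intermediate_value_uIcc hcont h0
      exact hne0 x (hsub hx) hx0
    rcases hdich with hpos | hneg
    · exact exists_limits_pos a b hab f hd hd' hpos
        (fun r hr => by nlinarith [hsign r hr, hpos r hr])
    · have hdneg : deriv (fun x => -f x) = fun x => -deriv f x := deriv.neg'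
      obtain ⟨L, M, h1, h2⟩ := exists_limits_pos a b hab (fun x => -f x)
        (fun r hr => (hd r hr).neg)
        (fun r hr => by rw [hdneg]; exact (hd' r hr).neg)
        (fun r hr => by rw [hdneg]; exact neg_pos.mpr (hneg r hr))
        (fun r hr => by
          rw [hdneg, deriv.fun_neg]
          have : 0 < deriv (deriv f) r := by nlinarith [hsign r hr, hneg r hr]
          linarith)
      refine ⟨-L, -M, by simpa using h1.neg, ?_⟩
      rw [hdneg] at h2
      simpa using h2.neg
  -- local solution through (b, L, M)
  set x₀ : ℝ × ℝ × ℝ := (b, L, M) with hx₀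
  have hV : ContDiffAt ℝ 1 (Vf n lam) x₀ := vf_contDiffAt n lam x₀ (ne_of_gt hb0)
  obtain ⟨α, hα0, ε, hε, hαd⟩ := hV.exists_forall_mem_closedBall_exists_eq_forall_mem_Ioo_hasDerivAt₀ b
  have hbI : b ∈ Ioo (b - ε) (b + ε) := ⟨by linarith, by linarith⟩
  -- first coordinate of α is the identity
  have hα1 : ∀ t ∈ Ioo (b - ε) (b + ε), (α t).1 = t := by
    have h := ODE_solution_unique_of_mem_Ioo (v := fun _ _ => (1:ℝ)) (s := fun _ => univ)
      (K := 0) (f := fun t => (α t).1) (g := fun t => t) (t₀ := b)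
      (a := b - ε) (b := b + ε)
      (fun _ _ => (LipschitzWith.const (1:ℝ)).lipschitzOnWith)
      hbI
      (fun t ht => ⟨hasDerivAt_fst3 (hαd t ht), trivial⟩)
      (fun t ht => ⟨hasDerivAt_id t, trivial⟩)
      (by show (α b).1 = b; rw [hα0])
    exact fun t ht => h ht
  have hα2d : ∀ t ∈ Ioo (b - ε) (b + ε), HasDerivAt (fun s => (α s).2.1) ((α t).2.2) t :=
    fun t ht => hasDerivAt_snd3 (hαd t ht)
  have hα3d : ∀ t ∈ Ioo (b - ε) (b + ε), HasDerivAt (fun s => (α s).2.2)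
      ((1 + (α t).2.2 ^ 2) * ((t - ((n:ℝ)-1)/t) * (α t).2.2 - (α t).2.1
        - lam * Real.sqrt (1 + (α t).2.2 ^ 2))) t := by
    intro t ht
    have h := hasDerivAt_thd3 (hαd t ht)
    have h3 : (Vf n lam (α t)).2.2 = (1 + (α t).2.2 ^ 2) *
        (((α t).1 - ((n:ℝ)-1)/(α t).1) * (α t).2.2 - (α t).2.1
          - lam * Real.sqrt (1 + (α t).2.2 ^ 2)) := rfl
    rw [h3, hα1 t ht] at h
    exact h
  -- the nice form of the solution curve
  have hNd : ∀ t ∈ Ioo a b,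
      HasDerivAt (fun s => (s, f s, deriv f s)) (Vf n lam (t, f t, deriv f t)) t := by
    intro t ht
    have hder : HasDerivAt (fun s => (s, f s, deriv f s)) (1, deriv f t, deriv (deriv f) t) t :=
      (hasDerivAt_id t).prodMk (((hd t ht).hasDerivAt).prodMk ((hd' t ht).hasDerivAt))
    have e := heq t ht
    rw [div_eq_iff (hqpos (deriv f t)).ne'] at e
    have hVeq : Vf n lam (t, f t, deriv f t) = (1, deriv f t, deriv (deriv f) t) := by
      simp only [Vf, Prod.mk.injEq]
      refine ⟨by trivial, by trivial, ?_⟩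
      rw [e]; ring
    rw [hVeq]
    exact hder
  -- the extended curve F
  set F : ℝ → ℝ × ℝ × ℝ := fun t => if t < b then (t, f t, deriv f t) else (b, L, M) with hF
  have hFb : F b = (b, L, M) := by simp [hF]
  have hFmem : ∀ t ∈ Ioo a b, F t = (t, f t, deriv f t) := fun t ht => by simp [hF, ht.2]
  have hFeq : ∀ t ∈ Ioo a b, F =ᶠ[𝓝 t] fun s => (s, f s, deriv f s) := by
    intro t ht
    filter_upwards [Iio_mem_nhds ht.2] with s hs
    have hs' : s < b := hs
    simp [hF, hs']
  have hFtend : Tendsto F (𝓝[<] b) (𝓝 (b, L, M)) := by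
    have h1 : Tendsto (fun s => (s, f s, deriv f s)) (𝓝[<] b) (𝓝 (b, L, M)) :=
      (tendsto_id.mono_left nhdsWithin_le_nhds).prodMk_nhds (hL.prodMk_nhds hM)
    refine h1.congr' ?_
    filter_upwards [self_mem_nhdsWithin] with s (hs : s < b)
    simp [hF, hs]
  have hFd : ∀ t ∈ Ioo a b, HasDerivAt F (Vf n lam (F t)) t := by
    intro t ht
    rw [hFmem t ht]
    exact (hNd t ht).congr_of_eventuallyEq (hFeq t ht)
  -- Lipschitz neighbourhood of x₀
  obtain ⟨K, sL, hsL, hlip⟩ := hV.exists_lipschitzOnWith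
  have hx₀sL : x₀ ∈ sL := mem_of_mem_nhds hsL
  have hαcont : ContinuousAt α b := (hαd b hbI).continuousAt
  have hev : ∀ᶠ t in 𝓝[<] b, F t ∈ sL ∧ α t ∈ sL := by
    have h1 : ∀ᶠ t in 𝓝[<] b, F t ∈ sL := hFtend.eventually_mem hsL
    have h2 : ∀ᶠ t in 𝓝 b, α t ∈ sL := hαcont.eventually_mem (by rwa [hα0])
    exact h1.and (h2.filter_mono nhdsWithin_le_nhds)
  obtain ⟨l, hl, hlsub⟩ := mem_nhdsLT_iff_exists_Ioo_subset.mp hev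
  set c₀ : ℝ := max (max l a) (b - ε) with hc₀
  have hc₀b : c₀ < b := by
    simp only [hc₀, max_lt_iff]
    exact ⟨⟨hl, hab⟩, by linarith⟩
  set t₁ : ℝ := (c₀ + b) / 2 with ht₁
  have ht₁c₀ : c₀ < t₁ := by simp only [ht₁]; linarith
  have ht₁b : t₁ < b := by simp only [ht₁]; linarith
  have ht₁a : a < t₁ := lt_of_le_of_lt ((le_max_right l a).trans (le_max_left _ _)) ht₁c₀
  have ht₁l : l < t₁ := lt_of_le_of_lt ((le_max_left l a).trans (le_max_left _ _)) ht₁c₀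
  have ht₁ε : b - ε < t₁ := lt_of_le_of_lt (le_max_right _ _) ht₁c₀
  have hIccI : Icc t₁ b ⊆ Ioo (b - ε) (b + ε) := fun x hx =>
    ⟨lt_of_lt_of_le ht₁ε hx.1, lt_of_le_of_lt hx.2 (by linarith)⟩
  -- uniqueness: F = α on [t₁, b]
  have hEq : EqOn F α (Icc t₁ b) := by
    refine ODE_solution_unique_of_mem_Icc_left (v := fun _ => Vf n lam) (s := fun _ => sL)
      (K := K) (fun _ _ => hlip) ?_ ?_ ?_ ?_ ?_ ?_ ?_
    · -- ContinuousOn F (Icc t₁ b)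
      intro t ht
      rcases lt_or_eq_of_le ht.2 with h | h
      · exact ((hFd t ⟨lt_of_lt_of_le ht₁a ht.1, h⟩).continuousAt).continuousWithinAt
      · subst h
        have hmain : ContinuousWithinAt F (Iio t) t := by
          show Tendsto F (𝓝[Iio t] t) (𝓝 (F t))
          rw [hFb]
          exact hFtend
        have h2 : ContinuousWithinAt F (insert t (Iio t)) t :=
          continuousWithinAt_insert_self.mpr hmain
        exact h2.mono (fun x hx => by
          rcases lt_or_eq_of_le hx.2 with h' | h'
          · exact Or.inr h'
          · exact Or.inl h')
    · -- HasDerivWithinAt F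
      intro t ht
      rcases lt_or_eq_of_le ht.2 with h | h
      · exact (hFd t ⟨ht₁a.trans ht.1, h⟩).hasDerivWithinAt
      · subst h
        have f_diff : DifferentiableOn ℝ F (Ioo a t) := fun x hx =>
          ((hFd x hx).differentiableAt).differentiableWithinAt
        have f_lim : ContinuousWithinAt F (Ioo a t) t := by
          show Tendsto F (𝓝[Ioo a t] t) (𝓝 (F t))
          rw [hFb]
          exact hFtend.mono_left (nhdsWithin_mono t Ioo_subset_Iio_self)
        have hs : Ioo a t ∈ 𝓝[<] t := Ioo_mem_nhdsLT hab
        have f_lim' : Tendsto (fun x => deriv F x) (𝓝[<] t) (𝓝 (Vf n lam (t, L, M))) := by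
          have h1 : Tendsto (fun s => Vf n lam (s, f s, deriv f s)) (𝓝[<] t)
              (𝓝 (Vf n lam (t, L, M))) :=
            (hV.continuousAt.tendsto).comp
              ((tendsto_id.mono_left nhdsWithin_le_nhds).prodMk_nhds (hL.prodMk_nhds hM))
          refine h1.congr' ?_
          filter_upwards [hs] with s hs'
          rw [(hFd s hs').deriv, hFmem s hs']
        have hres := hasDerivWithinAt_Iic_of_tendsto_deriv f_diff f_lim hs f_lim'
        rw [hFb]
        exact hres
    · -- F t ∈ sL
      intro t ht
      rcases lt_or_eq_of_le ht.2 with h | h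
      · exact (hlsub ⟨ht₁l.trans ht.1, h⟩).1
      · subst h; rw [hFb]; exact hx₀sL
    · exact fun t ht => ((hαd t (hIccI ht)).continuousAt).continuousWithinAt
    · exact fun t ht => (hαd t (hIccI ⟨ht.1.le, ht.2⟩)).hasDerivWithinAt
    · intro t ht
      rcases lt_or_eq_of_le ht.2 with h | h
      · exact (hlsub ⟨ht₁l.trans ht.1, h⟩).2
      · subst h; rw [hα0]; exact hx₀sL
    · rw [hFb, hα0]
  have hfα : ∀ t ∈ Ico t₁ b, f t = (α t).2.1 ∧ deriv f t = (α t).2.2 := by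
    intro t ht
    have h := hEq ⟨ht.1, ht.2.le⟩
    rw [hFmem t ⟨ht₁a.trans_le ht.1, ht.2⟩] at h
    exact ⟨congrArg (fun X : ℝ × ℝ × ℝ => X.2.1) h, congrArg (fun X : ℝ × ℝ × ℝ => X.2.2) h⟩
  -- the extension g
  set g : ℝ → ℝ := fun r => if r < b then f r else (α r).2.1 with hgdef
  have hgf : EqOn g f (Ioo a b) := fun r hr => by simp [hgdef, hr.2]
  have hUsub : Ioo t₁ (b + ε) ⊆ Ioo (b - ε) (b + ε) := fun x hx => ⟨ht₁ε.trans hx.1, hx.2⟩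
  have hgα : ∀ r ∈ Ioo t₁ (b + ε), g r = (α r).2.1 := by
    intro r hr
    by_cases h : r < b
    · simp only [hgdef, if_pos h]
      exact (hfα r ⟨hr.1.le, h⟩).1
    · simp [hgdef, h]
  have hgd2 : ∀ r ∈ Ioo t₁ (b + ε), deriv g r = (α r).2.2 := by
    intro r hr
    have hevg : g =ᶠ[𝓝 r] fun s => (α s).2.1 := by
      filter_upwards [isOpen_Ioo.mem_nhds hr] with s hs
      exact hgα s hs
    rw [hevg.deriv_eq, (hα2d r (hUsub hr)).deriv]
  refine hmax (b + ε) (by linarith) ⟨g, ⟨?_, ?_⟩, hgf⟩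
  · -- differentiability
    intro r hr
    by_cases h : r < b
    · have hr' : r ∈ Ioo a b := ⟨hr.1, h⟩
      have hevg : g =ᶠ[𝓝 r] f := by
        filter_upwards [isOpen_Ioo.mem_nhds hr'] with s hs
        exact hgf hs
      have hevg' : deriv g =ᶠ[𝓝 r] deriv f := by
        filter_upwards [isOpen_Ioo.mem_nhds hr'] with s hs
        exact Filter.EventuallyEq.deriv_eq (by
          filter_upwards [isOpen_Ioo.mem_nhds hs] with u hu
          exact hgf hu)
      exact ⟨hevg.differentiableAt_iff.mpr (hd r hr'),
        hevg'.differentiableAt_iff.mpr (hd' r hr')⟩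
    · have hrU : r ∈ Ioo t₁ (b + ε) := ⟨lt_of_lt_of_le ht₁b (not_lt.mp h), hr.2⟩
      have hevg : g =ᶠ[𝓝 r] fun s => (α s).2.1 := by
        filter_upwards [isOpen_Ioo.mem_nhds hrU] with s hs
        exact hgα s hs
      have hevg' : deriv g =ᶠ[𝓝 r] fun s => (α s).2.2 := by
        filter_upwards [isOpen_Ioo.mem_nhds hrU] with s hs
        exact hgd2 s hs
      exact ⟨hevg.differentiableAt_iff.mpr (hα2d r (hUsub hrU)).differentiableAt,
        hevg'.differentiableAt_iff.mpr (hα3d r (hUsub hrU)).differentiableAt⟩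
  · -- the equation
    intro r hr
    by_cases h : r < b
    · have hr' : r ∈ Ioo a b := ⟨hr.1, h⟩
      have hevg : g =ᶠ[𝓝 r] f := by
        filter_upwards [isOpen_Ioo.mem_nhds hr'] with s hs
        exact hgf hs
      have hevg' : deriv g =ᶠ[𝓝 r] deriv f := by
        filter_upwards [isOpen_Ioo.mem_nhds hr'] with s hs
        exact Filter.EventuallyEq.deriv_eq (by
          filter_upwards [isOpen_Ioo.mem_nhds hs] with u hu
          exact hgf hu)
      rw [hgf hr', hevg'.deriv_eq, hevg.deriv_eq]
      exact heq r hr'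
    · have hrU : r ∈ Ioo t₁ (b + ε) := ⟨lt_of_lt_of_le ht₁b (not_lt.mp h), hr.2⟩
      have hrI := hUsub hrU
      have hevg' : deriv g =ᶠ[𝓝 r] fun s => (α s).2.2 := by
        filter_upwards [isOpen_Ioo.mem_nhds hrU] with s hs
        exact hgd2 s hs
      rw [hgα r hrU, hgd2 r hrU, hevg'.deriv_eq, (hα3d r hrI).deriv]
      exact mul_div_cancel_left₀ _ (hqpos ((α r).2.2)).ne'
end

section
/- Let λ < 0, n ≥ 2, x₀ > −λ, u₀ > 0, σ > 0 with u₀ = σ·x₀ + λ·√(1+σ²), and let u solve u'' = [x·u' − u + (n−1)/u + λ·√(1+(u')²)]·(1+(u')²) on its maximal interval [x₀, x_∞) with u(x₀) = u₀ and u'(x₀) ≥ σ. Then, defining Ψ(x) := x·u'(x) + λ·√(1+(u'(x))²) − u(x), one has Ψ ≥ 0, Ψ' > 0, u' > 0 and u'' > 0 on [x₀, x_∞). -/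
open Real Set Filter Topology

private lemma sqrt1p_pos (t : ℝ) : 0 < Real.sqrt (1 + t ^ 2) := Real.sqrt_pos.2 (by positivity)

private lemma lt_sqrt1p (t : ℝ) : t < Real.sqrt (1 + t ^ 2) := by
  have h := Real.sqrt_lt_sqrt (sq_nonneg t) (by linarith : t ^ 2 < 1 + t ^ 2)
  rw [Real.sqrt_sq_eq_abs] at h
  exact lt_of_le_of_lt (le_abs_self t) h

private lemma sqrt1p_sub_le (σ t : ℝ) (hσ : 0 < σ) (h : σ ≤ t) :
    Real.sqrt (1 + t ^ 2) - Real.sqrt (1 + σ ^ 2) ≤ t - σ := by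
  have ha := sqrt1p_pos t
  have hb := sqrt1p_pos σ
  have ha2 : Real.sqrt (1 + t ^ 2) ^ 2 = 1 + t ^ 2 := Real.sq_sqrt (by positivity)
  have hb2 : Real.sqrt (1 + σ ^ 2) ^ 2 = 1 + σ ^ 2 := Real.sq_sqrt (by positivity)
  have hta := lt_sqrt1p t
  have htb := lt_sqrt1p σ
  nlinarith [mul_pos ha hb]

private lemma factor_pos (lam x t : ℝ) (hlam : lam < 0) (hx : -lam < x) :
    0 < x + lam * (t / Real.sqrt (1 + t ^ 2)) := by
  have hs := sqrt1p_pos t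
  have h1 : t / Real.sqrt (1 + t ^ 2) < 1 := (div_lt_one hs).2 (lt_sqrt1p t)
  have h2 : lam * 1 < lam * (t / Real.sqrt (1 + t ^ 2)) :=
    (mul_lt_mul_left_of_neg hlam).2 h1
  nlinarith

/-- For the IVP `u'' = [x·u' − u + (n−1)/u + λ√(1+(u')²)]·(1+(u')²)`, `u(x₀) = u₀`,
`u'(x₀) ≥ σ`, with `λ < 0`, `x₀ > −λ`, `u₀ > 0`, `σ > 0`, `u₀ = σx₀ + λ√(1+σ²)`, the
quantity `Ψ(x) = x·u'(x) + λ√(1+(u'(x))²) − u(x)` satisfies `Ψ ≥ 0`, `Ψ' > 0`, and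
`u' > 0`, `u'' > 0` on `[x₀, x_∞)`. -/
theorem stmt_11 (n : ℕ) (hn : 2 ≤ n) (lam x₀ xI u₀ σ : ℝ)
    (hlam : lam < 0) (hx₀ : -lam < x₀) (hu₀ : 0 < u₀) (hσ : 0 < σ)
    (hrel : u₀ = σ * x₀ + lam * Real.sqrt (1 + σ ^ 2))
    (hxI : x₀ < xI)
    (u : ℝ → ℝ)
    (hreg : ∀ x ∈ Set.Ico x₀ xI, DifferentiableAt ℝ u x ∧ DifferentiableAt ℝ (deriv u) x)
    (hupos : ∀ x ∈ Set.Ico x₀ xI, 0 < u x)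
    (hode : ∀ x ∈ Set.Ico x₀ xI,
      deriv (deriv u) x =
        (x * deriv u x - u x + ((n : ℝ) - 1) / u x
            + lam * Real.sqrt (1 + (deriv u x) ^ 2)) * (1 + (deriv u x) ^ 2))
    (hinit : u x₀ = u₀) (hinit' : σ ≤ deriv u x₀) :
    ∀ x ∈ Set.Ico x₀ xI,
      0 ≤ x * deriv u x + lam * Real.sqrt (1 + (deriv u x) ^ 2) - u x ∧
      0 < deriv (fun t => t * deriv u t + lam * Real.sqrt (1 + (deriv u t) ^ 2) - u t) x ∧
      0 < deriv u x ∧ 0 < deriv (deriv u) x := by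
  set Ψ : ℝ → ℝ := fun t => t * deriv u t + lam * Real.sqrt (1 + (deriv u t) ^ 2) - u t
    with hΨdef
  have hn1 : (0:ℝ) < (n:ℝ) - 1 := by
    have : (2:ℝ) ≤ n := by exact_mod_cast hn
    linarith
  -- derivative of Ψ
  have hΨderiv : ∀ x ∈ Set.Ico x₀ xI, HasDerivAt Ψ
      (deriv (deriv u) x *
        (x + lam * (deriv u x / Real.sqrt (1 + (deriv u x) ^ 2)))) x := by
    intro x hx
    have hu' : HasDerivAt u (deriv u x) x := (hreg x hx).1.hasDerivAt
    have hv' : HasDerivAt (deriv u) (deriv (deriv u) x) x := (hreg x hx).2.hasDerivAt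
    have hsne : (1 + (deriv u x) ^ 2) ≠ 0 := by positivity
    have h1 : HasDerivAt (fun t => t * deriv u t)
        (1 * deriv u x + x * deriv (deriv u) x) x := (hasDerivAt_id x).mul hv'
    have h2 : HasDerivAt (fun t => 1 + (deriv u t) ^ 2)
        ((2:ℕ) * (deriv u x) ^ 1 * deriv (deriv u) x) x := (hv'.pow 2).const_add 1
    have h3 : HasDerivAt (fun t => Real.sqrt (1 + (deriv u t) ^ 2))
        ((2:ℕ) * (deriv u x) ^ 1 * deriv (deriv u) x /
          (2 * Real.sqrt (1 + (deriv u x) ^ 2))) x := h2.sqrt hsne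
    have h4 := (h1.add (h3.const_mul lam)).sub hu'
    have h5 : HasDerivAt Ψ (1 * deriv u x + x * deriv (deriv u) x +
        lam * ((2:ℕ) * (deriv u x) ^ 1 * deriv (deriv u) x / (2 * Real.sqrt (1 + (deriv u x) ^ 2))) - deriv u x) x := h4
    convert h5 using 1
    have hs := sqrt1p_pos (deriv u x)
    field_simp
    ring
  have hΨcont : ∀ x ∈ Set.Ico x₀ xI, ContinuousAt Ψ x :=
    fun x hx => (hΨderiv x hx).continuousAt
  -- Ψ(x₀) ≥ 0
  have hΨ0 : 0 ≤ Ψ x₀ := by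
    have key := sqrt1p_sub_le σ (deriv u x₀) hσ hinit'
    have : lam * (Real.sqrt (1 + (deriv u x₀) ^ 2) - Real.sqrt (1 + σ ^ 2))
        ≥ lam * (deriv u x₀ - σ) := by nlinarith
    simp only [hΨdef, hinit, hrel]
    nlinarith
  -- Ψ ≥ 0 on the interval
  have hΨnonneg : ∀ x ∈ Set.Ico x₀ xI, 0 ≤ Ψ x := by
    by_contra hcon
    push_neg at hcon
    obtain ⟨x₁, hx₁, hx₁neg⟩ := hcon
    set T : Set ℝ := {x | x ∈ Set.Icc x₀ x₁ ∧ Ψ x < 0} with hTdef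
    have hsub : Set.Icc x₀ x₁ ⊆ Set.Ico x₀ xI :=
      fun t ht => ⟨ht.1, lt_of_le_of_lt ht.2 hx₁.2⟩
    have hTne : T.Nonempty := ⟨x₁, ⟨⟨hx₁.1, le_refl _⟩, hx₁neg⟩⟩
    have hTbdd : BddBelow T := ⟨x₀, fun t ht => ht.1.1⟩
    set s := sInf T with hsdef
    have hs_cl : s ∈ closure T := csInf_mem_closure hTne hTbdd
    have hsIcc : s ∈ Set.Icc x₀ x₁ :=
      isClosed_Icc.closure_subset (closure_mono (fun t ht => ht.1) hs_cl)
    have hsIco : s ∈ Set.Ico x₀ xI := hsub hsIcc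
    have hslb : ∀ t ∈ T, s ≤ t := fun t ht => csInf_le hTbdd ht
    have hge : ∀ y ∈ Set.Ico x₀ s, 0 ≤ Ψ y := by
      intro y hy
      by_contra hneg
      push_neg at hneg
      have : y ∈ T := ⟨⟨hy.1, le_trans hy.2.le hsIcc.2⟩, hneg⟩
      exact absurd (hslb y this) (not_le.2 hy.2)
    have hΨs_le : Ψ s ≤ 0 := by
      haveI hne : (𝓝[T] s).NeBot := mem_closure_iff_nhdsWithin_neBot.1 hs_cl
      have htd : Tendsto Ψ (𝓝[T] s) (𝓝 (Ψ s)) := (hΨcont s hsIco).continuousWithinAt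
      refine le_of_tendsto htd ?_
      filter_upwards [self_mem_nhdsWithin] with t ht
      exact ht.2.le
    have hΨs_ge : 0 ≤ Ψ s := by
      rcases eq_or_lt_of_le hsIcc.1 with heq | hlt
      · rw [← heq]; exact hΨ0
      · have hmem : s ∈ closure (Set.Ico x₀ s) := by
          rw [closure_Ico hlt.ne]
          exact ⟨hlt.le, le_refl _⟩
        haveI hne : (𝓝[Set.Ico x₀ s] s).NeBot := mem_closure_iff_nhdsWithin_neBot.1 hmem
        have htd : Tendsto Ψ (𝓝[Set.Ico x₀ s] s) (𝓝 (Ψ s)) := (hΨcont s hsIco).continuousWithinAt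
        refine ge_of_tendsto htd ?_
        filter_upwards [self_mem_nhdsWithin] with t ht
        exact hge t ht
    have hΨs : Ψ s = 0 := le_antisymm hΨs_le hΨs_ge
    -- deriv Ψ s > 0
    have hAs := factor_pos lam s (deriv u s) hlam (lt_of_lt_of_le hx₀ hsIcc.1)
    have hDpos : 0 < deriv (deriv u) s *
        (s + lam * (deriv u s / Real.sqrt (1 + (deriv u s) ^ 2))) := by
      have h2 : 0 < u s := hupos s hsIco
      have heq : s * deriv u s - u s + ((n:ℝ) - 1) / u s
          + lam * Real.sqrt (1 + (deriv u s) ^ 2) = Ψ s + ((n:ℝ) - 1) / u s := by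
        simp only [hΨdef]; ring
      have hupp : 0 < deriv (deriv u) s := by
        rw [hode s hsIco, heq, hΨs, zero_add]
        positivity
      positivity
    have hD := hΨderiv s hsIco
    have hslope : Tendsto (slope Ψ s) (𝓝[≠] s) (𝓝 _) := hasDerivAt_iff_tendsto_slope.1 hD
    have hslope' : Tendsto (slope Ψ s) (𝓝[>] s) (𝓝 _) :=
      hslope.mono_left (nhdsWithin_mono s (fun t ht => ne_of_gt ht))
    have hev : ∀ᶠ t in 𝓝[>] s, 0 < slope Ψ s t := hslope'.eventually (eventually_gt_nhds hDpos)
    have hev2 : ∀ᶠ t in 𝓝[>] s, 0 < Ψ t := by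
      filter_upwards [hev, self_mem_nhdsWithin] with t h1 (h2 : s < t)
      rw [slope_def_field] at h1
      have h4 := mul_pos h1 (sub_pos.2 h2)
      rw [div_mul_cancel₀ _ (sub_ne_zero.2 (ne_of_gt h2))] at h4
      linarith
    have hsnotT : s ∉ T := fun h => absurd h.2 (by rw [hΨs]; exact lt_irrefl 0)
    have hTsub : T ⊆ Set.Ioi s :=
      fun t ht => lt_of_le_of_ne (hslb t ht) (fun h => hsnotT (h ▸ ht))
    haveI hne : (𝓝[T] s).NeBot := mem_closure_iff_nhdsWithin_neBot.1 hs_cl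
    have hev3 : ∀ᶠ t in 𝓝[T] s, 0 < Ψ t :=
      hev2.filter_mono (nhdsWithin_mono s hTsub)
    have hev4 : ∀ᶠ t in 𝓝[T] s, Ψ t < 0 := by
      filter_upwards [self_mem_nhdsWithin] with t ht
      exact ht.2
    obtain ⟨t, h1, h2⟩ := (hev3.and hev4).exists
    linarith
  -- u'' > 0 on the interval
  have hu''pos : ∀ x ∈ Set.Ico x₀ xI, 0 < deriv (deriv u) x := by
    intro x hx
    have heq : x * deriv u x - u x + ((n:ℝ) - 1) / u x
        + lam * Real.sqrt (1 + (deriv u x) ^ 2) = Ψ x + ((n:ℝ) - 1) / u x := by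
      simp only [hΨdef]; ring
    rw [hode x hx, heq]
    have h1 := hΨnonneg x hx
    have h2 := hupos x hx
    have h3 : 0 < ((n:ℝ) - 1) / u x := div_pos hn1 h2
    positivity
  -- u' > 0 on the interval
  have hu'pos : ∀ x ∈ Set.Ico x₀ xI, 0 < deriv u x := by
    intro x hx
    rcases eq_or_lt_of_le hx.1 with heq | hlt
    · rw [← heq]; linarith
    · have hsub : Set.Icc x₀ x ⊆ Set.Ico x₀ xI :=
        fun t ht => ⟨ht.1, lt_of_le_of_lt ht.2 hx.2⟩
      have hmono : StrictMonoOn (deriv u) (Set.Icc x₀ x) := by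
        apply strictMonoOn_of_deriv_pos (convex_Icc x₀ x)
        · exact fun t ht => ((hreg t (hsub ht)).2.continuousAt).continuousWithinAt
        · intro t ht
          rw [interior_Icc] at ht
          exact hu''pos t (hsub ⟨ht.1.le, ht.2.le⟩)
      have := hmono (Set.left_mem_Icc.2 hlt.le) (Set.right_mem_Icc.2 hlt.le) hlt
      linarith
  -- conclude
  intro x hx
  have hA := factor_pos lam x (deriv u x) hlam (lt_of_lt_of_le hx₀ hx.1)
  refine ⟨hΨnonneg x hx, ?_, hu'pos x hx, hu''pos x hx⟩
  show 0 < deriv Ψ x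
  rw [(hΨderiv x hx).deriv]
  exact mul_pos (hu''pos x hx) hA
end

section
/- Let λ < 0, n ≥ 2, x₀ > −λ, u₀ ≥ √(n−1), σ > 0 with u₀ = σ·x₀ + λ·√(1+σ²), and let u solve u'' = [x·u' − u + (n−1)/u + λ·√(1+(u')²)]·(1+(u')²) on its maximal interval [x₀, x_∞) with u(x₀) = u₀, u'(x₀) ≥ σ. Then x_∞ < −λ + (n/(n−1))·(x₀ + λ); in particular x_∞ < ∞. -/
/-- `v` is a C² solution of `u'' = [x·u' − u + (n−1)/u + λ√(1+(u')²)]·(1+(u')²)` on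
`[x₀, b)`, positive there. -/
def IsGraphSol (n : ℕ) (lam x₀ b : ℝ) (v : ℝ → ℝ) : Prop :=
  (∀ x ∈ Set.Ico x₀ b, DifferentiableAt ℝ v x ∧ DifferentiableAt ℝ (deriv v) x) ∧
  (∀ x ∈ Set.Ico x₀ b, 0 < v x) ∧
  ∀ x ∈ Set.Ico x₀ b,
    deriv (deriv v) x =
      (x * deriv v x - v x + ((n : ℝ) - 1) / v x
          + lam * Real.sqrt (1 + (deriv v x) ^ 2)) * (1 + (deriv v x) ^ 2)

/-- For `0 ≤ σ ≤ s`, `√(1+s²) ≤ √(1+σ²) + (s − σ)`. -/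
lemma sqrt_one_add_sq_sub_le {σ s : ℝ} (hσ : 0 ≤ σ) (hs : σ ≤ s) :
    Real.sqrt (1 + s ^ 2) ≤ Real.sqrt (1 + σ ^ 2) + (s - σ) := by
  have hA2 : Real.sqrt (1 + s ^ 2) ^ 2 = 1 + s ^ 2 := Real.sq_sqrt (by positivity)
  have hB2 : Real.sqrt (1 + σ ^ 2) ^ 2 = 1 + σ ^ 2 := Real.sq_sqrt (by positivity)
  have hA0 : 0 ≤ Real.sqrt (1 + s ^ 2) := Real.sqrt_nonneg _
  have hAs : s ≤ Real.sqrt (1 + s ^ 2) := by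
    nlinarith [Real.sqrt_nonneg (1 + s ^ 2)]
  have hBσ : σ ≤ Real.sqrt (1 + σ ^ 2) := by
    nlinarith [Real.sqrt_nonneg (1 + σ ^ 2)]
  nlinarith [mul_nonneg (sub_nonneg.2 hBσ) (sub_nonneg.2 hs),
    sq_nonneg (Real.sqrt (1 + s ^ 2) - Real.sqrt (1 + σ ^ 2) - (s - σ))]

/-- For `0 ≤ s`, `s ≤ √(1+s²)`. -/
lemma le_sqrt_one_add_sq {s : ℝ} (hs : 0 ≤ s) : s ≤ Real.sqrt (1 + s ^ 2) := by
  have h : Real.sqrt (1 + s ^ 2) ^ 2 = 1 + s ^ 2 := Real.sq_sqrt (by positivity)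
  nlinarith [Real.sqrt_nonneg (1 + s ^ 2)]

set_option maxHeartbeats 1000000 in
/-- Under the initial conditions of Lemma 3.1 with `u₀ ≥ √(n−1)`, the maximal interval of
existence `[x₀, x_∞)` satisfies `x_∞ < −λ + (n/(n−1))·(x₀ + λ)`. -/
theorem stmt_12 (n : ℕ) (hn : 2 ≤ n) (lam x₀ xI u₀ σ : ℝ)
    (hlam : lam < 0) (hx₀ : -lam < x₀) (hu₀ : Real.sqrt ((n : ℝ) - 1) ≤ u₀) (hσ : 0 < σ)
    (hrel : u₀ = σ * x₀ + lam * Real.sqrt (1 + σ ^ 2))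
    (hxI : x₀ < xI)
    (u : ℝ → ℝ)
    (hsol : IsGraphSol n lam x₀ xI u)
    (hmax : ∀ b' : ℝ, xI < b' →
      ¬ ∃ v : ℝ → ℝ, IsGraphSol n lam x₀ b' v ∧ Set.EqOn v u (Set.Ico x₀ xI))
    (hinit : u x₀ = u₀) (hinit' : σ ≤ deriv u x₀) :
    xI < -lam + ((n : ℝ) / ((n : ℝ) - 1)) * (x₀ + lam) := by
  obtain ⟨hdiff, hpos, hode⟩ := hsol
  obtain ⟨P, hPdef⟩ : ∃ f : ℝ → ℝ, f = deriv u := ⟨_, rfl⟩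
  rw [← hPdef] at hinit'
  simp only [← hPdef] at hdiff hode
  have hn1 : (1 : ℝ) ≤ (n : ℝ) - 1 := by
    have : (2 : ℝ) ≤ (n : ℝ) := by exact_mod_cast hn
    linarith
  have ha : 0 < x₀ + lam := by linarith
  -- a, c opaque
  obtain ⟨a, hadef⟩ : ∃ y : ℝ, y = x₀ + lam := ⟨_, rfl⟩
  rw [← hadef] at ha
  obtain ⟨c, hcdef⟩ : ∃ y : ℝ, y = ((n : ℝ) - 1) / (σ * a) := ⟨_, rfl⟩
  have hcpos : 0 < c := hcdef ▸ div_pos (by linarith) (mul_pos hσ ha)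
  have hu₀1 : (1 : ℝ) ≤ u₀ := by
    have h := Real.sqrt_le_sqrt (show (1 : ℝ) ≤ (n : ℝ) - 1 from hn1)
    rw [Real.sqrt_one] at h
    linarith
  have hu₀pos : (0 : ℝ) < u₀ := by linarith
  have hu₀sq : (n : ℝ) - 1 ≤ u₀ ^ 2 := by
    nlinarith [Real.sq_sqrt (show (0 : ℝ) ≤ (n : ℝ) - 1 by linarith),
      Real.sqrt_nonneg ((n : ℝ) - 1)]
  have hu₀lt : u₀ < σ * a := by
    have h1 : σ < Real.sqrt (1 + σ ^ 2) := by
      have h2 : Real.sqrt (1 + σ ^ 2) ^ 2 = 1 + σ ^ 2 := Real.sq_sqrt (by positivity)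
      nlinarith [Real.sqrt_nonneg (1 + σ ^ 2)]
    have := mul_lt_mul_of_neg_left h1 hlam
    rw [hadef]; nlinarith
  -- the quantity Φ
  obtain ⟨Φ, hΦdef⟩ : ∃ f : ℝ → ℝ,
      f = fun x => x * P x + lam * Real.sqrt (1 + P x ^ 2) - u x + ((n : ℝ) - 1) / u x :=
    ⟨_, rfl⟩
  have hΦval : ∀ x, Φ x = x * P x + lam * Real.sqrt (1 + P x ^ 2) - u x + ((n : ℝ) - 1) / u x :=
    fun x => by rw [hΦdef]
  have hode' : ∀ x ∈ Set.Ico x₀ xI, deriv P x = Φ x * (1 + P x ^ 2) := by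
    intro x hx
    rw [hΦval, hode x hx]
    ring
  -- Φ(x₀) > c
  have hΦx₀ : c < Φ x₀ := by
    have hx₀mem : x₀ ∈ Set.Ico x₀ xI := ⟨le_refl _, hxI⟩
    have hs : σ ≤ P x₀ := hinit'
    have hsq : Real.sqrt (1 + P x₀ ^ 2) ≤ Real.sqrt (1 + σ ^ 2) + (P x₀ - σ) :=
      sqrt_one_add_sq_sub_le hσ.le hs
    have h1 : u₀ ≤ x₀ * P x₀ + lam * Real.sqrt (1 + P x₀ ^ 2) := by
      have h2 : lam * Real.sqrt (1 + P x₀ ^ 2) ≥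
          lam * (Real.sqrt (1 + σ ^ 2) + (P x₀ - σ)) :=
        mul_le_mul_of_nonpos_left hsq hlam.le
      nlinarith [mul_nonneg ha.le (sub_nonneg.2 hs)]
    have h3 : Φ x₀ = x₀ * P x₀ + lam * Real.sqrt (1 + P x₀ ^ 2) - u₀ + ((n : ℝ) - 1) / u₀ := by
      rw [hΦval, hinit]
    have h4 : c < ((n : ℝ) - 1) / u₀ := by
      rw [hcdef]
      exact div_lt_div_of_pos_left (by linarith : (0:ℝ) < (n : ℝ) - 1) hu₀pos hu₀lt
    rw [h3]; linarith
  -- derivative of Φ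
  have hΦderiv : ∀ x ∈ Set.Ico x₀ xI, HasDerivAt Φ
      (x * (Φ x * (1 + P x ^ 2))
        + lam * (P x * (Φ x * (1 + P x ^ 2)) / Real.sqrt (1 + P x ^ 2))
        - ((n : ℝ) - 1) * P x / u x ^ 2) x := by
    intro x hx
    have hux : 0 < u x := hpos x hx
    have hdu : HasDerivAt u (P x) x := by
      have h := (hdiff x hx).1.hasDerivAt
      rwa [← hPdef] at h
    have hdP : HasDerivAt P (Φ x * (1 + P x ^ 2)) x := by
      have h := (hdiff x hx).2.hasDerivAt
      rwa [hode' x hx] at h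
    have h1 : (0 : ℝ) < 1 + P x ^ 2 := by positivity
    have hA0 : 0 < Real.sqrt (1 + P x ^ 2) := Real.sqrt_pos.mpr h1
    have hinner : HasDerivAt (fun y => 1 + P y ^ 2)
        (2 * P x * (Φ x * (1 + P x ^ 2))) x := by
      have h2 := hdP.pow 2
      have h3 := h2.const_add (1 : ℝ)
      exact h3.congr_deriv (by norm_num)
    have hs : HasDerivAt (fun y => Real.sqrt (1 + P y ^ 2))
        (2 * P x * (Φ x * (1 + P x ^ 2)) / (2 * Real.sqrt (1 + P x ^ 2))) x :=
      hinner.sqrt (ne_of_gt h1)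
    have hq : HasDerivAt (fun y => ((n : ℝ) - 1) / u y)
        ((0 * u x - ((n : ℝ) - 1) * P x) / u x ^ 2) x :=
      (hasDerivAt_const x ((n : ℝ) - 1)).div hdu (ne_of_gt hux)
    have hxP : HasDerivAt (fun y => y * P y) (1 * P x + x * (Φ x * (1 + P x ^ 2))) x :=
      (hasDerivAt_id x).mul hdP
    have hcomb := ((hxP.add (hs.const_mul lam)).sub hdu).add hq
    have hexp : HasDerivAt
        (fun y => y * P y + lam * Real.sqrt (1 + P y ^ 2) - u y + ((n : ℝ) - 1) / u y)
        (x * (Φ x * (1 + P x ^ 2))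
          + lam * (P x * (Φ x * (1 + P x ^ 2)) / Real.sqrt (1 + P x ^ 2))
          - ((n : ℝ) - 1) * P x / u x ^ 2) x := by
      exact hcomb.congr_deriv (by field_simp; ring)
    simpa only [← hΦdef] using hexp
  -- lower bound for the derivative of Φ under the invariants
  have hDbound : ∀ x ∈ Set.Ico x₀ xI, σ ≤ P x → u₀ ≤ u x → c ≤ Φ x →
      1 / σ ≤ x * (Φ x * (1 + P x ^ 2))
        + lam * (P x * (Φ x * (1 + P x ^ 2)) / Real.sqrt (1 + P x ^ 2))
        - ((n : ℝ) - 1) * P x / u x ^ 2 := by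
    intro x hx hPx hux hΦx
    have hux0 : 0 < u x := hpos x hx
    have hP0 : 0 < P x := lt_of_lt_of_le hσ hPx
    have hΦ0 : 0 < Φ x := lt_of_lt_of_le hcpos hΦx
    have h1 : (0 : ℝ) < 1 + P x ^ 2 := by positivity
    have hA0 : 0 < Real.sqrt (1 + P x ^ 2) := Real.sqrt_pos.mpr h1
    have hPA : P x ≤ Real.sqrt (1 + P x ^ 2) := le_sqrt_one_add_sq hP0.le
    have hQ0 : 0 < Φ x * (1 + P x ^ 2) := mul_pos hΦ0 h1
    -- the λ-term
    have h2 : lam * (Φ x * (1 + P x ^ 2)) ≤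
        lam * (P x * (Φ x * (1 + P x ^ 2)) / Real.sqrt (1 + P x ^ 2)) := by
      apply mul_le_mul_of_nonpos_left _ hlam.le
      rw [div_le_iff₀ hA0]
      nlinarith [mul_le_mul_of_nonneg_left hPA hQ0.le]
    -- the u-term
    have h3 : ((n : ℝ) - 1) * P x / u x ^ 2 ≤ P x := by
      have hu2 : (n : ℝ) - 1 ≤ u x ^ 2 := by nlinarith
      rw [div_le_iff₀ (by positivity)]
      nlinarith [mul_le_mul_of_nonneg_right hu2 hP0.le]
    -- the main term
    have hxa : a ≤ x + lam := by rw [hadef]; linarith [hx.1]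
    have h4 : a * (c * (1 + P x ^ 2)) ≤ (x + lam) * (Φ x * (1 + P x ^ 2)) := by
      have h5 : c * (1 + P x ^ 2) ≤ Φ x * (1 + P x ^ 2) :=
        mul_le_mul_of_nonneg_right hΦx h1.le
      exact mul_le_mul hxa h5 (mul_pos hcpos h1).le (le_trans ha.le hxa)
    have h6 : a * (c * (1 + P x ^ 2)) = ((n : ℝ) - 1) * (1 + P x ^ 2) / σ := by
      rw [hcdef]; field_simp
    have h7 : (1 + P x ^ 2) / σ ≤ ((n : ℝ) - 1) * (1 + P x ^ 2) / σ := by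
      gcongr
      nlinarith
    have h8 : 1 / σ + P x ≤ (1 + P x ^ 2) / σ := by
      rw [le_div_iff₀ hσ]
      have h9 : 1 / σ * σ = 1 := by field_simp
      nlinarith [mul_le_mul_of_nonneg_left hPx hP0.le]
    have h10 : (x + lam) * (Φ x * (1 + P x ^ 2))
        = x * (Φ x * (1 + P x ^ 2)) + lam * (Φ x * (1 + P x ^ 2)) := by ring
    have h11 : 1 / σ + P x ≤ (x + lam) * (Φ x * (1 + P x ^ 2)) := by linarith
    linarith [h11, h2, h3, h10]
  -- invariants propagate as long as Φ > 0 in the interior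
  have hinv : ∀ r ∈ Set.Ico x₀ xI, (∀ t ∈ Set.Ioo x₀ r, 0 < Φ t) →
      ∀ t ∈ Set.Icc x₀ r, σ ≤ P t ∧ u₀ ≤ u t := by
    intro r hr hΦpos t ht
    have hsub : Set.Icc x₀ r ⊆ Set.Ico x₀ xI := fun s hs => ⟨hs.1, lt_of_le_of_lt hs.2 hr.2⟩
    have hPmono : MonotoneOn P (Set.Icc x₀ r) := by
      apply monotoneOn_of_deriv_nonneg (convex_Icc _ _)
      · exact fun s hs => (((hdiff s (hsub hs)).2).continuousAt).continuousWithinAt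
      · intro s hs
        rw [interior_Icc] at hs
        exact ((hdiff s (hsub (Set.Ioo_subset_Icc_self hs))).2).differentiableWithinAt
      · intro s hs
        rw [interior_Icc] at hs
        rw [hode' s (hsub (Set.Ioo_subset_Icc_self hs))]
        have h1 := hΦpos s hs
        positivity
    have hx₀m : x₀ ∈ Set.Icc x₀ r := ⟨le_refl _, hr.1⟩
    have hPt : σ ≤ P t := le_trans hinit' (hPmono hx₀m ht ht.1)
    refine ⟨hPt, ?_⟩
    have humono : MonotoneOn u (Set.Icc x₀ r) := by
      apply monotoneOn_of_deriv_nonneg (convex_Icc _ _)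
      · exact fun s hs => (((hdiff s (hsub hs)).1).continuousAt).continuousWithinAt
      · intro s hs
        rw [interior_Icc] at hs
        exact ((hdiff s (hsub (Set.Ioo_subset_Icc_self hs))).1).differentiableWithinAt
      · intro s hs
        rw [interior_Icc] at hs
        have h2 : σ ≤ P s := le_trans hinit' (hPmono hx₀m (Set.Ioo_subset_Icc_self hs) hs.1.le)
        rw [← hPdef]
        linarith
    rw [← hinit]
    exact humono hx₀m ht ht.1
  -- Φ stays above c on the whole interval
  have key : ∀ y ∈ Set.Ico x₀ xI, c < Φ y := by
    intro y hy
    by_contra hyc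
    push_neg at hyc
    have hsuby : Set.Icc x₀ y ⊆ Set.Ico x₀ xI := fun s hs => ⟨hs.1, lt_of_le_of_lt hs.2 hy.2⟩
    have hΦcont : ContinuousOn Φ (Set.Icc x₀ y) := fun s hs =>
      ((hΦderiv s (hsuby hs)).continuousAt).continuousWithinAt
    have hKmem : ∀ t : ℝ, t ∈ Set.Icc x₀ y ∩ Φ ⁻¹' Set.Iic c ↔ t ∈ Set.Icc x₀ y ∧ Φ t ≤ c := by
      intro t; simp [Set.mem_inter_iff]
    have hKy : y ∈ Set.Icc x₀ y ∩ Φ ⁻¹' Set.Iic c := (hKmem y).2 ⟨⟨hy.1, le_refl _⟩, hyc⟩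
    have hKne : (Set.Icc x₀ y ∩ Φ ⁻¹' Set.Iic c).Nonempty := ⟨y, hKy⟩
    have hbdd : BddBelow (Set.Icc x₀ y ∩ Φ ⁻¹' Set.Iic c) := ⟨x₀, fun t ht => ht.1.1⟩
    have hKclosed : IsClosed (Set.Icc x₀ y ∩ Φ ⁻¹' Set.Iic c) :=
      hΦcont.preimage_isClosed_of_isClosed isClosed_Icc isClosed_Iic
    have hrK := hKclosed.csInf_mem hKne hbdd
    obtain ⟨r, hrdef⟩ : ∃ r : ℝ, r = sInf (Set.Icc x₀ y ∩ Φ ⁻¹' Set.Iic c) := ⟨_, rfl⟩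
    rw [← hrdef] at hrK
    obtain ⟨hrIcc, hrc⟩ := (hKmem r).1 hrK
    have hrc : Φ r ≤ c := hrc
    have hrx₀ : x₀ < r := by
      rcases lt_or_eq_of_le hrIcc.1 with h | h
      · exact h
      · exact absurd (h ▸ hrc) (not_le.mpr hΦx₀)
    have hry : r ≤ y := hrIcc.2
    have hrmem : r ∈ Set.Ico x₀ xI := ⟨hrx₀.le, lt_of_le_of_lt hry hy.2⟩
    have hΦIoo : ∀ t ∈ Set.Ioo x₀ r, c < Φ t := by
      intro t ht
      by_contra h
      push_neg at h
      have htK : t ∈ Set.Icc x₀ y ∩ Φ ⁻¹' Set.Iic c :=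
        (hKmem t).2 ⟨⟨ht.1.le, le_trans ht.2.le hry⟩, h⟩
      have := csInf_le hbdd htK
      rw [← hrdef] at this
      exact absurd this (not_le.mpr ht.2)
    have hinv' := hinv r hrmem (fun t ht => lt_trans hcpos (hΦIoo t ht))
    have hmono : StrictMonoOn Φ (Set.Icc x₀ r) := by
      apply strictMonoOn_of_deriv_pos (convex_Icc _ _)
      · exact hΦcont.mono (Set.Icc_subset_Icc_right hry)
      · intro t ht
        rw [interior_Icc] at ht
        have htm : t ∈ Set.Ico x₀ xI := ⟨ht.1.le, lt_of_lt_of_le ht.2 (le_of_lt hrmem.2)⟩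
        obtain ⟨hPt, hut⟩ := hinv' t (Set.Ioo_subset_Icc_self ht)
        rw [(hΦderiv t htm).deriv]
        have h1 := hDbound t htm hPt hut (le_of_lt (hΦIoo t ht))
        have h2 : 0 < 1 / σ := by positivity
        linarith
    have h1 : Φ x₀ < Φ r := hmono ⟨le_refl _, hrx₀.le⟩ ⟨hrx₀.le, le_refl _⟩ hrx₀
    linarith
  -- integrate the Riccati inequality
  have harc : ∀ y ∈ Set.Ico x₀ xI, c * (y - x₀) ≤ Real.pi / 2 - Real.arctan σ := by
    intro y hy
    have hsuby : Set.Icc x₀ y ⊆ Set.Ico x₀ xI := fun s hs => ⟨hs.1, lt_of_le_of_lt hs.2 hy.2⟩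
    have hg : ∀ t ∈ Set.Ico x₀ xI,
        HasDerivAt (fun s => Real.arctan (P s) - c * s) (Φ t - c) t := by
      intro t ht
      have hdP : HasDerivAt P (Φ t * (1 + P t ^ 2)) t := by
        have h := (hdiff t ht).2.hasDerivAt
        rwa [hode' t ht] at h
      have h1 : (0 : ℝ) < 1 + P t ^ 2 := by positivity
      have h2 := hdP.arctan
      have h3 := h2.sub ((hasDerivAt_id t).const_mul c)
      exact h3.congr_deriv (by field_simp)
    have hgm : MonotoneOn (fun s => Real.arctan (P s) - c * s) (Set.Icc x₀ y) := by
      apply monotoneOn_of_deriv_nonneg (convex_Icc _ _)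
      · exact fun s hs => ((hg s (hsuby hs)).continuousAt).continuousWithinAt
      · intro s hs
        rw [interior_Icc] at hs
        exact (hg s (hsuby (Set.Ioo_subset_Icc_self hs))).differentiableAt.differentiableWithinAt
      · intro s hs
        rw [interior_Icc] at hs
        have hsm := hsuby (Set.Ioo_subset_Icc_self hs)
        rw [(hg s hsm).deriv]
        linarith [key s hsm]
    have h4 := hgm ⟨le_refl _, hy.1⟩ ⟨hy.1, le_refl _⟩ hy.1
    dsimp only at h4
    have h5 : Real.arctan σ ≤ Real.arctan (P x₀) := Real.arctan_strictMono.monotone hinit'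
    have h6 : Real.arctan (P y) < Real.pi / 2 := Real.arctan_lt_pi_div_two _
    linarith
  -- pass to the limit
  have hM0 : 0 ≤ Real.pi / 2 - Real.arctan σ :=
    sub_nonneg.2 (Real.arctan_lt_pi_div_two σ).le
  have hbound : xI ≤ x₀ + (Real.pi / 2 - Real.arctan σ) / c := by
    by_contra h
    push_neg at h
    obtain ⟨y, hydef⟩ : ∃ y : ℝ, y = (x₀ + (Real.pi / 2 - Real.arctan σ) / c + xI) / 2 :=
      ⟨_, rfl⟩
    have hy1 : x₀ + (Real.pi / 2 - Real.arctan σ) / c < y := by rw [hydef]; linarith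
    have hy2 : y < xI := by rw [hydef]; linarith
    have hMc : 0 ≤ (Real.pi / 2 - Real.arctan σ) / c := div_nonneg hM0 hcpos.le
    have hym : y ∈ Set.Ico x₀ xI := ⟨by linarith, hy2⟩
    have h7 := harc y hym
    have h8 : (Real.pi / 2 - Real.arctan σ) / c < y - x₀ := by linarith
    rw [div_lt_iff₀ hcpos] at h8
    nlinarith
  have harctan : Real.pi / 2 - Real.arctan σ < 1 / σ := by
    have h0 : 0 < Real.arctan σ⁻¹ := by
      have := Real.arctan_strictMono (show (0 : ℝ) < σ⁻¹ by positivity)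
      rwa [Real.arctan_zero] at this
    have h1 : Real.arctan σ⁻¹ < Real.pi / 2 := Real.arctan_lt_pi_div_two _
    have h2 := Real.lt_tan h0 h1
    rw [Real.tan_arctan] at h2
    rw [← Real.arctan_inv_of_pos hσ, one_div]
    exact h2
  have hcinv : (Real.pi / 2 - Real.arctan σ) / c < a / ((n : ℝ) - 1) := by
    have hσa : 0 < σ * a := mul_pos hσ ha
    have hMc : (Real.pi / 2 - Real.arctan σ) / c
        = (Real.pi / 2 - Real.arctan σ) * (σ * a) / ((n : ℝ) - 1) := by
      rw [hcdef]
      field_simp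
    have h9 : (Real.pi / 2 - Real.arctan σ) * (σ * a) < 1 / σ * (σ * a) :=
      mul_lt_mul_of_pos_right harctan hσa
    have h10 : 1 / σ * (σ * a) = a := by field_simp
    rw [hMc]
    rw [div_lt_div_iff₀ (by linarith) (by linarith : (0:ℝ) < (n : ℝ) - 1)]
    nlinarith
  have hfinal : x₀ + a / ((n : ℝ) - 1) = -lam + ((n : ℝ) / ((n : ℝ) - 1)) * (x₀ + lam) := by
    rw [hadef]
    field_simp
    ring
  linarith
end

section
/- Let λ < 0, n ≥ 2, and suppose φ : (a, c₁] → (0,∞) is C² with φ' < 0 on (a,c₁] and satisfies φ'' ≥ −(1/M)·φ'·φ² on (a, c₁) for some constant M > 0, where (a,c₁) is bounded. Then for all r ∈ (a, c₁), φ(r) ≤ (φ(c₁)·√(c₁−a) + √(3M))/√(r−a). -/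
open Set Real Filter Topology

/-- Barrier estimate: if `φ > 0`, `φ' < 0` on `(a,c₁]` and
`φ'' ≥ −(1/M)·φ'·φ²` on `(a,c₁)`, then
`φ(r) ≤ (φ(c₁)√(c₁−a) + √(3M))/√(r−a)` for `r ∈ (a,c₁)`. -/
theorem stmt_13 (n : ℕ) (hn : 2 ≤ n) (lam : ℝ) (hlam : lam < 0) (a c₁ M : ℝ)
    (hac : a < c₁) (hM : 0 < M) (φ : ℝ → ℝ)
    (hreg : ∀ r ∈ Set.Ioc a c₁, DifferentiableAt ℝ φ r ∧ DifferentiableAt ℝ (deriv φ) r)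
    (hpos : ∀ r ∈ Set.Ioc a c₁, 0 < φ r)
    (hφ' : ∀ r ∈ Set.Ioc a c₁, deriv φ r < 0)
    (hφ'' : ∀ r ∈ Set.Ioo a c₁, -(1 / M) * deriv φ r * (φ r) ^ 2 ≤ deriv (deriv φ) r) :
    ∀ r ∈ Set.Ioo a c₁,
      φ r ≤ (φ c₁ * Real.sqrt (c₁ - a) + Real.sqrt (3 * M)) / Real.sqrt (r - a) := by
  intro r₀ hr₀
  obtain ⟨har₀, hr₀c⟩ := hr₀
  have hc₁mem : c₁ ∈ Set.Ioc a c₁ := ⟨hac, le_refl _⟩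
  have hQpos : 0 < φ c₁ := hpos c₁ hc₁mem
  have hr₀mem : r₀ ∈ Set.Ioc a c₁ := ⟨har₀, le_of_lt hr₀c⟩
  have hPpos : 0 < φ r₀ := hpos r₀ hr₀mem
  set Q := φ c₁ with hQdef
  set P := φ r₀ with hPdef
  have hcontφ : ContinuousOn φ (Set.Ioc a c₁) := fun x hx =>
    ((hreg x hx).1.continuousAt).continuousWithinAt
  -- strict antitonicity of φ
  have hanti : StrictAntiOn φ (Set.Ioc a c₁) := by
    apply strictAntiOn_of_deriv_neg (convex_Ioc a c₁) hcontφ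
    intro x hx
    rw [interior_Ioc] at hx
    exact hφ' x (Set.Ioo_subset_Ioc_self hx)
  have hPQ : Q < P := hanti hr₀mem hc₁mem hr₀c
  -- the auxiliary function w = φ' + φ³/(3M) is monotone on (a, c₁]
  set w : ℝ → ℝ := fun x => deriv φ x + (φ x) ^ 3 / (3 * M) with hwdef
  have hwderiv : ∀ x ∈ Set.Ioc a c₁,
      HasDerivAt w (deriv (deriv φ) x + (3 * (φ x) ^ 2 * deriv φ x) / (3 * M)) x := by
    intro x hx
    have h1 : HasDerivAt φ (deriv φ x) x := (hreg x hx).1.hasDerivAt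
    have h2 : HasDerivAt (deriv φ) (deriv (deriv φ) x) x := (hreg x hx).2.hasDerivAt
    have h3 := h2.add ((h1.pow 3).div_const (3 * M))
    rw [hwdef]
    exact h3.congr_deriv (by norm_num)
  have hwmono : MonotoneOn w (Set.Ioc a c₁) := by
    apply monotoneOn_of_deriv_nonneg (convex_Ioc a c₁)
    · intro x hx
      exact ((hwderiv x hx).continuousAt).continuousWithinAt
    · intro x hx
      rw [interior_Ioc] at hx
      exact ((hwderiv x (Set.Ioo_subset_Ioc_self hx)).differentiableAt).differentiableWithinAt
    · intro x hx
      rw [interior_Ioc] at hx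
      rw [(hwderiv x (Set.Ioo_subset_Ioc_self hx)).deriv]
      have h4 := hφ'' x hx
      have h5 : -(1 / M) * deriv φ x * (φ x) ^ 2
          = -((3 * (φ x) ^ 2 * deriv φ x) / (3 * M)) := by
        field_simp
      rw [h5] at h4
      linarith
  -- consequence: φ'(s) ≤ (Q³ - φ(s)³)/(3M) on (a, r₀]
  have hsub : Set.Ioc a r₀ ⊆ Set.Ioc a c₁ := Set.Ioc_subset_Ioc_right (le_of_lt hr₀c)
  have key1 : ∀ s ∈ Set.Ioc a r₀, deriv φ s ≤ (Q ^ 3 - (φ s) ^ 3) / (3 * M) := by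
    intro s hs
    have hw := hwmono (hsub hs) hc₁mem (le_trans hs.2 (le_of_lt hr₀c))
    have hc' := hφ' c₁ hc₁mem
    simp only [hwdef] at hw
    rw [sub_div]
    linarith
  -- g(s) = (φ s)⁻² - L s is monotone on (a, r₀]
  set L : ℝ := 2 * (P ^ 3 - Q ^ 3) / (3 * M * P ^ 3) with hLdef
  set g : ℝ → ℝ := fun s => ((φ s) ^ 2)⁻¹ - L * s with hgdef
  have hgderiv : ∀ s ∈ Set.Ioc a r₀,
      HasDerivAt g (-(2 * φ s * deriv φ s) / ((φ s) ^ 2) ^ 2 - L) s := by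
    intro s hs
    have h1 : HasDerivAt φ (deriv φ s) s := (hreg s (hsub hs)).1.hasDerivAt
    have hne : (φ s) ^ 2 ≠ 0 := by
      have := hpos s (hsub hs); positivity
    have h2' := ((h1.pow 2).inv hne).sub ((hasDerivAt_id s).const_mul L)
    rw [hgdef]
    exact h2'.congr_deriv (by norm_num [Pi.pow_apply])
  have hgmono : MonotoneOn g (Set.Ioc a r₀) := by
    apply monotoneOn_of_deriv_nonneg (convex_Ioc a r₀)
    · intro s hs
      exact ((hgderiv s hs).continuousAt).continuousWithinAt
    · intro s hs
      rw [interior_Ioc] at hs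
      exact ((hgderiv s (Set.Ioo_subset_Ioc_self hs)).differentiableAt).differentiableWithinAt
    · intro s hs
      rw [interior_Ioc] at hs
      have hsmem : s ∈ Set.Ioc a r₀ := Set.Ioo_subset_Ioc_self hs
      rw [(hgderiv s hsmem).deriv]
      have hxP : P ≤ φ s := le_of_lt (hanti (hsub hsmem) hr₀mem hs.2)
      have hxpos : 0 < φ s := hpos s (hsub hsmem)
      rw [sub_nonneg, hLdef, div_le_div_iff₀ (by positivity) (by positivity)]
      have hd3 : deriv φ s * (3 * M) ≤ Q ^ 3 - (φ s) ^ 3 := by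
        have h := key1 s hsmem
        rwa [le_div_iff₀ (by positivity)] at h
      have hx3 : P ^ 3 ≤ (φ s) ^ 3 := pow_le_pow_left₀ hPpos.le hxP 3
      nlinarith [mul_nonneg (mul_nonneg hxpos.le (pow_nonneg hQpos.le 3)) (sub_nonneg.mpr hx3),
        mul_le_mul_of_nonneg_left hd3 (by positivity : (0:ℝ) ≤ 2 * φ s * P ^ 3)]
  -- deduce the integrated bound by letting s → a⁺
  have hbound : ∀ s ∈ Set.Ioc a r₀, L * (r₀ - s) ≤ (P ^ 2)⁻¹ := by
    intro s hs
    have hgs := hgmono hs ⟨har₀, le_refl r₀⟩ hs.2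
    simp only [hgdef] at hgs
    rw [← hPdef] at hgs
    have hinv : 0 < ((φ s) ^ 2)⁻¹ := by
      have := hpos s (hsub hs); positivity
    linarith
  have hlim : Tendsto (fun s => L * (r₀ - s)) (𝓝[>] a) (𝓝 (L * (r₀ - a))) := by
    apply Tendsto.mono_left _ nhdsWithin_le_nhds
    have hcont : Continuous fun s : ℝ => L * (r₀ - s) := by continuity
    exact hcont.tendsto a
  have hmain : L * (r₀ - a) ≤ (P ^ 2)⁻¹ := by
    apply le_of_tendsto hlim
    filter_upwards [Ioc_mem_nhdsGT har₀] with s hs using hbound s hs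
  -- the key polynomial inequality
  have hpoly : 2 * (r₀ - a) * (P ^ 3 - Q ^ 3) ≤ 3 * M * P := by
    rw [hLdef, div_mul_eq_mul_div, div_le_iff₀ (by positivity)] at hmain
    have he : (P ^ 2)⁻¹ * (3 * M * P ^ 3) = 3 * M * P := by
      field_simp
    rw [he] at hmain
    linarith
  -- conclude
  have ht : 0 < r₀ - a := sub_pos.mpr har₀
  rw [le_div_iff₀ (Real.sqrt_pos.mpr ht)]
  have h2 : (r₀ - a) * (P - Q) ^ 2 ≤ 3 * M := by
    nlinarith [hpoly, hPpos,
      mul_nonneg (mul_nonneg (mul_nonneg ht.le (sub_pos.mpr hPQ).le)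
        (by positivity : (0:ℝ) ≤ P + Q)) (by positivity : (0:ℝ) ≤ P + 2 * Q)]
  have hsq : Real.sqrt (r₀ - a) ^ 2 = r₀ - a := Real.sq_sqrt ht.le
  have h3 : (P - Q) * Real.sqrt (r₀ - a) ≤ Real.sqrt (3 * M) := by
    have hnn : 0 ≤ (P - Q) * Real.sqrt (r₀ - a) :=
      mul_nonneg (sub_pos.mpr hPQ).le (Real.sqrt_nonneg _)
    rw [← Real.sqrt_sq hnn]
    apply Real.sqrt_le_sqrt
    rw [mul_pow, hsq]
    nlinarith [h2]
  have h4 : Q * Real.sqrt (r₀ - a) ≤ Q * Real.sqrt (c₁ - a) :=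
    mul_le_mul_of_nonneg_left (Real.sqrt_le_sqrt (by linarith)) hQpos.le
  have hid : P * Real.sqrt (r₀ - a)
      = (P - Q) * Real.sqrt (r₀ - a) + Q * Real.sqrt (r₀ - a) := by ring
  linarith
end

section
/- Let λ < 0, n ≥ 2, and b ≥ √(n−1) + √2. Let f : [b−√2, b] → ℝ be a C³ solution of f''/(1+(f')²) = (r − (n−1)/r)·f' − f + λ·√(1+(f')²) with f(b) > 0. Then there exists c ∈ [b−√2, b) with f'(c) ≥ 0; equivalently, it is impossible that f' < 0 throughout [b−√2, b). -/
set_option maxHeartbeats 1000000 in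
/-- For `λ < 0` and `b ≥ √(n−1) + √2`, a C³ solution of
`f''/(1+(f')²) = (r − (n−1)/r)f' − f + λ√(1+(f')²)` on `[b−√2, b]` with `f(b) > 0` has a
point `c ∈ [b−√2, b)` with `f'(c) ≥ 0`. -/
theorem stmt_15 (n : ℕ) (hn : 2 ≤ n) (lam b : ℝ) (hlam : lam < 0)
    (hb : Real.sqrt ((n : ℝ) - 1) + Real.sqrt 2 ≤ b)
    (f : ℝ → ℝ)
    (hreg : ∀ r ∈ Set.Icc (b - Real.sqrt 2) b,
      DifferentiableAt ℝ f r ∧ DifferentiableAt ℝ (deriv f) r ∧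
        DifferentiableAt ℝ (deriv (deriv f)) r)
    (hode : ∀ r ∈ Set.Icc (b - Real.sqrt 2) b,
      deriv (deriv f) r / (1 + (deriv f r) ^ 2) =
        (r - ((n : ℝ) - 1) / r) * deriv f r - f r + lam * Real.sqrt (1 + (deriv f r) ^ 2))
    (hfb : 0 < f b) :
    ∃ c ∈ Set.Ico (b - Real.sqrt 2) b, 0 ≤ deriv f c := by
  by_contra hcontra
  push_neg at hcontra
  set a : ℝ := b - Real.sqrt 2 with ha
  set c : ℝ := (n : ℝ) - 1 with hcdef
  have h2n : (2 : ℝ) ≤ (n : ℝ) := by exact_mod_cast hn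
  have hc1 : (1 : ℝ) ≤ c := by simp [hcdef]; linarith
  have hs2 : (0 : ℝ) < Real.sqrt 2 := Real.sqrt_pos.2 (by norm_num)
  have hs2sq : Real.sqrt 2 ^ 2 = 2 := Real.sq_sqrt (by norm_num)
  have hab : a < b := by
    have : a = b - Real.sqrt 2 := ha
    linarith
  have hsc : (1 : ℝ) ≤ Real.sqrt c := by
    rw [show (1 : ℝ) = Real.sqrt 1 by simp]
    exact Real.sqrt_le_sqrt hc1
  have hsca : Real.sqrt c ≤ a := by simp only [ha]; linarith [hb]
  have ha_pos : (0 : ℝ) < a := by linarith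
  have hrpos : ∀ r ∈ Set.Icc a b, (0 : ℝ) < r := fun r hr => lt_of_lt_of_le ha_pos hr.1
  have hA : ∀ r ∈ Set.Icc a b, 0 ≤ r - c / r := by
    intro r hr
    have hr0 := hrpos r hr
    have hrs : Real.sqrt c ≤ r := le_trans hsca hr.1
    have hcsq : Real.sqrt c ^ 2 = c := Real.sq_sqrt (by linarith)
    have hr2 : c ≤ r ^ 2 := by nlinarith
    have : c / r ≤ r := by rw [div_le_iff₀ hr0]; nlinarith
    linarith
  set u : ℝ → ℝ := deriv f with hu
  set v : ℝ → ℝ := deriv (deriv f) with hv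
  -- f is strictly decreasing on [a,b]
  have hfanti : StrictAntiOn f (Set.Icc a b) := by
    apply strictAntiOn_of_deriv_neg (convex_Icc a b)
    · exact fun r hr => ((hreg r hr).1).continuousAt.continuousWithinAt
    · intro r hr
      rw [interior_Icc] at hr
      exact hcontra r ⟨hr.1.le, hr.2⟩
  have hfpos : ∀ r ∈ Set.Icc a b, 0 < f r := by
    intro r hr
    rcases eq_or_lt_of_le hr.2 with h | h
    · rw [h]; exact hfb
    · have := hfanti hr (Set.right_mem_Icc.2 hab.le) h
      linarith
  -- second derivative bound from the ODE
  have hvle : ∀ r ∈ Set.Ico a b, v r ≤ -(f r) := by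
    intro r hr
    have hr' : r ∈ Set.Icc a b := ⟨hr.1, hr.2.le⟩
    have hode' := hode r hr'
    have hU : u r < 0 := hcontra r hr
    have hF : 0 < f r := hfpos r hr'
    have hA' := hA r hr'
    have h1 : (0 : ℝ) < 1 + (u r) ^ 2 := by positivity
    have hS1 : 1 ≤ Real.sqrt (1 + (u r) ^ 2) := by
      have h := Real.sqrt_le_sqrt (show (1 : ℝ) ≤ 1 + (u r) ^ 2 by nlinarith [sq_nonneg (u r)])
      rwa [Real.sqrt_one] at h
    rw [div_eq_iff h1.ne'] at hode'
    have hrhs : (r - c / r) * u r - f r + lam * Real.sqrt (1 + (u r) ^ 2) ≤ -(f r) := by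
      nlinarith [mul_nonneg hA' (neg_nonneg.2 hU.le)]
    nlinarith [sq_nonneg (u r)]
  have hvneg : ∀ r ∈ Set.Ico a b, v r < 0 := by
    intro r hr
    have := hvle r hr
    have := hfpos r ⟨hr.1, hr.2.le⟩
    linarith
  -- third derivative is negative on the interior
  have hppp : ∀ r ∈ Set.Ioo a b, deriv v r < 0 := by
    intro r0 hr0
    have hr0' : r0 ∈ Set.Icc a b := ⟨hr0.1.le, hr0.2.le⟩
    have hr0'' : r0 ∈ Set.Ico a b := ⟨hr0.1.le, hr0.2⟩
    have hmem : Set.Icc a b ∈ nhds r0 := Icc_mem_nhds hr0.1 hr0.2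
    have heq : v =ᶠ[nhds r0] (fun r =>
        ((r - c / r) * u r - f r + lam * Real.sqrt (1 + (u r) ^ 2)) * (1 + (u r) ^ 2)) := by
      filter_upwards [hmem] with r hr
      have hode' := hode r hr
      have h1 : (0 : ℝ) < 1 + (u r) ^ 2 := by positivity
      rw [div_eq_iff h1.ne'] at hode'
      exact hode'
    rw [heq.deriv_eq]
    have hr0pos : (0 : ℝ) < r0 := hrpos r0 hr0'
    set U : ℝ := u r0 with hUdef
    set V : ℝ := v r0 with hVdef
    set S : ℝ := Real.sqrt (1 + U ^ 2) with hSdef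
    have h1 : (0 : ℝ) < 1 + U ^ 2 := by positivity
    have hS1 : 1 ≤ S := by
      have h := Real.sqrt_le_sqrt (show (1 : ℝ) ≤ 1 + U ^ 2 by nlinarith [sq_nonneg U])
      rwa [Real.sqrt_one] at h
    have hSpos : 0 < S := by linarith
    have hfd : HasDerivAt f U r0 := ((hreg r0 hr0').1).hasDerivAt
    have hud : HasDerivAt u V r0 := ((hreg r0 hr0').2.1).hasDerivAt
    have hw : HasDerivAt (fun r => 1 + (u r) ^ 2) (2 * U * V) r0 := by
      have := (hasDerivAt_const r0 (1 : ℝ)).add (hud.pow 2)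
      refine this.congr_deriv ?_
      push_cast
      ring
    have hsqrt : HasDerivAt (fun r => Real.sqrt (1 + (u r) ^ 2))
        (2 * U * V / (2 * S)) r0 := hw.sqrt h1.ne'
    have hq : HasDerivAt (fun r => c / r) (-c / r0 ^ 2) r0 := by
      have := (hasDerivAt_const r0 c).div (hasDerivAt_id r0) hr0pos.ne'
      refine this.congr_deriv ?_
      simp only [id]
      field_simp
      ring
    have hlin : HasDerivAt (fun r => r - c / r) (1 + c / r0 ^ 2) r0 := by
      have := (hasDerivAt_id r0).sub hq
      refine this.congr_deriv ?_
      field_simp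
      ring
    have hAu : HasDerivAt (fun r => (r - c / r) * u r)
        ((1 + c / r0 ^ 2) * U + (r0 - c / r0) * V) r0 := hlin.mul hud
    have hmain : HasDerivAt (fun r => (r - c / r) * u r - f r + lam * Real.sqrt (1 + (u r) ^ 2))
        (((1 + c / r0 ^ 2) * U + (r0 - c / r0) * V) - U + lam * (2 * U * V / (2 * S))) r0 :=
      (hAu.sub hfd).add (hsqrt.const_mul lam)
    have hG : HasDerivAt (fun r =>
        ((r - c / r) * u r - f r + lam * Real.sqrt (1 + (u r) ^ 2)) * (1 + (u r) ^ 2))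
        ((((1 + c / r0 ^ 2) * U + (r0 - c / r0) * V) - U + lam * (2 * U * V / (2 * S)))
            * (1 + U ^ 2)
          + ((r0 - c / r0) * U - f r0 + lam * S) * (2 * U * V)) r0 := hmain.mul hw
    rw [hG.deriv]
    -- sign analysis
    have hU : U < 0 := hcontra r0 hr0''
    have hF : 0 < f r0 := hfpos r0 hr0'
    have hV : V < 0 := hvneg r0 hr0''
    have hApos : 0 ≤ r0 - c / r0 := hA r0 hr0'
    have hUV : 0 < U * V := mul_pos_of_neg_of_neg hU hV
    have e1 : (c / r0 ^ 2) * U < 0 :=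
      mul_neg_of_pos_of_neg (by positivity) hU
    have e2 : (r0 - c / r0) * V ≤ 0 := mul_nonpos_of_nonneg_of_nonpos hApos hV.le
    have e3 : lam * (2 * U * V / (2 * S)) < 0 := by
      apply mul_neg_of_neg_of_pos hlam
      apply div_pos (by nlinarith) (by positivity)
    have hAU : (r0 - c / r0) * U ≤ 0 := mul_nonpos_of_nonneg_of_nonpos hApos hU.le
    have hlamS : lam * S ≤ lam := by
      nlinarith [mul_nonneg (neg_nonneg.2 hlam.le) (sub_nonneg.2 hS1)]
    have hH : (r0 - c / r0) * U - f r0 + lam * S < 0 := by linarith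
    have h2UV : (0 : ℝ) < 2 * U * V := by nlinarith [hUV]
    have e4 : ((r0 - c / r0) * U - f r0 + lam * S) * (2 * U * V) < 0 :=
      mul_neg_of_neg_of_pos hH h2UV
    have hX : (((1 + c / r0 ^ 2) * U + (r0 - c / r0) * V) - U + lam * (2 * U * V / (2 * S))) < 0 := by
      have hid : ((1 + c / r0 ^ 2) * U + (r0 - c / r0) * V) - U + lam * (2 * U * V / (2 * S))
          = (c / r0 ^ 2) * U + (r0 - c / r0) * V + lam * (2 * U * V / (2 * S)) := by ring
      rw [hid]
      linarith
    have t1 : (((1 + c / r0 ^ 2) * U + (r0 - c / r0) * V) - U + lam * (2 * U * V / (2 * S)))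
        * (1 + U ^ 2) < 0 := mul_neg_of_neg_of_pos hX h1
    linarith
  -- v is strictly decreasing on [a,b]
  have hvanti : StrictAntiOn v (Set.Icc a b) := by
    apply strictAntiOn_of_deriv_neg (convex_Icc a b)
    · exact fun r hr => ((hreg r hr).2.2).continuousAt.continuousWithinAt
    · intro r hr
      rw [interior_Icc] at hr
      exact hppp r hr
  have hamem : a ∈ Set.Icc a b := Set.left_mem_Icc.2 hab.le
  have hva : v a ≤ -(f a) := hvle a ⟨le_refl a, hab⟩
  have hv2 : ∀ r ∈ Set.Icc a b, v r ≤ -(f a) := by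
    intro r hr
    rcases eq_or_lt_of_le hr.1 with h | h
    · rw [← h]; exact hva
    · exact le_trans (hvanti hamem hr h).le hva
  -- first antitone auxiliary: r ↦ u r + f a * (r - a)
  have hg : AntitoneOn (fun r => u r + f a * (r - a)) (Set.Icc a b) := by
    apply antitoneOn_of_deriv_nonpos (convex_Icc a b)
    · apply ContinuousOn.add
      · exact fun r hr => ((hreg r hr).2.1).continuousAt.continuousWithinAt
      · fun_prop
    · intro x hx
      rw [interior_Icc] at hx
      have hx' : x ∈ Set.Icc a b := ⟨hx.1.le, hx.2.le⟩
      exact (((hreg x hx').2.1).add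
        (((differentiableAt_id.sub (differentiableAt_const a)).const_mul (f a)))).differentiableWithinAt
    · intro x hx
      rw [interior_Icc] at hx
      have hx' : x ∈ Set.Icc a b := ⟨hx.1.le, hx.2.le⟩
      have hd : HasDerivAt (fun r => u r + f a * (r - a)) (v x + f a * 1) x :=
        (((hreg x hx').2.1).hasDerivAt).add (((hasDerivAt_id x).sub_const a).const_mul (f a))
      rw [hd.deriv]
      have := hv2 x hx'
      have := hfpos a hamem
      linarith
  have hgle : ∀ r ∈ Set.Icc a b, u r + f a * (r - a) ≤ u a := by
    intro r hr
    have := hg hamem hr hr.1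
    simpa using this
  have hua : u a < 0 := hcontra a ⟨le_refl a, hab⟩
  -- second antitone auxiliary: r ↦ f r + f a * (r - a)^2 / 2
  have hpsi : AntitoneOn (fun r => f r + f a * (r - a) ^ 2 / 2) (Set.Icc a b) := by
    apply antitoneOn_of_deriv_nonpos (convex_Icc a b)
    · apply ContinuousOn.add
      · exact fun r hr => ((hreg r hr).1).continuousAt.continuousWithinAt
      · fun_prop
    · intro x hx
      rw [interior_Icc] at hx
      have hx' : x ∈ Set.Icc a b := ⟨hx.1.le, hx.2.le⟩
      apply DifferentiableAt.differentiableWithinAt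
      apply ((hreg x hx').1).add
      apply DifferentiableAt.div_const
      exact ((differentiableAt_id.sub (differentiableAt_const a)).pow 2).const_mul (f a)
    · intro x hx
      rw [interior_Icc] at hx
      have hx' : x ∈ Set.Icc a b := ⟨hx.1.le, hx.2.le⟩
      have hd : HasDerivAt (fun r => f r + f a * (r - a) ^ 2 / 2)
          (u x + f a * (x - a)) x := by
        have h2 : HasDerivAt (fun r => f a * (r - a) ^ 2 / 2) (f a * (x - a)) x := by
          have := ((((hasDerivAt_id x).sub_const a).pow 2).const_mul (f a)).div_const 2
          refine this.congr_deriv ?_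
          simp only [id_eq]
          push_cast
          ring
        exact (((hreg x hx').1).hasDerivAt).add h2
      rw [hd.deriv]
      have := hgle x hx'
      linarith
  have hfinal := hpsi hamem (Set.right_mem_Icc.2 hab.le) hab.le
  simp only at hfinal
  have hba : b - a = Real.sqrt 2 := by rw [ha]; ring
  rw [hba, hs2sq] at hfinal
  nlinarith [hfinal, hfb]
end
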